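/- arXiv:2205.15494 — 5 statements merged into one kernel-verified Lean document; each statement's English description precedes it below -/
import Mathlib

section
/- Let Q be a fair base rate distribution on X × [C] and h a classifier. Suppose that for every label y ∈ [C] and every sensitive group i ∈ [S] (with Pr_Q[Y = y, X_s = i] > 0), the per-group per-class error satisfies Pr_{(X,Y)∼Q}[h(X) ≠ Y | Y = y, X_s = i] ≤ ε. Then h achieves ε-Demographic Parity on Q: for all i, j ∈ [S], |Pr_{(X,Y)∼Q}[h(X) = 1 | X_s = i] − Pr_{(X,Y)∼Q}[h(X) = 1 | X_s = j]| ≤ ε. -/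
open MeasureTheory ProbabilityTheory

private lemma fiber_sum' {X : Type*} [MeasurableSpace X] {C : ℕ}
    (μ : Measure (X × Fin C)) (B : Set (X × Fin C)) :
    ∑ y : Fin C, μ (B ∩ {p | p.2 = y}) = μ B := by
  have hmeas : ∀ y : Fin C, MeasurableSet {p : X × Fin C | p.2 = y} := fun y =>
    measurable_snd (measurableSet_singleton y)
  have hdisj : Pairwise (Function.onFun Disjoint fun y : Fin C =>
      {p : X × Fin C | p.2 = y}) := by
    intro a b hab
    simp only [Function.onFun, Set.disjoint_left]
    intro p hp hq
    exact hab (hp ▸ hq ▸ rfl)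
  have hunion : (⋃ y : Fin C, {p : X × Fin C | p.2 = y}) = Set.univ := by
    ext p; simp
  calc ∑ y : Fin C, μ (B ∩ {p | p.2 = y})
      = ∑ y : Fin C, μ.restrict B {p | p.2 = y} := by
        refine Finset.sum_congr rfl fun y _ => ?_
        rw [Measure.restrict_apply (hmeas y), Set.inter_comm]
    _ = μ.restrict B Set.univ := by
        rw [← tsum_fintype (L := SummationFilter.unconditional _), ← measure_iUnion hdisj hmeas, hunion]
    _ = μ B := Measure.restrict_apply_univ B

/-- ε-Demographic Parity from per-group per-class error bound on a fair base
rate distribution.  `Q` is a probability distribution on `X × Fin C` (labels `[C]`), `xs` gives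
the sensitive attribute in `[S]`, `h` is a classifier, and `⟨0, hC⟩ : Fin C` represents label `1`.
`Q` is a fair base rate distribution: for every label `y`, the base rate
`Pr_Q[Y = y | X_s = i]` is the same for all groups `i`.  If for every label `y` and group `i`
with positive probability `Pr_Q[h(X) ≠ Y | Y = y, X_s = i] ≤ ε`, then for all groups `i, j`,
`|Pr_Q[h(X) = 1 | X_s = i] − Pr_Q[h(X) = 1 | X_s = j]| ≤ ε`. -/
theorem statement_1 {X : Type*} [MeasurableSpace X] {S C : ℕ} (hC : 0 < C)
    (xs : X → Fin S) (h : X → Fin C)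
    (Q : Measure (X × Fin C)) [IsProbabilityMeasure Q]
    (hfair : ∀ (y : Fin C) (i j : Fin S),
      (Q[|{p | xs p.1 = i}]) {p | p.2 = y} = (Q[|{p | xs p.1 = j}]) {p | p.2 = y})
    (ε : ℝ) (hε : 0 ≤ ε)
    (herr : ∀ (y : Fin C) (i : Fin S),
      0 < Q {p | p.2 = y ∧ xs p.1 = i} →
      ((Q[|{p | p.2 = y ∧ xs p.1 = i}]) {p | h p.1 ≠ p.2}).toReal ≤ ε) :
    ∀ (i j : Fin S),
      |((Q[|{p | xs p.1 = i}]) {p | h p.1 = ⟨0, hC⟩}).toReal -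
        ((Q[|{p | xs p.1 = j}]) {p | h p.1 = ⟨0, hC⟩}).toReal| ≤ ε := by
  -- notation
  set y0 : Fin C := ⟨0, hC⟩ with hy0def
  set A : Fin S → Set (X × Fin C) := fun i => {p | xs p.1 = i} with hA
  set E : Fin C → Set (X × Fin C) := fun y => {p | p.2 = y} with hE
  set H : Set (X × Fin C) := {p | h p.1 = y0} with hH
  set N : Set (X × Fin C) := {p | h p.1 ≠ p.2} with hN
  have hEmeas : ∀ y : Fin C, MeasurableSet (E y) := fun y =>
    measurable_snd (measurableSet_singleton y)
  have hcondval : ∀ (s t : Set (X × Fin C)), (Q[|s]) t = (Q s)⁻¹ * Q.restrict s t := by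
    intro s t
    rw [ProbabilityTheory.cond, Measure.smul_apply, smul_eq_mul]
  -- key error bound, in ENNReal
  have key : ∀ (y : Fin C) (i : Fin S),
      Q.restrict (A i) (N ∩ E y) ≤ ENNReal.ofReal ε * Q.restrict (A i) (E y) := by
    intro y i
    have hset : {p : X × Fin C | p.2 = y ∧ xs p.1 = i} = E y ∩ A i := rfl
    have hrA : Q.restrict (A i) (E y) = Q (E y ∩ A i) := by
      rw [Measure.restrict_apply (hEmeas y), Set.inter_comm]
    have step1 : Q.restrict (A i) (N ∩ E y) ≤ Q.restrict (E y ∩ A i) N := by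
      have h1 : Q.restrict (A i) (N ∩ E y) ≤ (Q.restrict (A i)).restrict (E y) N :=
        Measure.le_restrict_apply _ _
      rwa [Measure.restrict_restrict (hEmeas y)] at h1
    rcases eq_or_ne (Q (E y ∩ A i)) 0 with hr | hr
    · have : Q.restrict (E y ∩ A i) = 0 := Measure.restrict_eq_zero.mpr hr
      calc Q.restrict (A i) (N ∩ E y) ≤ Q.restrict (E y ∩ A i) N := step1
        _ = 0 := by rw [this]; rfl
        _ ≤ _ := zero_le
    · -- use herr
      have hrfin : Q (E y ∩ A i) ≠ ⊤ := measure_ne_top _ _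
      have hpos : 0 < Q {p : X × Fin C | p.2 = y ∧ xs p.1 = i} := by
        rw [hset]; exact hr.bot_lt
      have herr' := herr y i hpos
      have hcond : (Q[|{p : X × Fin C | p.2 = y ∧ xs p.1 = i}]) N
          = (Q (E y ∩ A i))⁻¹ * Q.restrict (E y ∩ A i) N := by
        rw [hset, hcondval]
      have hVle : Q.restrict (E y ∩ A i) N ≤ Q (E y ∩ A i) := by
        calc Q.restrict (E y ∩ A i) N ≤ Q.restrict (E y ∩ A i) Set.univ :=
              measure_mono (Set.subset_univ _)
          _ = Q (E y ∩ A i) := Measure.restrict_apply_univ _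
      have hfin : (Q (E y ∩ A i))⁻¹ * Q.restrict (E y ∩ A i) N ≠ ⊤ :=
        ENNReal.mul_ne_top (ENNReal.inv_ne_top.mpr hr) (hVle.trans_lt hrfin.lt_top).ne
      have hle : (Q (E y ∩ A i))⁻¹ * Q.restrict (E y ∩ A i) N ≤ ENNReal.ofReal ε := by
        rw [hcond] at herr'
        exact (ENNReal.le_ofReal_iff_toReal_le hfin hε).mpr herr'
      have : Q (E y ∩ A i) * ((Q (E y ∩ A i))⁻¹ * Q.restrict (E y ∩ A i) N)
          = Q.restrict (E y ∩ A i) N := by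
        rw [← mul_assoc, ENNReal.mul_inv_cancel hr hrfin, one_mul]
      calc Q.restrict (A i) (N ∩ E y) ≤ Q.restrict (E y ∩ A i) N := step1
        _ = Q (E y ∩ A i) * ((Q (E y ∩ A i))⁻¹ * Q.restrict (E y ∩ A i) N) := this.symm
        _ ≤ Q (E y ∩ A i) * ENNReal.ofReal ε := by
            exact mul_le_mul_right hle _
        _ = ENNReal.ofReal ε * Q.restrict (A i) (E y) := by rw [hrA, mul_comm]
  -- one-sided bound
  have aux : ∀ i j : Fin S, ((Q[|A i]) H).toReal - ((Q[|A j]) H).toReal ≤ ε := by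
    intro i j
    by_cases hi : Q (A i) = 0
    · have hzero : Q[|A i] = 0 := by
        rw [ProbabilityTheory.cond, Measure.restrict_eq_zero.mpr hi, smul_zero]
      have h2 : (0:ℝ) ≤ ((Q[|A j]) H).toReal := ENNReal.toReal_nonneg
      rw [hzero]
      simp only [Measure.coe_zero, Pi.zero_apply, ENNReal.toReal_zero]
      linarith
    by_cases hj : Q (A j) = 0
    · exfalso
      have hzero : Q[|A j] = 0 := by
        rw [ProbabilityTheory.cond, Measure.restrict_eq_zero.mpr hj, smul_zero]
      have h1 : ∀ y : Fin C, (Q[|A i]) (E y) = 0 := fun y => by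
        rw [hfair y i j, hzero]; rfl
      have huniv : (Q[|A i]) Set.univ = 1 := by
        rw [hcondval, Measure.restrict_apply_univ,
          ENNReal.inv_mul_cancel hi (measure_ne_top _ _)]
      have hsum : ∑ y : Fin C, (Q[|A i]) (Set.univ ∩ E y) = (Q[|A i]) Set.univ :=
        fiber_sum' _ _
      simp only [Set.univ_inter, h1, Finset.sum_const_zero, huniv] at hsum
      exact zero_ne_one hsum
    -- main case
    have hqifin : Q (A i) ≠ ⊤ := measure_ne_top _ _
    have hqjfin : Q (A j) ≠ ⊤ := measure_ne_top _ _
    set εE : ENNReal := ENNReal.ofReal ε with hεE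
    set bb : Fin C → ENNReal := fun y => (Q[|A i]) (E y) with hbb
    have hbfair : ∀ y, bb y = (Q (A j))⁻¹ * Q.restrict (A j) (E y) := fun y => by
      rw [hbb]; simp only; rw [hfair y i j, hcondval]
    have hbi : ∀ y, bb y = (Q (A i))⁻¹ * Q.restrict (A i) (E y) := fun y => by
      rw [hbb]; simp only; rw [hcondval]
    have hsum_b : ∑ y : Fin C, bb y = 1 := by
      have hs : ∑ y : Fin C, (Q[|A i]) (Set.univ ∩ E y) = (Q[|A i]) Set.univ :=
        fiber_sum' _ _
      have huniv : (Q[|A i]) Set.univ = 1 := by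
        rw [hcondval, Measure.restrict_apply_univ,
          ENNReal.inv_mul_cancel hi (measure_ne_top _ _)]
      simpa only [Set.univ_inter, huniv] using hs
    -- decompose (Q[|A i]) H
    have hdecomp : (Q[|A i]) H = ∑ y : Fin C, (Q (A i))⁻¹ * Q.restrict (A i) (H ∩ E y) := by
      rw [hcondval, ← Finset.mul_sum, fiber_sum']
    -- per-class bounds
    have hterm : ∀ y ∈ Finset.univ.erase y0,
        (Q (A i))⁻¹ * Q.restrict (A i) (H ∩ E y) ≤ εE * bb y := by
      intro y hy
      have hyne : y ≠ y0 := Finset.ne_of_mem_erase hy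
      have hsub : H ∩ E y ⊆ N ∩ E y := by
        intro p hp
        obtain ⟨hp1, hp2⟩ := hp
        refine ⟨?_, hp2⟩
        simp only [hH, Set.mem_setOf_eq] at hp1
        simp only [hE, Set.mem_setOf_eq] at hp2
        simp only [hN, Set.mem_setOf_eq]
        rw [hp1, hp2]
        exact fun hcontra => hyne hcontra.symm
      calc (Q (A i))⁻¹ * Q.restrict (A i) (H ∩ E y)
          ≤ (Q (A i))⁻¹ * (εE * Q.restrict (A i) (E y)) :=
            mul_le_mul_right ((measure_mono hsub).trans (key y i)) _
        _ = εE * ((Q (A i))⁻¹ * Q.restrict (A i) (E y)) := by ring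
        _ = εE * bb y := by rw [← hbi]
    have hterm0 : (Q (A i))⁻¹ * Q.restrict (A i) (H ∩ E y0) ≤ bb y0 := by
      rw [hbi]
      exact mul_le_mul_right (measure_mono Set.inter_subset_right) _
    -- bb y0 ≤ (Q[|A j]) H + εE * bb y0
    have hstepC : bb y0 ≤ (Q[|A j]) H + εE * bb y0 := by
      have hcover : E y0 ⊆ (H ∩ E y0) ∪ (N ∩ E y0) := by
        intro p hp
        by_cases hhp : h p.1 = y0
        · exact Or.inl ⟨hhp, hp⟩
        · refine Or.inr ⟨?_, hp⟩
          simp only [hE, Set.mem_setOf_eq] at hp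
          simp only [hN, Set.mem_setOf_eq]
          rw [hp]; exact hhp
      have h1 : Q.restrict (A j) (E y0) ≤
          Q.restrict (A j) (H ∩ E y0) + Q.restrict (A j) (N ∩ E y0) :=
        (measure_mono hcover).trans (measure_union_le _ _)
      have h2 : Q.restrict (A j) (E y0) ≤
          Q.restrict (A j) (H ∩ E y0) + εE * Q.restrict (A j) (E y0) :=
        h1.trans (add_le_add_right (key y0 j) _)
      calc bb y0 = (Q (A j))⁻¹ * Q.restrict (A j) (E y0) := hbfair y0
        _ ≤ (Q (A j))⁻¹ * (Q.restrict (A j) (H ∩ E y0) + εE * Q.restrict (A j) (E y0)) :=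
            mul_le_mul_right h2 _
        _ = (Q (A j))⁻¹ * Q.restrict (A j) (H ∩ E y0)
            + εE * ((Q (A j))⁻¹ * Q.restrict (A j) (E y0)) := by ring
        _ ≤ (Q[|A j]) H + εE * bb y0 := by
            rw [hcondval, ← hbfair]
            exact add_le_add_left (mul_le_mul_right
              (measure_mono Set.inter_subset_left) _) _
    -- combine in ENNReal
    have hmain : (Q[|A i]) H ≤ (Q[|A j]) H + εE := by
      calc (Q[|A i]) H
          = ∑ y : Fin C, (Q (A i))⁻¹ * Q.restrict (A i) (H ∩ E y) := hdecomp
        _ = (Q (A i))⁻¹ * Q.restrict (A i) (H ∩ E y0)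
            + ∑ y ∈ Finset.univ.erase y0, (Q (A i))⁻¹ * Q.restrict (A i) (H ∩ E y) :=
            (Finset.add_sum_erase Finset.univ _ (Finset.mem_univ y0)).symm
        _ ≤ bb y0 + ∑ y ∈ Finset.univ.erase y0, εE * bb y :=
            add_le_add hterm0 (Finset.sum_le_sum hterm)
        _ ≤ ((Q[|A j]) H + εE * bb y0) + ∑ y ∈ Finset.univ.erase y0, εE * bb y :=
            add_le_add_left hstepC _
        _ = (Q[|A j]) H + εE * (bb y0 + ∑ y ∈ Finset.univ.erase y0, bb y) := by
            rw [← Finset.mul_sum, mul_add, add_assoc]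
        _ = (Q[|A j]) H + εE * 1 := by
            rw [Finset.add_sum_erase Finset.univ _ (Finset.mem_univ y0), hsum_b]
        _ = (Q[|A j]) H + εE := by rw [mul_one]
    -- convert to reals
    have hjle : (Q[|A j]) H ≤ 1 := by
      calc (Q[|A j]) H ≤ (Q[|A j]) Set.univ := measure_mono (Set.subset_univ _)
        _ = 1 := by
          rw [hcondval, Measure.restrict_apply_univ,
            ENNReal.inv_mul_cancel hj (measure_ne_top _ _)]
    have hrhsfin : (Q[|A j]) H + εE ≠ ⊤ :=
      ENNReal.add_ne_top.mpr ⟨(hjle.trans_lt ENNReal.one_lt_top).ne, ENNReal.ofReal_ne_top⟩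
    have := ENNReal.toReal_mono hrhsfin hmain
    rw [ENNReal.toReal_add (hjle.trans_lt ENNReal.one_lt_top).ne ENNReal.ofReal_ne_top,
      ENNReal.toReal_ofReal hε] at this
    linarith
  intro i j
  rw [abs_sub_le_iff]
  exact ⟨aux i j, aux j i⟩
end

section
/- (Tight fairness certificate under sensitive shifting.) Let P be a distribution on X × [C] with p_{s,y} := Pr_P[X_s = s, Y = y] > 0 for all s ∈ [S], y ∈ [C], let h be a classifier, ℓ a nonnegative loss, and E_{s,y} := E_{(X,Y)∼P_{s,y}}[ℓ(h(X),Y)]. Then for any ρ > 0, the supremum of E_{(X,Y)∼Q}[ℓ(h(X),Y)] over all fair base rate distributions Q with H(P,Q) ≤ ρ whose subpopulation conditionals satisfy Q_{s,y} = P_{s,y} for all s, y, equals the maximum of Σ_{s=1}^S Σ_{y=1}^C k_s r_y E_{s,y} over all k ∈ ℝ^S, r ∈ ℝ^C with k_s ≥ 0, r_y ≥ 0, Σ_s k_s = 1, Σ_y r_y = 1, and 1 − ρ² − Σ_{s,y} √(p_{s,y} k_s r_y) ≤ 0, whenever either feasible set is nonempty. -/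
open MeasureTheory ProbabilityTheory
open scoped ENNReal
set_option linter.unusedSectionVars false
set_option linter.unusedVariables false
set_option maxHeartbeats 1000000

/-- The Hellinger distance `H(P,Q) = sqrt((1/2) ∫ (√p − √q)² dμ)`, computed with the
reference measure `μ := P + Q` (both `P` and `Q` are absolutely continuous with respect to
`P + Q`, and the Hellinger distance does not depend on the choice of reference measure). -/
noncomputable def hellinger {Z : Type*} [MeasurableSpace Z] (P Q : Measure Z) : ℝ :=
  Real.sqrt ((1 / 2) * ∫ z,
    (Real.sqrt ((P.rnDeriv (P + Q) z).toReal) - Real.sqrt ((Q.rnDeriv (P + Q) z).toReal)) ^ 2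
      ∂(P + Q))

/-- The subpopulation `{(x, y') : x_s = s, y' = y}` of the sample space `X × Fin C`,
determined by the sensitive attribute map `xs` and the label `y`. -/
def subpop {X : Type*} {S C : ℕ} (xs : X → Fin S) (s : Fin S) (y : Fin C) :
    Set (X × Fin C) := {p | xs p.1 = s ∧ p.2 = y}

/-- `Q` is a fair base rate distribution: for every label `y ∈ [C]`, the base rate
`b^Q_{s,y} = Pr_Q[Y = y | X_s = s]` is equal across all sensitive groups `s ∈ [S]`. -/
def IsFairBaseRate {X : Type*} [MeasurableSpace X] {S C : ℕ} (xs : X → Fin S)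
    (Q : Measure (X × Fin C)) : Prop :=
  ∀ (y : Fin C) (i j : Fin S),
    (Q[|{p | xs p.1 = i}]) {p | p.2 = y} = (Q[|{p | xs p.1 = j}]) {p | p.2 = y}

namespace St4Opt

lemma key_ineq {p a b c d : ℝ} (hp : 0 ≤ p) (ha : 0 ≤ a) (hb : 0 ≤ b) (hc : 0 ≤ c)
    (hd : 0 ≤ d) :
    Real.sqrt (p * a * c) + Real.sqrt (p * b * d) ≤ Real.sqrt (p * (a + b) * (c + d)) := by
  have hx : 0 ≤ Real.sqrt (p * a * c) + Real.sqrt (p * b * d) := by positivity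
  rw [← Real.sqrt_sq hx]
  apply Real.sqrt_le_sqrt
  have e1 : Real.sqrt (p * a * c) ^ 2 = p * a * c := Real.sq_sqrt (by positivity)
  have e2 : Real.sqrt (p * b * d) ^ 2 = p * b * d := Real.sq_sqrt (by positivity)
  have e3 : Real.sqrt (p * a * c) * Real.sqrt (p * b * d)
      = p * (Real.sqrt (a * d) * Real.sqrt (b * c)) := by
    rw [← Real.sqrt_mul (by positivity), ← Real.sqrt_mul (by positivity),
      show p * a * c * (p * b * d) = p ^ 2 * (a * d * (b * c)) by ring,
      Real.sqrt_mul (by positivity), Real.sqrt_sq hp]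
  have e4 : Real.sqrt (a * d) ^ 2 = a * d := Real.sq_sqrt (by positivity)
  have e5 : Real.sqrt (b * c) ^ 2 = b * c := Real.sq_sqrt (by positivity)
  nlinarith [sq_nonneg (Real.sqrt (a * d) - Real.sqrt (b * c)), e1, e2, e3, e4, e5,
    mul_nonneg hp (sq_nonneg (Real.sqrt (a * d) - Real.sqrt (b * c)))]

variable {S C : ℕ}

section Opt
variable (ps : Fin S → Fin C → ℝ) (ρ : ℝ)

/-- the Bhattacharyya-type constraint function -/
noncomputable def g (kr : (Fin S → ℝ) × (Fin C → ℝ)) : ℝ :=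
  ∑ s, ∑ y, Real.sqrt (ps s y * kr.1 s * kr.2 y)

/-- the feasible set -/
def F : Set ((Fin S → ℝ) × (Fin C → ℝ)) :=
  {kr | (∀ s, 0 ≤ kr.1 s) ∧ (∀ y, 0 ≤ kr.2 y) ∧ (∑ s, kr.1 s = 1) ∧ (∑ y, kr.2 y = 1) ∧
    1 - ρ ^ 2 - g ps kr ≤ 0}

lemma g_continuous : Continuous (g ps) := by
  apply continuous_finset_sum
  intro s _
  apply continuous_finset_sum
  intro y _
  exact Real.continuous_sqrt.comp
    ((continuous_const.mul ((continuous_apply s).comp continuous_fst)).mul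
      ((continuous_apply y).comp continuous_snd))

lemma F_compact : IsCompact (F ps ρ) := by
  have hF : F ps ρ = (stdSimplex ℝ (Fin S) ×ˢ stdSimplex ℝ (Fin C)) ∩
      {kr | 1 - ρ ^ 2 - g ps kr ≤ 0} := by
    ext kr
    simp only [F, Set.mem_inter_iff, Set.mem_prod, Set.mem_setOf_eq, stdSimplex]
    tauto
  rw [hF]
  exact ((isCompact_stdSimplex _ _).prod (isCompact_stdSimplex _ _)).inter_right
    (isClosed_le (continuous_const.sub (g_continuous ps)) continuous_const)

/-- existence of a strictly positive feasible point, given any feasible point -/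
lemma exists_pos_feasible (hps : ∀ s y, 0 < ps s y) {kr : (Fin S → ℝ) × (Fin C → ℝ)}
    (hkr : kr ∈ F ps ρ) [Nonempty (Fin S)] [Nonempty (Fin C)] :
    ∃ kr' ∈ F ps ρ, (∀ s, 0 < kr'.1 s) ∧ (∀ y, 0 < kr'.2 y) := by
  obtain ⟨hk0, hr0, hks, hrs, hcon⟩ := hkr
  obtain ⟨k, r⟩ := kr
  dsimp only at hk0 hr0 hks hrs hcon ⊢
  set c : Fin S → ℝ := fun s => ∑ y, Real.sqrt (ps s y * r y) with hc
  have hc_pos : ∀ s, 0 < c s := by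
    intro s
    obtain ⟨y0, hy0⟩ : ∃ y, 0 < r y := by
      by_contra hcon'
      push_neg at hcon'
      have : ∑ y, r y = 0 := le_antisymm (Finset.sum_nonpos (fun y _ => hcon' y))
        (Finset.sum_nonneg (fun y _ => hr0 y))
      rw [hrs] at this; norm_num at this
    exact lt_of_lt_of_le (Real.sqrt_pos.2 (mul_pos (hps s y0) hy0))
      (Finset.single_le_sum (f := fun y => Real.sqrt (ps s y * r y))
        (fun y _ => Real.sqrt_nonneg _) (Finset.mem_univ y0))
  set T : ℝ := ∑ s, c s ^ 2 with hT
  have hT_pos : 0 < T := Finset.sum_pos (fun s _ => pow_pos (hc_pos s) 2)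
    Finset.univ_nonempty
  set k' : Fin S → ℝ := fun s => c s ^ 2 / T with hk'
  have hk'_pos : ∀ s, 0 < k' s := fun s => div_pos (pow_pos (hc_pos s) 2) hT_pos
  have hk'_sum : ∑ s, k' s = 1 := by
    rw [hk', ← Finset.sum_div, ← hT, div_self hT_pos.ne']
  have hsqrtk' : ∀ s, Real.sqrt (k' s) = c s / Real.sqrt T := by
    intro s
    rw [hk', Real.sqrt_div (sq_nonneg _), Real.sqrt_sq (hc_pos s).le]
  have hg_split : ∀ (k'' : Fin S → ℝ), (∀ s, 0 ≤ k'' s) →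
      g ps (k'', r) = ∑ s, Real.sqrt (k'' s) * c s := by
    intro k'' hk''
    unfold g
    refine Finset.sum_congr rfl (fun s _ => ?_)
    rw [hc]
    simp only
    rw [Finset.mul_sum]
    refine Finset.sum_congr rfl (fun y _ => ?_)
    rw [← Real.sqrt_mul (hk'' s)]
    congr 1
    ring
  have hCS : g ps (k, r) ≤ Real.sqrt T := by
    rw [hg_split k hk0]
    have h1 : (∑ s, Real.sqrt (k s) * c s) ^ 2 ≤ (∑ s, Real.sqrt (k s) ^ 2) * ∑ s, c s ^ 2 :=
      Finset.sum_mul_sq_le_sq_mul_sq _ _ _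
    have h2 : ∑ s, Real.sqrt (k s) ^ 2 = 1 := by
      rw [Finset.sum_congr rfl (fun s _ => Real.sq_sqrt (hk0 s)), hks]
    rw [h2, one_mul, ← hT] at h1
    have h3 : 0 ≤ ∑ s, Real.sqrt (k s) * c s :=
      Finset.sum_nonneg (fun s _ => mul_nonneg (Real.sqrt_nonneg _) (hc_pos s).le)
    calc ∑ s, Real.sqrt (k s) * c s = Real.sqrt ((∑ s, Real.sqrt (k s) * c s) ^ 2) :=
          (Real.sqrt_sq h3).symm
      _ ≤ Real.sqrt T := Real.sqrt_le_sqrt h1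
  have hg_k' : g ps (k', r) = Real.sqrt T := by
    rw [hg_split k' (fun s => (hk'_pos s).le)]
    rw [Finset.sum_congr rfl (fun s (_ : s ∈ Finset.univ) => by rw [hsqrtk' s])]
    rw [show ∑ s, c s / Real.sqrt T * c s = (∑ s, c s ^ 2) / Real.sqrt T by
      rw [Finset.sum_div]; exact Finset.sum_congr rfl (fun s _ => by ring)]
    rw [← hT, div_eq_iff (Real.sqrt_ne_zero'.mpr hT_pos)]
    exact (Real.mul_self_sqrt hT_pos.le).symm
  set d : Fin C → ℝ := fun y => ∑ s, Real.sqrt (ps s y * k' s) with hd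
  have hd_pos : ∀ y, 0 < d y := by
    intro y
    set s1 : Fin S := Classical.arbitrary _ with hs1
    exact lt_of_lt_of_le (Real.sqrt_pos.2 (mul_pos (hps s1 y) (hk'_pos s1)))
      (Finset.single_le_sum (f := fun s => Real.sqrt (ps s y * k' s))
        (fun s _ => Real.sqrt_nonneg _) (Finset.mem_univ s1))
  set U : ℝ := ∑ y, d y ^ 2 with hU
  have hU_pos : 0 < U := Finset.sum_pos (fun y _ => pow_pos (hd_pos y) 2)
    Finset.univ_nonempty
  set r' : Fin C → ℝ := fun y => d y ^ 2 / U with hr'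
  have hr'_pos : ∀ y, 0 < r' y := fun y => div_pos (pow_pos (hd_pos y) 2) hU_pos
  have hr'_sum : ∑ y, r' y = 1 := by
    rw [hr', ← Finset.sum_div, ← hU, div_self hU_pos.ne']
  have hg_split2 : ∀ (r'' : Fin C → ℝ), (∀ y, 0 ≤ r'' y) →
      g ps (k', r'') = ∑ y, Real.sqrt (r'' y) * d y := by
    intro r'' hr''
    unfold g
    rw [Finset.sum_comm]
    refine Finset.sum_congr rfl (fun y _ => ?_)
    rw [hd]
    simp only
    rw [Finset.mul_sum]
    refine Finset.sum_congr rfl (fun s _ => ?_)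
    rw [← Real.sqrt_mul (hr'' y)]
    congr 1
    ring
  have hCS2 : g ps (k', r) ≤ Real.sqrt U := by
    rw [hg_split2 r hr0]
    have h1 : (∑ y, Real.sqrt (r y) * d y) ^ 2 ≤ (∑ y, Real.sqrt (r y) ^ 2) * ∑ y, d y ^ 2 :=
      Finset.sum_mul_sq_le_sq_mul_sq _ _ _
    have h2 : ∑ y, Real.sqrt (r y) ^ 2 = 1 := by
      rw [Finset.sum_congr rfl (fun y _ => Real.sq_sqrt (hr0 y)), hrs]
    rw [h2, one_mul, ← hU] at h1
    have h3 : 0 ≤ ∑ y, Real.sqrt (r y) * d y :=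
      Finset.sum_nonneg (fun y _ => mul_nonneg (Real.sqrt_nonneg _) (hd_pos y).le)
    calc ∑ y, Real.sqrt (r y) * d y = Real.sqrt ((∑ y, Real.sqrt (r y) * d y) ^ 2) :=
          (Real.sqrt_sq h3).symm
      _ ≤ Real.sqrt U := Real.sqrt_le_sqrt h1
  have hsqrtr' : ∀ y, Real.sqrt (r' y) = d y / Real.sqrt U := by
    intro y
    rw [hr', Real.sqrt_div (sq_nonneg _), Real.sqrt_sq (hd_pos y).le]
  have hg_r' : g ps (k', r') = Real.sqrt U := by
    rw [hg_split2 r' (fun y => (hr'_pos y).le)]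
    rw [Finset.sum_congr rfl (fun y (_ : y ∈ Finset.univ) => by rw [hsqrtr' y])]
    rw [show ∑ y, d y / Real.sqrt U * d y = (∑ y, d y ^ 2) / Real.sqrt U by
      rw [Finset.sum_div]; exact Finset.sum_congr rfl (fun y _ => by ring)]
    rw [← hU, div_eq_iff (Real.sqrt_ne_zero'.mpr hU_pos)]
    exact (Real.mul_self_sqrt hU_pos.le).symm
  refine ⟨(k', r'), ⟨fun s => (hk'_pos s).le, fun y => (hr'_pos y).le, hk'_sum, hr'_sum, ?_⟩,
    hk'_pos, hr'_pos⟩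
  have : g ps (k, r) ≤ g ps (k', r') := by
    calc g ps (k, r) ≤ Real.sqrt T := hCS
      _ = g ps (k', r) := hg_k'.symm
      _ ≤ Real.sqrt U := hCS2
      _ = g ps (k', r') := hg_r'.symm
  linarith

/-- concavity of g along segments within the simplex -/
lemma g_concave (hps : ∀ s y, 0 < ps s y) {x x' : (Fin S → ℝ) × (Fin C → ℝ)}
    (hx0 : ∀ s, 0 ≤ x.1 s) (hx0' : ∀ y, 0 ≤ x.2 y)
    (hy0 : ∀ s, 0 ≤ x'.1 s) (hy0' : ∀ y, 0 ≤ x'.2 y)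
    {t : ℝ} (ht0 : 0 ≤ t) (ht1 : t ≤ 1) :
    (1 - t) * g ps x + t * g ps x' ≤
      g ps (fun s => (1 - t) * x.1 s + t * x'.1 s, fun y => (1 - t) * x.2 y + t * x'.2 y) := by
  unfold g
  rw [Finset.mul_sum, Finset.mul_sum, ← Finset.sum_add_distrib]
  refine Finset.sum_le_sum (fun s _ => ?_)
  rw [Finset.mul_sum, Finset.mul_sum, ← Finset.sum_add_distrib]
  refine Finset.sum_le_sum (fun y _ => ?_)
  have h1t : 0 ≤ 1 - t := by linarith
  have e1 : (1 - t) * Real.sqrt (ps s y * x.1 s * x.2 y)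
      = Real.sqrt (ps s y * ((1 - t) * x.1 s) * ((1 - t) * x.2 y)) := by
    rw [show ps s y * ((1 - t) * x.1 s) * ((1 - t) * x.2 y)
        = (1 - t) ^ 2 * (ps s y * x.1 s * x.2 y) by ring,
      Real.sqrt_mul (sq_nonneg _), Real.sqrt_sq h1t]
  have e2 : t * Real.sqrt (ps s y * x'.1 s * x'.2 y)
      = Real.sqrt (ps s y * (t * x'.1 s) * (t * x'.2 y)) := by
    rw [show ps s y * (t * x'.1 s) * (t * x'.2 y)
        = t ^ 2 * (ps s y * x'.1 s * x'.2 y) by ring,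
      Real.sqrt_mul (sq_nonneg _), Real.sqrt_sq ht0]
  rw [e1, e2]
  exact key_ineq (hps s y).le (mul_nonneg h1t (hx0 s)) (mul_nonneg ht0 (hy0 s))
    (mul_nonneg h1t (hx0' y)) (mul_nonneg ht0 (hy0' y))

end Opt
end St4Opt

namespace St4
variable {X : Type*} [MeasurableSpace X] {S C : ℕ} {xs : X → Fin S}

def A (xs : X → Fin S) (i : Fin S × Fin C) : Set (X × Fin C) := subpop xs i.1 i.2

lemma mA (hxs : Measurable xs) (i : Fin S × Fin C) : MeasurableSet (A xs i) := by
  have : A xs i = ((fun p : X × Fin C => xs p.1) ⁻¹' {i.1}) ∩ (Prod.snd ⁻¹' {i.2}) := by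
    ext p; simp [A, subpop]
  rw [this]
  exact ((hxs.comp measurable_fst) (measurableSet_singleton _)).inter
    (measurable_snd (measurableSet_singleton _))

lemma A_disj {i j : Fin S × Fin C} (hij : i ≠ j) : Disjoint (A xs i) (A xs j) := by
  rw [Set.disjoint_left]
  rintro p ⟨h1, h2⟩ ⟨h3, h4⟩
  exact hij (Prod.ext (h1 ▸ h3 ▸ rfl) (h2 ▸ h4 ▸ rfl))

lemma mem_A (z : X × Fin C) : z ∈ A xs (xs z.1, z.2) := ⟨rfl, rfl⟩

lemma A_iUnion : (⋃ i, A xs i) = (Set.univ : Set (X × Fin C)) := by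
  ext z; simp only [Set.mem_iUnion, Set.mem_univ, iff_true]
  exact ⟨(xs z.1, z.2), mem_A z⟩

lemma measure_eq_sum_A (hxs : Measurable xs) (μ : Measure (X × Fin C)) {T : Set (X × Fin C)}
    (hT : MeasurableSet T) : μ T = ∑ i : Fin S × Fin C, μ (A xs i ∩ T) := by
  have h1 : T = ⋃ i ∈ (Finset.univ : Finset (Fin S × Fin C)), (A xs i ∩ T) := by
    rw [← Set.iUnion₂_inter]
    rw [show (⋃ i ∈ (Finset.univ : Finset (Fin S × Fin C)), A xs i) = ⋃ i, A xs i by simp,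
      A_iUnion, Set.univ_inter]
  calc μ T = μ (⋃ i ∈ (Finset.univ : Finset (Fin S × Fin C)), (A xs i ∩ T)) := by rw [← h1]
    _ = ∑ i : Fin S × Fin C, μ (A xs i ∩ T) := by
        apply measure_biUnion_finset
        · intro i _ j _ hij
          exact Set.disjoint_of_subset Set.inter_subset_left Set.inter_subset_left (A_disj hij)
        · exact fun i _ => (mA hxs i).inter hT

def Gs {X : Type*} {S C : ℕ} (xs : X → Fin S) (s : Fin S) : Set (X × Fin C) := {p | xs p.1 = s}
def Sy {X : Type*} {S C : ℕ} (_xs : X → Fin S) (y : Fin C) : Set (X × Fin C) := {p | p.2 = y}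

lemma mGs (hxs : Measurable xs) (s : Fin S) :
    MeasurableSet (Gs xs s : Set (X × Fin C)) :=
  (hxs.comp measurable_fst) (measurableSet_singleton s)

lemma Gs_inter_Sy (s : Fin S) (y : Fin C) :
    (Gs xs s : Set (X × Fin C)) ∩ Sy xs y = A xs (s, y) := rfl

lemma A_inter_Gs_of_eq {i : Fin S × Fin C} {s : Fin S} (h : i.1 = s) :
    A xs i ∩ (Gs xs s : Set (X × Fin C)) = A xs i := by
  apply Set.inter_eq_left.2
  intro z hz
  exact hz.1.trans h

lemma A_inter_Gs_of_ne {i : Fin S × Fin C} {s : Fin S} (h : i.1 ≠ s) :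
    A xs i ∩ (Gs xs s : Set (X × Fin C)) = ∅ := by
  apply Set.eq_empty_of_subset_empty
  rintro z ⟨hz1, hz2⟩
  exact (h (hz1.1.symm.trans hz2)).elim

lemma measure_Gs (hxs : Measurable xs) (μ : Measure (X × Fin C)) (s : Fin S) :
    μ (Gs xs s : Set (X × Fin C)) = ∑ y : Fin C, μ (A xs (s, y)) := by
  have := measure_eq_sum_A hxs μ (mGs hxs s)
  rw [this, Fintype.sum_prod_type]
  rw [Finset.sum_eq_single s]
  · exact Finset.sum_congr rfl (fun y _ => by rw [A_inter_Gs_of_eq rfl])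
  · intro s' _ hs'
    refine Finset.sum_eq_zero (fun y _ => ?_)
    rw [A_inter_Gs_of_ne hs', measure_empty]
  · intro hmem; exact absurd (Finset.mem_univ _) hmem

lemma measure_univ_eq_sum (hxs : Measurable xs) (μ : Measure (X × Fin C)) :
    μ Set.univ = ∑ i : Fin S × Fin C, μ (A xs i) := by
  have := measure_eq_sum_A hxs μ (T := Set.univ) MeasurableSet.univ
  simpa only [Set.inter_univ] using this

section P
variable (hxs : Measurable xs) (P : Measure (X × Fin C)) [IsProbabilityMeasure P]
  (hpos : ∀ i : Fin S × Fin C, P (A xs i) ≠ 0) {T : Set (X × Fin C)}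

noncomputable def nu (xs : X → Fin S) (P : Measure (X × Fin C)) (i : Fin S × Fin C) :
    Measure (X × Fin C) := P[|A xs i]

include hxs in
lemma nu_apply (hT : MeasurableSet T) {i : Fin S × Fin C} :
    nu xs P i T = (P (A xs i))⁻¹ * P (A xs i ∩ T) := cond_apply (mA hxs i) P T

include hpos in
lemma nu_prob (i : Fin S × Fin C) : IsProbabilityMeasure (nu xs P i) :=
  cond_isProbabilityMeasure (hpos i)

include hxs hpos in
lemma P_inter_eq (hT : MeasurableSet T) (i : Fin S × Fin C) :
    P (A xs i ∩ T) = P (A xs i) * nu xs P i T := by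
  rw [nu_apply hxs P hT, ← mul_assoc, ENNReal.mul_inv_cancel (hpos i) (measure_ne_top P _),
    one_mul]

include hxs in
lemma nu_inter (hT : MeasurableSet T) (i : Fin S × Fin C) :
    nu xs P i (A xs i ∩ T) = nu xs P i T := by
  rw [nu_apply hxs P ((mA hxs i).inter hT), nu_apply hxs P hT, ← Set.inter_assoc,
    Set.inter_self]

include hxs in
lemma nu_null_of_ne (hT : MeasurableSet T) {i j : Fin S × Fin C} (hij : j ≠ i)
    (hTsub : T ⊆ A xs i) : nu xs P j T = 0 := by
  rw [nu_apply hxs P hT]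
  have : A xs j ∩ T = ∅ := by
    apply Set.eq_empty_of_subset_empty
    rintro z ⟨hz1, hz2⟩
    exact ((A_disj hij).le_bot ⟨hz1, hTsub hz2⟩).elim
  rw [this, measure_empty, mul_zero]

include hxs hpos in
lemma nu_self (i : Fin S × Fin C) : nu xs P i (A xs i) = 1 := by
  rw [nu_apply hxs P (mA hxs i), Set.inter_self,
    ENNReal.inv_mul_cancel (hpos i) (measure_ne_top P _)]

noncomputable def QW (xs : X → Fin S) (P : Measure (X × Fin C)) (w : Fin S × Fin C → ℝ≥0∞) :
    Measure (X × Fin C) := ∑ i : Fin S × Fin C, w i • nu xs P i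

lemma QW_apply (w : Fin S × Fin C → ℝ≥0∞) (T : Set (X × Fin C)) :
    QW xs P w T = ∑ i : Fin S × Fin C, w i * nu xs P i T := by
  simp [QW, Measure.finset_sum_apply, Measure.smul_apply, smul_eq_mul]

include hxs in
lemma QW_inter (w : Fin S × Fin C → ℝ≥0∞) (hT : MeasurableSet T) (i : Fin S × Fin C) :
    QW xs P w (A xs i ∩ T) = w i * nu xs P i T := by
  rw [QW_apply]
  rw [Finset.sum_eq_single i]
  · rw [nu_inter hxs P hT]
  · intro j _ hji
    rw [nu_null_of_ne hxs P ((mA hxs i).inter hT) hji Set.inter_subset_left, mul_zero]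
  · intro hmem; exact absurd (Finset.mem_univ i) hmem

include hpos in
lemma QW_prob (w : Fin S × Fin C → ℝ≥0∞) (hw : ∑ i, w i = 1) :
    IsProbabilityMeasure (QW xs P w) := by
  constructor
  rw [QW_apply]
  have : ∀ i : Fin S × Fin C, w i * nu xs P i Set.univ = w i := by
    intro i
    have := nu_prob P hpos i
    rw [measure_univ, mul_one]
  rw [Finset.sum_congr rfl (fun i _ => this i), hw]

include hxs hpos in
lemma QW_self (w : Fin S × Fin C → ℝ≥0∞) (i : Fin S × Fin C) :
    QW xs P w (A xs i) = w i := by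
  have := QW_inter hxs P (w := w) (T := Set.univ) MeasurableSet.univ i
  rw [Set.inter_univ] at this
  rw [this]
  have := nu_prob P hpos i
  rw [measure_univ, mul_one]

include hxs hpos in
lemma QW_cond (w : Fin S × Fin C → ℝ≥0∞) (i : Fin S × Fin C) (hwi : w i ≠ 0) (hwt : w i ≠ ⊤) :
    (QW xs P w)[|A xs i] = nu xs P i := by
  ext T hT
  rw [cond_apply (mA hxs i), QW_inter hxs P w hT i, QW_self hxs P hpos w i, ← mul_assoc,
    ENNReal.inv_mul_cancel hwi hwt, one_mul]

noncomputable def dens (xs : X → Fin S) (c : Fin S × Fin C → ℝ≥0∞) : X × Fin C → ℝ≥0∞ :=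
  fun z => ∑ i : Fin S × Fin C, (A xs i).indicator (fun _ => c i) z

lemma dens_measurable (hxs' : Measurable xs) (c : Fin S × Fin C → ℝ≥0∞) :
    Measurable (dens xs c) :=
  Finset.measurable_sum _ (fun i _ => measurable_const.indicator (mA hxs' i))

lemma dens_eval (c : Fin S × Fin C → ℝ≥0∞) (z : X × Fin C) :
    dens xs c z = c (xs z.1, z.2) := by
  unfold dens
  rw [Finset.sum_eq_single (xs z.1, z.2)]
  · exact Set.indicator_of_mem (mem_A z) _
  · intro j _ hj
    refine Set.indicator_of_notMem (fun hz => ?_) _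
    exact hj (Prod.ext hz.1.symm hz.2.symm)
  · intro hmem; exact absurd (Finset.mem_univ _) hmem

include hxs hpos in
lemma withDensity_eq (v w : Fin S × Fin C → ℝ≥0∞) (hv : ∀ i, v i ≠ ⊤) (hw : ∀ i, w i ≠ ⊤) :
    (P + QW xs P w).withDensity (dens xs (fun i => v i / (P (A xs i) + w i))) = QW xs P v := by
  have hden : ∀ i : Fin S × Fin C, P (A xs i) + w i ≠ 0 :=
    fun i => by simp [hpos i]
  have hdent : ∀ i : Fin S × Fin C, P (A xs i) + w i ≠ ⊤ :=
    fun i => ENNReal.add_ne_top.2 ⟨measure_ne_top P _, hw i⟩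
  ext T hT
  rw [withDensity_apply _ hT]
  unfold dens
  rw [lintegral_finset_sum _ (fun i _ => measurable_const.indicator (mA hxs i))]
  have hterm : ∀ i : Fin S × Fin C,
      ∫⁻ z in T, (A xs i).indicator (fun _ => v i / (P (A xs i) + w i)) z ∂(P + QW xs P w)
        = v i * nu xs P i T := by
    intro i
    rw [lintegral_indicator_const (mA hxs i), Measure.restrict_apply (mA hxs i),
      Measure.add_apply, P_inter_eq hxs P hpos hT i, QW_inter hxs P w hT i,
      ← add_mul, ← mul_assoc, ENNReal.div_mul_cancel (hden i) (hdent i)]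
  rw [Finset.sum_congr rfl (fun i _ => hterm i)]
  · rw [show QW xs P v T = ∑ i : Fin S × Fin C, QW xs P v (A xs i ∩ T) from
      measure_eq_sum_A hxs _ hT]
    exact (Finset.sum_congr rfl (fun i _ => QW_inter hxs P v hT i)).symm

include hxs hpos in
lemma rnDeriv_eq (v w : Fin S × Fin C → ℝ≥0∞) (hv : ∀ i, v i ≠ ⊤) (hw : ∀ i, w i ≠ ⊤)
    (hwp : ∑ i, w i = 1) :
    (QW xs P v).rnDeriv (P + QW xs P w)
      =ᵐ[P + QW xs P w] dens xs (fun i => v i / (P (A xs i) + w i)) := by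
  haveI : IsProbabilityMeasure (QW xs P w) := QW_prob P hpos w hwp
  exact ((QW xs P v).eq_rnDeriv (dens_measurable hxs _)
    Measure.MutuallySingular.zero_left
    (by rw [zero_add, withDensity_eq hxs P hpos v w hv hw])).symm

include hxs hpos in
lemma P_eq_QW : QW xs P (fun i => P (A xs i)) = P := by
  ext T hT
  rw [show QW xs P (fun i => P (A xs i)) T
      = ∑ i : Fin S × Fin C, QW xs P (fun i => P (A xs i)) (A xs i ∩ T) from
    measure_eq_sum_A hxs _ hT, measure_eq_sum_A hxs P hT]
  exact Finset.sum_congr rfl (fun i _ => by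
    rw [QW_inter hxs P _ hT i, P_inter_eq hxs P hpos hT i])

include hxs in
lemma sum_pA : ∑ i : Fin S × Fin C, (P (A xs i)).toReal = 1 := by
  have := measure_eq_sum_A hxs P (T := Set.univ) MeasurableSet.univ
  simp only [Set.inter_univ] at this
  rw [← ENNReal.toReal_sum (fun i _ => measure_ne_top P _), ← this, measure_univ,
    ENNReal.toReal_one]

include hxs hpos in
lemma hellinger_QW (w : Fin S × Fin C → ℝ≥0∞) (hwt : ∀ i, w i ≠ ⊤)
    (hw1 : ∑ i, (w i).toReal = 1) :
    hellinger P (QW xs P w)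
      = Real.sqrt (1 - ∑ i : Fin S × Fin C,
          Real.sqrt ((P (A xs i)).toReal * (w i).toReal)) := by
  have hwsum : ∑ i, w i = 1 := by
    rw [← ENNReal.toReal_eq_one_iff, ENNReal.toReal_sum (fun i _ => hwt i), hw1]
  haveI hQprob : IsProbabilityMeasure (QW xs P w) := QW_prob P hpos w hwsum
  set Q := QW xs P w with hQdef
  set μ := P + Q with hμdef
  set p : Fin S × Fin C → ℝ≥0∞ := fun i => P (A xs i) with hpdef
  have hpt : ∀ i, p i ≠ ⊤ := fun i => measure_ne_top P _
  have hfP : P.rnDeriv μ =ᵐ[μ] dens xs (fun i => p i / (p i + w i)) := by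
    have := rnDeriv_eq hxs P hpos p w hpt hwt hwsum
    rwa [P_eq_QW hxs P hpos] at this
  have hgQ : Q.rnDeriv μ =ᵐ[μ] dens xs (fun i => w i / (p i + w i)) :=
    rnDeriv_eq hxs P hpos w w hwt hwt hwsum
  set cR : Fin S × Fin C → ℝ := fun i =>
    (Real.sqrt ((p i / (p i + w i)).toReal) - Real.sqrt ((w i / (p i + w i)).toReal)) ^ 2
    with hcRdef
  have hae : (fun z => (Real.sqrt ((P.rnDeriv μ z).toReal)
        - Real.sqrt ((Q.rnDeriv μ z).toReal)) ^ 2)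
      =ᵐ[μ] (fun z => ∑ i : Fin S × Fin C, (A xs i).indicator (fun _ => cR i) z) := by
    filter_upwards [hfP, hgQ] with z h1 h2
    have hstep : ∀ (c : Fin S × Fin C → ℝ),
        ∑ i : Fin S × Fin C, (A xs i).indicator (fun _ => c i) z = c (xs z.1, z.2) := by
      intro c
      rw [Finset.sum_eq_single (xs z.1, z.2)]
      · exact Set.indicator_of_mem (mem_A z) _
      · intro j _ hj
        exact Set.indicator_of_notMem (fun hz => hj (Prod.ext hz.1.symm hz.2.symm)) _
      · intro hmem; exact absurd (Finset.mem_univ _) hmem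
    rw [h1, h2, dens_eval, dens_eval, hstep]
  have hint : ∫ z, (Real.sqrt ((P.rnDeriv μ z).toReal)
        - Real.sqrt ((Q.rnDeriv μ z).toReal)) ^ 2 ∂μ
      = ∑ i : Fin S × Fin C, cR i * (p i + w i).toReal := by
    rw [integral_congr_ae hae,
      integral_finset_sum _ (fun i _ => (integrable_const (cR i)).indicator (mA hxs i))]
    refine Finset.sum_congr rfl (fun i _ => ?_)
    rw [integral_indicator_const _ (mA hxs i)]
    have hμA : μ (A xs i) = p i + w i := by
      rw [hμdef, Measure.add_apply, QW_self hxs P hpos w i]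
    rw [measureReal_def, hμA, smul_eq_mul, mul_comm]
  have hterm : ∀ i : Fin S × Fin C, cR i * (p i + w i).toReal
      = (p i).toReal + (w i).toReal
        - 2 * Real.sqrt ((p i).toReal * (w i).toReal) := by
    intro i
    have hpa : 0 < (p i).toReal := ENNReal.toReal_pos (hpos i) (hpt i)
    have hwa : 0 ≤ (w i).toReal := ENNReal.toReal_nonneg
    set a := (p i).toReal; set b := (w i).toReal
    have hab : 0 < a + b := by linarith
    have htdiv : ∀ u : ℝ≥0∞, (u / (p i + w i)).toReal = u.toReal / (a + b) := by
      intro u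
      rw [ENNReal.toReal_div, ENNReal.toReal_add (hpt i) (hwt i)]
    have hsum : (p i + w i).toReal = a + b := ENNReal.toReal_add (hpt i) (hwt i)
    rw [hcRdef]
    simp only [htdiv]
    rw [Real.sqrt_div hpa.le, Real.sqrt_div hwa, hsum]
    rw [div_sub_div_same, div_pow, Real.sq_sqrt hab.le, div_mul_cancel₀ _ hab.ne']
    have h1 : Real.sqrt a ^ 2 = a := Real.sq_sqrt hpa.le
    have h2 : Real.sqrt b ^ 2 = b := Real.sq_sqrt hwa
    have h3 : Real.sqrt a * Real.sqrt b = Real.sqrt (a * b) := (Real.sqrt_mul hpa.le b).symm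
    nlinarith [h1, h2, h3]
  rw [hellinger, hint, Finset.sum_congr rfl (fun i _ => hterm i)]
  rw [Finset.sum_sub_distrib, Finset.sum_add_distrib]
  rw [show ∑ i : Fin S × Fin C, (p i).toReal = 1 from sum_pA hxs P, hw1,
    ← Finset.mul_sum]
  congr 1
  ring

include hxs hpos in
lemma integral_QW (w : Fin S × Fin C → ℝ≥0∞) (hwt : ∀ i, w i ≠ ⊤) (f : X × Fin C → ℝ)
    (hf : Measurable f) (M : ℝ) (hbdd : ∀ z, |f z| ≤ M) :
    ∫ z, f z ∂(QW xs P w) = ∑ i : Fin S × Fin C, (w i).toReal * ∫ z, f z ∂(nu xs P i) := by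
  have hint : ∀ i : Fin S × Fin C, Integrable f (nu xs P i) := by
    intro i
    haveI := nu_prob P hpos i
    exact Integrable.mono' (integrable_const M) hf.aestronglyMeasurable
      (Filter.Eventually.of_forall hbdd)
  rw [QW, integral_finset_sum_measure (fun i _ => (hint i).smul_measure (hwt i))]
  exact Finset.sum_congr rfl (fun i _ => by rw [integral_smul_measure, smul_eq_mul])

include hxs hpos in
lemma QW_Gs (w : Fin S × Fin C → ℝ≥0∞) (s : Fin S) :
    QW xs P w (Gs xs s) = ∑ y : Fin C, w (s, y) := by
  rw [measure_Gs hxs _ s]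
  exact Finset.sum_congr rfl (fun y _ => QW_self hxs P hpos w (s, y))

include hxs hpos in
lemma QW_fair (k : Fin S → ℝ) (r : Fin C → ℝ) (hk : ∀ s, 0 < k s) (hr : ∀ y, 0 ≤ r y)
    (hrs : ∑ y, r y = 1) :
    IsFairBaseRate xs (QW xs P (fun i => ENNReal.ofReal (k i.1 * r i.2))) := by
  set w : Fin S × Fin C → ℝ≥0∞ := fun i => ENNReal.ofReal (k i.1 * r i.2) with hw
  have key : ∀ (y : Fin C) (s : Fin S),
      (QW xs P w)[|{p | xs p.1 = s}] {p | p.2 = y} = ENNReal.ofReal (r y) := by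
    intro y s
    have hGs : ({p : X × Fin C | xs p.1 = s}) = Gs xs s := rfl
    have hSy : ({p : X × Fin C | p.2 = y}) = Sy xs y := rfl
    rw [hGs, hSy, cond_apply (mGs hxs s), Gs_inter_Sy, QW_self hxs P hpos w (s, y),
      QW_Gs hxs P hpos w s]
    have h1 : ∑ y' : Fin C, w (s, y') = ENNReal.ofReal (k s) := by
      rw [hw]
      simp only
      rw [← ENNReal.ofReal_sum_of_nonneg (fun y' _ => mul_nonneg (hk s).le (hr y')),
        ← Finset.mul_sum, hrs, mul_one]
    rw [h1, hw]
    simp only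
    rw [ENNReal.ofReal_mul (hk s).le, ← mul_assoc,
      ENNReal.inv_mul_cancel (ENNReal.ofReal_pos.2 (hk s)).ne' ENNReal.ofReal_ne_top,
      one_mul]
  intro y i j
  rw [key y i, key y j]

end P

lemma Q_decomp (hxs : Measurable xs) (P : Measure (X × Fin C)) [IsProbabilityMeasure P]
    (hpos : ∀ i : Fin S × Fin C, P (A xs i) ≠ 0)
    [Nonempty (Fin S)] [Nonempty (Fin C)]
    (Q : Measure (X × Fin C)) [IsProbabilityMeasure Q]
    (hfair : IsFairBaseRate xs Q)
    (hcond : ∀ i : Fin S × Fin C, Q[|A xs i] = nu xs P i) :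
    ∃ (k : Fin S → ℝ) (r : Fin C → ℝ), (∀ s, 0 < k s) ∧ (∀ y, 0 < r y) ∧
      (∑ s, k s = 1) ∧ (∑ y, r y = 1) ∧
      (∀ i : Fin S × Fin C, Q (A xs i) = ENNReal.ofReal (k i.1 * r i.2)) ∧
      Q = QW xs P (fun i => Q (A xs i)) := by
  set q : Fin S × Fin C → ℝ≥0∞ := fun i => Q (A xs i) with hq
  have hqt : ∀ i, q i ≠ ⊤ := fun i => measure_ne_top Q _
  have hq0 : ∀ i, q i ≠ 0 := by
    intro i h0
    have h0' : Q (A xs i) = 0 := h0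
    have h1 : (Q[|A xs i]) Set.univ = 0 := by
      rw [cond_apply (mA hxs i), Set.inter_univ, h0', mul_zero]
    haveI := nu_prob P hpos i
    rw [hcond i, measure_univ] at h1
    exact one_ne_zero h1
  set ks : Fin S → ℝ≥0∞ := fun s => Q (Gs xs s) with hks
  have hksq : ∀ s, ks s = ∑ y, q (s, y) := fun s => measure_Gs hxs Q s
  have hks0 : ∀ s, ks s ≠ 0 := by
    intro s h0
    rw [hksq s] at h0
    exact hq0 (s, Classical.arbitrary _)
      ((Finset.sum_eq_zero_iff.1 h0) _ (Finset.mem_univ _))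
  have hkst : ∀ s, ks s ≠ ⊤ := fun s => measure_ne_top Q _
  set s₀ : Fin S := Classical.arbitrary _ with hs₀
  set rr : Fin C → ℝ≥0∞ := fun y => (Q[|(Gs xs s₀ : Set (X × Fin C))]) (Sy xs y) with hrr
  have hcondval : ∀ (s : Fin S) (y : Fin C),
      (Q[|(Gs xs s : Set (X × Fin C))]) (Sy xs y) = (ks s)⁻¹ * q (s, y) := by
    intro s y
    rw [cond_apply (mGs hxs s), Gs_inter_Sy]
  have hfair' : ∀ (s : Fin S) (y : Fin C),
      (Q[|(Gs xs s : Set (X × Fin C))]) (Sy xs y) = rr y := by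
    intro s y
    exact hfair y s s₀
  have hprod : ∀ (s : Fin S) (y : Fin C), q (s, y) = ks s * rr y := by
    intro s y
    rw [← hfair' s y, hcondval s y, ← mul_assoc, ENNReal.mul_inv_cancel (hks0 s) (hkst s),
      one_mul]
  have hrr_ne_top : ∀ y, rr y ≠ ⊤ := by
    intro y
    rw [← hfair' s₀ y, hcondval s₀ y]
    exact ENNReal.mul_ne_top (ENNReal.inv_ne_top.2 (hks0 s₀)) (hqt (s₀, y))
  have hrr0 : ∀ y, rr y ≠ 0 := by
    intro y h0
    exact hq0 (s₀, y) (by rw [hprod s₀ y, h0, mul_zero])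
  have hks_sum : ∑ s, ks s = 1 := by
    have h1 : (1 : ℝ≥0∞) = ∑ i : Fin S × Fin C, q i := by
      rw [← measure_univ (μ := Q)]; exact measure_univ_eq_sum hxs Q
    rw [Finset.sum_congr rfl (fun s _ => hksq s)]
    rw [h1, Fintype.sum_prod_type]
  have hrr_sum : ∑ y, rr y = 1 := by
    have h2 : ∑ y, (ks s₀ * rr y) = ks s₀ := by
      rw [Finset.sum_congr rfl (fun y (_ : y ∈ Finset.univ) => (hprod s₀ y).symm), ← hksq s₀]
    rw [← Finset.mul_sum] at h2
    have h3 : ∑ y, rr y = (ks s₀)⁻¹ * (ks s₀ * ∑ y, rr y) := by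
      rw [← mul_assoc, ENNReal.inv_mul_cancel (hks0 s₀) (hkst s₀), one_mul]
    rw [h3, h2, ENNReal.inv_mul_cancel (hks0 s₀) (hkst s₀)]
  have hQ_eq : Q = QW xs P q := by
    ext T hT
    rw [measure_eq_sum_A hxs Q hT,
      show QW xs P q T = ∑ i : Fin S × Fin C, QW xs P q (A xs i ∩ T) from
        measure_eq_sum_A hxs _ hT]
    refine Finset.sum_congr rfl (fun i _ => ?_)
    rw [QW_inter hxs P q hT i, ← hcond i, cond_apply (mA hxs i), ← mul_assoc,
      ENNReal.mul_inv_cancel (hq0 i) (hqt i), one_mul]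
  refine ⟨fun s => (ks s).toReal, fun y => (rr y).toReal, ?_, ?_, ?_, ?_, ?_, hQ_eq⟩
  · exact fun s => ENNReal.toReal_pos (hks0 s) (hkst s)
  · exact fun y => ENNReal.toReal_pos (hrr0 y) (hrr_ne_top y)
  · rw [← ENNReal.toReal_sum (fun s _ => hkst s), hks_sum, ENNReal.toReal_one]
  · rw [← ENNReal.toReal_sum (fun y _ => hrr_ne_top y), hrr_sum, ENNReal.toReal_one]
  · intro i
    show Q (A xs i) = ENNReal.ofReal ((ks i.1).toReal * (rr i.2).toReal)
    have hh : Q (A xs i) = ks i.1 * rr i.2 := hprod i.1 i.2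
    rw [hh, ENNReal.ofReal_mul ENNReal.toReal_nonneg,
      ENNReal.ofReal_toReal (hkst i.1), ENNReal.ofReal_toReal (hrr_ne_top i.2)]

end St4
/-- tight fairness certificate under sensitive shifting.
`P` is a probability distribution on `X × Fin C` with every subpopulation probability
`p_{s,y} = Pr_P[X_s = s, Y = y]` positive, `h` is a classifier, `ℓ` a nonnegative loss, and
`E_{s,y}` the expected loss on the conditional `P_{s,y}`.  For any `ρ > 0`, the supremum of
the expected loss over all fair base rate distributions `Q` with `H(P,Q) ≤ ρ` and
`Q_{s,y} = P_{s,y}` for all `s, y` equals the maximum (attained supremum) of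
`Σ_{s,y} k_s r_y E_{s,y}` over the stated convex feasible set, whenever either feasible set
is nonempty. -/
theorem statement_4 {X : Type*} [MeasurableSpace X] {S C : ℕ}
    (xs : X → Fin S) (hxs : Measurable xs)
    (P : Measure (X × Fin C)) [IsProbabilityMeasure P]
    (hpos : ∀ s y, 0 < P (subpop xs s y))
    (h : X → Fin C) (hh : Measurable h)
    (ℓ : Fin C → Fin C → ℝ) (hℓ : ∀ a b, 0 ≤ ℓ a b)
    (ρ : ℝ) (hρ : 0 < ρ) :
    let E : Fin S → Fin C → ℝ := fun s y => ∫ p, ℓ (h p.1) p.2 ∂(P[|subpop xs s y])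
    let A : Set ℝ := {L | ∃ Q : Measure (X × Fin C), IsProbabilityMeasure Q ∧
      IsFairBaseRate xs Q ∧ hellinger P Q ≤ ρ ∧
      (∀ s y, Q[|subpop xs s y] = P[|subpop xs s y]) ∧
      L = ∫ p, ℓ (h p.1) p.2 ∂Q}
    let B : Set ℝ := {L | ∃ (k : Fin S → ℝ) (r : Fin C → ℝ),
      (∀ s, 0 ≤ k s) ∧ (∀ y, 0 ≤ r y) ∧ (∑ s, k s = 1) ∧ (∑ y, r y = 1) ∧
      1 - ρ ^ 2 - ∑ s, ∑ y, Real.sqrt ((P (subpop xs s y)).toReal * k s * r y) ≤ 0 ∧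
      L = ∑ s, ∑ y, k s * r y * E s y}
    (A.Nonempty ∨ B.Nonempty) → sSup A = sSup B ∧ sSup B ∈ B := by
  intro E A B hne
  classical
  -- nonemptiness of the index types
  have hXC : Nonempty (X × Fin C) := by
    by_contra hE
    rw [not_nonempty_iff] at hE
    have h1 := measure_univ (μ := P)
    rw [Set.univ_eq_empty_iff.mpr hE, measure_empty] at h1
    exact zero_ne_one h1
  haveI := hXC
  haveI : Nonempty X := ⟨(Classical.arbitrary (X × Fin C)).1⟩
  haveI : Nonempty (Fin C) := ⟨(Classical.arbitrary (X × Fin C)).2⟩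
  haveI : Nonempty (Fin S) := ⟨xs (Classical.arbitrary X)⟩
  have hpos' : ∀ i : Fin S × Fin C, P (St4.A xs i) ≠ 0 := fun i => (hpos i.1 i.2).ne'
  set ps : Fin S → Fin C → ℝ := fun s y => (P (subpop xs s y)).toReal with hps_def
  have hps : ∀ s y, 0 < ps s y :=
    fun s y => ENNReal.toReal_pos (hpos s y).ne' (measure_ne_top P _)
  have hE : ∀ s y, 0 ≤ E s y := fun s y => integral_nonneg (fun p => hℓ _ _)
  have hL : Measurable (fun z : X × Fin C => ℓ (h z.1) z.2) := by
    have h1 : Measurable (fun z : X × Fin C => ((h z.1, z.2) : Fin C × Fin C)) :=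
      (hh.comp measurable_fst).prodMk measurable_snd
    exact (measurable_of_countable (fun q : Fin C × Fin C => ℓ q.1 q.2)).comp h1
  set M₀ : ℝ := ∑ a : Fin C, ∑ b : Fin C, |ℓ a b| with hM₀
  have hLbdd : ∀ z : X × Fin C, |ℓ (h z.1) z.2| ≤ M₀ := by
    intro z
    calc |ℓ (h z.1) z.2| ≤ ∑ b, |ℓ (h z.1) b| :=
          Finset.single_le_sum (f := fun b => |ℓ (h z.1) b|)
            (fun b _ => abs_nonneg _) (Finset.mem_univ z.2)
      _ ≤ M₀ := Finset.single_le_sum (f := fun a => ∑ b, |ℓ a b|)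
          (fun a _ => Finset.sum_nonneg fun b _ => abs_nonneg _) (Finset.mem_univ (h z.1))
  set obj : (Fin S → ℝ) × (Fin C → ℝ) → ℝ :=
    fun kr => ∑ s, ∑ y, kr.1 s * kr.2 y * E s y with hobj
  have hAiff : ∀ Lv : ℝ, Lv ∈ A ↔ (∃ Q : Measure (X × Fin C), IsProbabilityMeasure Q ∧
      IsFairBaseRate xs Q ∧ hellinger P Q ≤ ρ ∧
      (∀ s y, Q[|subpop xs s y] = P[|subpop xs s y]) ∧
      Lv = ∫ p, ℓ (h p.1) p.2 ∂Q) := fun _ => Iff.rfl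
  have hBiff : ∀ Lv : ℝ, Lv ∈ B ↔ (∃ (k : Fin S → ℝ) (r : Fin C → ℝ),
      (∀ s, 0 ≤ k s) ∧ (∀ y, 0 ≤ r y) ∧ (∑ s, k s = 1) ∧ (∑ y, r y = 1) ∧
      1 - ρ ^ 2 - ∑ s, ∑ y, Real.sqrt ((P (subpop xs s y)).toReal * k s * r y) ≤ 0 ∧
      Lv = ∑ s, ∑ y, k s * r y * E s y) := fun _ => Iff.rfl
  -- B is the image of the feasible set under obj
  have hBF : B = obj '' (St4Opt.F ps ρ) := by
    ext Lv
    rw [hBiff]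
    constructor
    · rintro ⟨k, r, hk0, hr0, hks, hrs, hcon, rfl⟩
      exact ⟨(k, r), ⟨hk0, hr0, hks, hrs, hcon⟩, rfl⟩
    · rintro ⟨⟨k, r⟩, ⟨hk0, hr0, hks, hrs, hcon⟩, rfl⟩
      exact ⟨k, r, hk0, hr0, hks, hrs, hcon, rfl⟩
  -- A to feasible points
  have hAtoF : ∀ Lv ∈ A, ∃ kr ∈ St4Opt.F ps ρ,
      ((∀ s, 0 < kr.1 s) ∧ (∀ y, 0 < kr.2 y)) ∧ obj kr = Lv := by
    intro Lv hLv
    rw [hAiff] at hLv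
    obtain ⟨Q, hQprob, hQfair, hQhell, hQcond, rfl⟩ := hLv
    haveI := hQprob
    have hcond' : ∀ i : Fin S × Fin C, Q[|St4.A xs i] = St4.nu xs P i :=
      fun i => hQcond i.1 i.2
    obtain ⟨k, r, hkpos, hrpos, hksum, hrsum, hwq, hQeq⟩ :=
      St4.Q_decomp hxs P hpos' Q hQfair hcond'
    set w : Fin S × Fin C → ℝ≥0∞ := fun i => Q (St4.A xs i) with hwdef
    have hwt : ∀ i, w i ≠ ⊤ := fun i => measure_ne_top Q _
    have hwr : ∀ i, (w i).toReal = k i.1 * r i.2 := fun i => by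
      rw [show (w i) = ENNReal.ofReal (k i.1 * r i.2) from hwq i,
        ENNReal.toReal_ofReal (mul_nonneg (hkpos i.1).le (hrpos i.2).le)]
    have hw1 : ∑ i, (w i).toReal = 1 := by
      rw [Finset.sum_congr rfl (fun i (_ : i ∈ Finset.univ) => hwr i), Fintype.sum_prod_type,
        show ∑ s, ∑ y, k s * r y = (∑ s, k s) * (∑ y, r y) from (Finset.sum_mul_sum _ _ _ _).symm,
        hksum, hrsum, mul_one]
    have hhel := hQhell
    rw [show Q = St4.QW xs P w from hQeq, St4.hellinger_QW hxs P hpos' w hwt hw1] at hhel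
    have hSig : ∑ i : Fin S × Fin C, Real.sqrt ((P (St4.A xs i)).toReal * (w i).toReal)
        = ∑ s, ∑ y, Real.sqrt (ps s y * k s * r y) := by
      rw [Fintype.sum_prod_type]
      refine Finset.sum_congr rfl fun s _ => Finset.sum_congr rfl fun y _ => ?_
      rw [hwr (s, y),
        show ps s y * k s * r y = ps s y * (k s * r y) from mul_assoc _ _ _]
      rfl
    rw [hSig] at hhel
    have hcon : 1 - ρ ^ 2 - ∑ s, ∑ y, Real.sqrt (ps s y * k s * r y) ≤ 0 := by
      set Sig := ∑ s, ∑ y, Real.sqrt (ps s y * k s * r y) with hSigdef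
      have hxρ : 1 - Sig ≤ ρ ^ 2 := by
        by_cases hc : 0 ≤ 1 - Sig
        · have h1 := Real.sq_sqrt hc
          nlinarith [Real.sqrt_nonneg (1 - Sig)]
        · nlinarith
      linarith
    have hQint : ∫ z, ℓ (h z.1) z.2 ∂Q = obj (k, r) := by
      rw [show Q = St4.QW xs P w from hQeq,
        St4.integral_QW hxs P hpos' w hwt _ hL M₀ hLbdd, hobj, Fintype.sum_prod_type]
      refine Finset.sum_congr rfl fun s _ => Finset.sum_congr rfl fun y _ => ?_
      rw [hwr (s, y)]
      rfl
    exact ⟨(k, r), ⟨fun s => (hkpos s).le, fun y => (hrpos y).le, hksum, hrsum, hcon⟩,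
      ⟨hkpos, hrpos⟩, hQint.symm⟩
  -- positive feasible points to A
  have hFtoA : ∀ kr ∈ St4Opt.F ps ρ, (∀ s, 0 < kr.1 s) → (∀ y, 0 < kr.2 y) →
      obj kr ∈ A := by
    rintro ⟨k, r⟩ ⟨hk0, hr0, hks, hrs, hcon⟩ hkpos hrpos
    rw [hAiff]
    set w : Fin S × Fin C → ℝ≥0∞ := fun i => ENNReal.ofReal (k i.1 * r i.2) with hwdef
    have hwt : ∀ i, w i ≠ ⊤ := fun i => ENNReal.ofReal_ne_top
    have hwr : ∀ i, (w i).toReal = k i.1 * r i.2 := fun i =>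
      ENNReal.toReal_ofReal (mul_nonneg (hkpos i.1).le (hrpos i.2).le)
    have hw1 : ∑ i, (w i).toReal = 1 := by
      rw [Finset.sum_congr rfl (fun i (_ : i ∈ Finset.univ) => hwr i), Fintype.sum_prod_type,
        show ∑ s, ∑ y, k s * r y = (∑ s, k s) * (∑ y, r y) from (Finset.sum_mul_sum _ _ _ _).symm,
        hks, hrs, mul_one]
    have hwsum : ∑ i, w i = 1 := by
      rw [← ENNReal.toReal_eq_one_iff, ENNReal.toReal_sum (fun i _ => hwt i), hw1]
    refine ⟨St4.QW xs P w, St4.QW_prob P hpos' w hwsum,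
      St4.QW_fair hxs P hpos' k r hkpos (fun y => (hr0 y)) hrs, ?_, ?_, ?_⟩
    · rw [St4.hellinger_QW hxs P hpos' w hwt hw1]
      have hSig : ∑ i : Fin S × Fin C, Real.sqrt ((P (St4.A xs i)).toReal * (w i).toReal)
          = ∑ s, ∑ y, Real.sqrt (ps s y * k s * r y) := by
        rw [Fintype.sum_prod_type]
        refine Finset.sum_congr rfl fun s _ => Finset.sum_congr rfl fun y _ => ?_
        rw [hwr (s, y),
          show ps s y * k s * r y = ps s y * (k s * r y) from mul_assoc _ _ _]
        rfl
      rw [hSig]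
      have hgg : St4Opt.g ps (k, r) = ∑ s, ∑ y, Real.sqrt (ps s y * k s * r y) := rfl
      calc Real.sqrt (1 - ∑ s, ∑ y, Real.sqrt (ps s y * k s * r y))
          ≤ Real.sqrt (ρ ^ 2) := Real.sqrt_le_sqrt (by linarith [hcon, hgg])
        _ = ρ := Real.sqrt_sq hρ.le
    · intro s y
      exact St4.QW_cond hxs P hpos' w (s, y)
        (ENNReal.ofReal_pos.2 (mul_pos (hkpos s) (hrpos y))).ne' (hwt _)
    · rw [St4.integral_QW hxs P hpos' w hwt _ hL M₀ hLbdd, hobj, Fintype.sum_prod_type]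
      refine Finset.sum_congr rfl fun s _ => Finset.sum_congr rfl fun y _ => ?_
      rw [hwr (s, y)]
      rfl
  -- continuity of obj
  have hobj_cont : Continuous obj := by
    apply continuous_finset_sum
    intro s _
    apply continuous_finset_sum
    intro y _
    exact (((continuous_apply s).comp continuous_fst).mul
      ((continuous_apply y).comp continuous_snd)).mul continuous_const
  -- the feasible set is nonempty
  have hFne : (St4Opt.F ps ρ).Nonempty := by
    rcases hne with hA | hB
    · obtain ⟨Lv, hLv⟩ := hA
      obtain ⟨kr, hkr, _⟩ := hAtoF Lv hLv
      exact ⟨kr, hkr⟩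
    · obtain ⟨Lv, hLv⟩ := hB
      rw [hBF] at hLv
      obtain ⟨kr, hkr, _⟩ := hLv
      exact ⟨kr, hkr⟩
  -- maximizer
  obtain ⟨x₀, hx₀F, hmax⟩ :=
    (St4Opt.F_compact ps ρ).exists_isMaxOn hFne hobj_cont.continuousOn
  have hBgreat : IsGreatest B (obj x₀) := by
    constructor
    · rw [hBF]; exact ⟨x₀, hx₀F, rfl⟩
    · intro Lv hLv
      rw [hBF] at hLv
      obtain ⟨kr, hkr, rfl⟩ := hLv
      exact hmax hkr
  have hsupB : sSup B = obj x₀ := hBgreat.csSup_eq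
  -- positive anchor
  obtain ⟨xp, hxpF, hxpk, hxpr⟩ := St4Opt.exists_pos_feasible ps ρ hps hx₀F
  have hAne : A.Nonempty := ⟨obj xp, hFtoA xp hxpF hxpk hxpr⟩
  have hAub : ∀ a ∈ A, a ≤ obj x₀ := by
    intro a ha
    obtain ⟨kr, hkr, _, hEq⟩ := hAtoF a ha
    rw [← hEq]
    exact hmax hkr
  have hAbdd : BddAbove A := ⟨obj x₀, fun a ha => hAub a ha⟩
  have hle : sSup A ≤ obj x₀ := csSup_le hAne hAub
  set M := obj x₀ with hM
  have hM0 : 0 ≤ M := Finset.sum_nonneg fun s _ => Finset.sum_nonneg fun y _ =>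
    mul_nonneg (mul_nonneg (hx₀F.1 s) (hx₀F.2.1 y)) (hE s y)
  have hmix : ∀ t : ℝ, 0 < t → t ≤ 1 → (1 - t) ^ 2 * M ≤ sSup A := by
    intro t ht0 ht1
    have h1t : 0 ≤ 1 - t := by linarith
    set xt : (Fin S → ℝ) × (Fin C → ℝ) := (fun s => (1 - t) * x₀.1 s + t * xp.1 s,
      fun y => (1 - t) * x₀.2 y + t * xp.2 y) with hxt
    have hxtk : ∀ s, 0 < xt.1 s := fun s =>
      add_pos_of_nonneg_of_pos (mul_nonneg h1t (hx₀F.1 s)) (mul_pos ht0 (hxpk s))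
    have hxtr : ∀ y, 0 < xt.2 y := fun y =>
      add_pos_of_nonneg_of_pos (mul_nonneg h1t (hx₀F.2.1 y)) (mul_pos ht0 (hxpr y))
    have hxtF : xt ∈ St4Opt.F ps ρ := by
      refine ⟨fun s => (hxtk s).le, fun y => (hxtr y).le, ?_, ?_, ?_⟩
      · show ∑ s, ((1 - t) * x₀.1 s + t * xp.1 s) = 1
        rw [Finset.sum_add_distrib, ← Finset.mul_sum, ← Finset.mul_sum,
          hx₀F.2.2.1, hxpF.2.2.1]
        ring
      · show ∑ y, ((1 - t) * x₀.2 y + t * xp.2 y) = 1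
        rw [Finset.sum_add_distrib, ← Finset.mul_sum, ← Finset.mul_sum,
          hx₀F.2.2.2.1, hxpF.2.2.2.1]
        ring
      · have hcc := St4Opt.g_concave ps hps hx₀F.1 hx₀F.2.1 hxpF.1 hxpF.2.1 ht0.le ht1
        have hgx₀ : 1 - ρ ^ 2 ≤ St4Opt.g ps x₀ := by linarith [hx₀F.2.2.2.2]
        have hgxp : 1 - ρ ^ 2 ≤ St4Opt.g ps xp := by linarith [hxpF.2.2.2.2]
        have hcomb : 1 - ρ ^ 2 ≤ St4Opt.g ps xt := by
          calc 1 - ρ ^ 2 = (1 - t) * (1 - ρ ^ 2) + t * (1 - ρ ^ 2) := by ring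
            _ ≤ (1 - t) * St4Opt.g ps x₀ + t * St4Opt.g ps xp :=
              add_le_add (mul_le_mul_of_nonneg_left hgx₀ h1t)
                (mul_le_mul_of_nonneg_left hgxp ht0.le)
            _ ≤ St4Opt.g ps xt := hcc
        linarith
    have hmemA : obj xt ∈ A := hFtoA xt hxtF hxtk hxtr
    have hlb : (1 - t) ^ 2 * M ≤ obj xt := by
      rw [hM, hobj]
      rw [Finset.mul_sum]
      refine Finset.sum_le_sum fun s _ => ?_
      rw [Finset.mul_sum]
      refine Finset.sum_le_sum fun y _ => ?_
      have hA' : (1 - t) * x₀.1 s ≤ xt.1 s := by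
        have : 0 ≤ t * xp.1 s := (mul_pos ht0 (hxpk s)).le
        show (1 - t) * x₀.1 s ≤ (1 - t) * x₀.1 s + t * xp.1 s
        linarith
      have hB' : (1 - t) * x₀.2 y ≤ xt.2 y := by
        have : 0 ≤ t * xp.2 y := (mul_pos ht0 (hxpr y)).le
        show (1 - t) * x₀.2 y ≤ (1 - t) * x₀.2 y + t * xp.2 y
        linarith
      have h1 : ((1 - t) * x₀.1 s) * ((1 - t) * x₀.2 y) ≤ xt.1 s * xt.2 y :=
        mul_le_mul hA' hB' (mul_nonneg h1t (hx₀F.2.1 y))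
          (le_trans (mul_nonneg h1t (hx₀F.1 s)) hA')
      have h2 : ((1 - t) * x₀.1 s) * ((1 - t) * x₀.2 y) * E s y
          ≤ xt.1 s * xt.2 y * E s y := mul_le_mul_of_nonneg_right h1 (hE s y)
      calc (1 - t) ^ 2 * (x₀.1 s * x₀.2 y * E s y)
          = ((1 - t) * x₀.1 s) * ((1 - t) * x₀.2 y) * E s y := by ring
        _ ≤ xt.1 s * xt.2 y * E s y := h2
    exact le_trans hlb (le_csSup hAbdd hmemA)
  have hge : M ≤ sSup A := by
    apply le_of_forall_pos_le_add
    intro ε hε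
    set t : ℝ := min 1 (ε / (2 * M + 1)) with ht
    have ht0 : 0 < t := lt_min one_pos (div_pos hε (by linarith))
    have ht1 : t ≤ 1 := min_le_left _ _
    have h1 := hmix t ht0 ht1
    have ht2 : t ≤ ε / (2 * M + 1) := min_le_right _ _
    have h2 : t * (2 * M + 1) ≤ ε := by
      rw [← le_div_iff₀ (by linarith : (0:ℝ) < 2 * M + 1)]
      exact ht2
    nlinarith [h1, hM0, ht0.le, ht1, mul_nonneg (mul_nonneg ht0.le ht0.le) hM0,
      mul_nonneg ht0.le hM0]
  constructor
  · rw [hsupB]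
    exact le_antisymm hle hge
  · rw [hsupB]
    exact hBgreat.1
end

section
/- Let P be a distribution on X × [C] with p_{s,y} := Pr_P[X_s = s, Y = y] > 0 for all s, y, and let Q be a fair base rate distribution with H(P,Q) ≤ ρ whose subpopulation conditionals satisfy Q_{s,y} = P_{s,y} for all s ∈ [S], y ∈ [C]. Define k_s := Pr_Q[X_s = s] and r_y := Pr_Q[Y = y]. Then: (i) Pr_Q[X_s = s, Y = y] = k_s r_y for all s, y; (ii) k_s ≥ 0, r_y ≥ 0, Σ_s k_s = 1, Σ_y r_y = 1; (iii) Σ_{s,y} √(p_{s,y} k_s r_y) ≥ 1 − ρ²; and (iv) E_{(X,Y)∼Q}[ℓ(h(X),Y)] = Σ_{s,y} k_s r_y E_{s,y} where E_{s,y} := E_{(X,Y)∼P_{s,y}}[ℓ(h(X),Y)] for any classifier h and nonnegative loss ℓ. -/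
open MeasureTheory ProbabilityTheory

section helpers

variable {Z : Type*} [MeasurableSpace Z]

lemma meas_eq_sum_of_partition {ι : Type*} [Fintype ι] (μ : Measure Z) {A : ι → Set Z}
    (hm : ∀ i, MeasurableSet (A i)) (hd : Pairwise (Function.onFun Disjoint A))
    {T : Set Z} (hT : (⋃ i, A i) = T) : μ T = ∑ i, μ (A i) := by
  rw [← hT, measure_iUnion hd hm, tsum_fintype]

lemma integral_eq_sum_of_partition {ι : Type*} [Fintype ι] (μ : Measure Z) {A : ι → Set Z}
    (hm : ∀ i, MeasurableSet (A i)) (hd : Pairwise (Function.onFun Disjoint A))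
    (hU : (⋃ i, A i) = Set.univ) {ψ : Z → ℝ} (hint : Integrable ψ μ) :
    ∫ z, ψ z ∂μ = ∑ i, ∫ z in A i, ψ z ∂μ := by
  rw [← setIntegral_univ (μ := μ) (f := ψ), ← hU,
    integral_iUnion hm hd (by rw [hU]; exact hint.integrableOn), tsum_fintype]

lemma sqrt_mul_sqrt_le_add_div_two {a b : ℝ} (ha : 0 ≤ a) (hb : 0 ≤ b) :
    Real.sqrt a * Real.sqrt b ≤ (a + b) / 2 := by
  nlinarith [sq_nonneg (Real.sqrt a - Real.sqrt b), Real.sq_sqrt ha, Real.sq_sqrt hb,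
    Real.sqrt_nonneg a, Real.sqrt_nonneg b]

end helpers

set_option maxHeartbeats 1000000 in
/-- properties of a feasible shifted distribution under sensitive shifting.
`P` is a probability distribution on `X × Fin C` with all subpopulation probabilities
`p_{s,y} = Pr_P[X_s = s, Y = y]` positive, and `Q` is a fair base rate distribution with
`H(P,Q) ≤ ρ` whose subpopulation conditionals agree with those of `P`.  With
`k_s = Pr_Q[X_s = s]` and `r_y = Pr_Q[Y = y]` we have: (i) `Pr_Q[X_s = s, Y = y] = k_s r_y`;
(ii) `k, r` are nonnegative and sum to one; (iii) `Σ_{s,y} √(p_{s,y} k_s r_y) ≥ 1 − ρ²`;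
(iv) `E_Q[ℓ(h(X),Y)] = Σ_{s,y} k_s r_y E_{s,y}` for any classifier `h` and nonnegative
loss `ℓ`. -/
theorem statement_5 {X : Type*} [MeasurableSpace X] {S C : ℕ}
    (xs : X → Fin S) (hxs : Measurable xs)
    (P Q : Measure (X × Fin C)) [IsProbabilityMeasure P] [IsProbabilityMeasure Q]
    (hpos : ∀ s y, 0 < P (subpop xs s y))
    (ρ : ℝ)
    (hfair : IsFairBaseRate xs Q)
    (hdist : hellinger P Q ≤ ρ)
    (hcond : ∀ s y, Q[|subpop xs s y] = P[|subpop xs s y]) :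
    let k : Fin S → ℝ := fun s => (Q {p | xs p.1 = s}).toReal
    let r : Fin C → ℝ := fun y => (Q {p | p.2 = y}).toReal
    (∀ s y, (Q (subpop xs s y)).toReal = k s * r y) ∧
    (∀ s, 0 ≤ k s) ∧ (∀ y, 0 ≤ r y) ∧ (∑ s, k s = 1) ∧ (∑ y, r y = 1) ∧
    1 - ρ ^ 2 ≤ ∑ s, ∑ y, Real.sqrt ((P (subpop xs s y)).toReal * k s * r y) ∧
    ∀ (h : X → Fin C), Measurable h → ∀ (ℓ : Fin C → Fin C → ℝ), (∀ a b, 0 ≤ ℓ a b) →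
      ∫ p, ℓ (h p.1) p.2 ∂Q =
        ∑ s, ∑ y, k s * r y * ∫ p, ℓ (h p.1) p.2 ∂(P[|subpop xs s y]) := by
  intro k r
  -- basic measurability facts
  have MS : ∀ s : Fin S, MeasurableSet {p : X × Fin C | xs p.1 = s} := fun s =>
    (hxs.comp measurable_fst) (measurableSet_singleton s)
  have MY : ∀ y : Fin C, MeasurableSet {p : X × Fin C | p.2 = y} := fun y =>
    measurable_snd (measurableSet_singleton y)
  have MA : ∀ s y, MeasurableSet (subpop xs s y) := fun s y => (MS s).inter (MY y)
  -- positivity of `Q` on subpopulations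
  have hQpos : ∀ s y, 0 < Q (subpop xs s y) := by
    intro s y
    rcases eq_zero_or_pos (Q (subpop xs s y)) with hq | hq
    · exfalso
      have h1 : (Q[|subpop xs s y]) Set.univ = 0 := by
        rw [cond_apply (MA s y), Set.inter_univ, hq, mul_zero]
      have h2 : (P[|subpop xs s y]) Set.univ = 1 := by
        rw [cond_apply (MA s y), Set.inter_univ]
        exact ENNReal.inv_mul_cancel (hpos s y).ne' (measure_ne_top P _)
      rw [hcond s y, h2] at h1
      exact one_ne_zero h1
    · exact hq
  -- partitions
  have hdisjY : ∀ s : Fin S, Pairwise (Function.onFun Disjoint fun y : Fin C => subpop xs s y) := by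
    intro s y y' hne
    rw [Function.onFun, Set.disjoint_left]
    rintro p ⟨_, h2⟩ ⟨_, h4⟩
    exact hne (h2.symm.trans h4)
  have hdisjS : ∀ y : Fin C, Pairwise (Function.onFun Disjoint fun s : Fin S => subpop xs s y) := by
    intro y s s' hne
    rw [Function.onFun, Set.disjoint_left]
    rintro p ⟨h1, _⟩ ⟨h3, _⟩
    exact hne (h1.symm.trans h3)
  have hdisjP : Pairwise (Function.onFun Disjoint fun i : Fin S × Fin C => subpop xs i.1 i.2) := by
    intro i j hne
    rw [Function.onFun, Set.disjoint_left]
    rintro p ⟨h1, h2⟩ ⟨h3, h4⟩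
    exact hne (Prod.ext (h1.symm.trans h3) (h2.symm.trans h4))
  have hUY : ∀ s : Fin S, (⋃ y : Fin C, subpop xs s y) = {p : X × Fin C | xs p.1 = s} := by
    intro s
    ext p
    simp only [subpop, Set.mem_iUnion, Set.mem_setOf_eq]
    exact ⟨fun ⟨y, hy, _⟩ => hy, fun hy => ⟨p.2, hy, rfl⟩⟩
  have hUS : ∀ y : Fin C, (⋃ s : Fin S, subpop xs s y) = {p : X × Fin C | p.2 = y} := by
    intro y
    ext p
    simp only [subpop, Set.mem_iUnion, Set.mem_setOf_eq]
    exact ⟨fun ⟨s, _, hy⟩ => hy, fun hy => ⟨xs p.1, rfl, hy⟩⟩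
  have hUP : (⋃ i : Fin S × Fin C, subpop xs i.1 i.2) = Set.univ := by
    ext p
    simp only [subpop, Set.mem_iUnion, Set.mem_setOf_eq, Set.mem_univ, iff_true]
    exact ⟨(xs p.1, p.2), rfl, rfl⟩
  have hUSfull : (⋃ s : Fin S, {p : X × Fin C | xs p.1 = s}) = Set.univ := by
    ext p
    simp only [Set.mem_iUnion, Set.mem_setOf_eq, Set.mem_univ, iff_true]
    exact ⟨xs p.1, rfl⟩
  have hUYfull : (⋃ y : Fin C, {p : X × Fin C | p.2 = y}) = Set.univ := by
    ext p
    simp only [Set.mem_iUnion, Set.mem_setOf_eq, Set.mem_univ, iff_true]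
    exact ⟨p.2, rfl⟩
  have hdisjSfull : Pairwise (Function.onFun Disjoint fun s : Fin S => {p : X × Fin C | xs p.1 = s}) := by
    intro s s' hne
    rw [Function.onFun, Set.disjoint_left]
    intro p h1 h3
    exact hne (h1.symm.trans h3)
  have hdisjYfull : Pairwise (Function.onFun Disjoint fun y : Fin C => {p : X × Fin C | p.2 = y}) := by
    intro y y' hne
    rw [Function.onFun, Set.disjoint_left]
    intro p h1 h3
    exact hne (h1.symm.trans h3)
  -- sum identities (real-valued)
  have hkval : ∀ s, k s = ∑ y, (Q (subpop xs s y)).toReal := by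
    intro s
    have := meas_eq_sum_of_partition Q (fun y => MA s y) (hdisjY s) (hUY s)
    rw [show k s = (Q {p : X × Fin C | xs p.1 = s}).toReal from rfl, this,
      ENNReal.toReal_sum (fun y _ => measure_ne_top Q _)]
  have hrval : ∀ y, r y = ∑ s, (Q (subpop xs s y)).toReal := by
    intro y
    have := meas_eq_sum_of_partition Q (fun s => MA s y) (hdisjS y) (hUS y)
    rw [show r y = (Q {p : X × Fin C | p.2 = y}).toReal from rfl, this,
      ENNReal.toReal_sum (fun s _ => measure_ne_top Q _)]
  have hksum : ∑ s, k s = 1 := by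
    have := meas_eq_sum_of_partition Q (fun s => MS s) hdisjSfull hUSfull
    rw [measure_univ] at this
    have := congrArg ENNReal.toReal this
    rw [ENNReal.toReal_one, ENNReal.toReal_sum (fun s _ => measure_ne_top Q _)] at this
    exact this.symm
  have hrsum : ∑ y, r y = 1 := by
    have := meas_eq_sum_of_partition Q (fun y => MY y) hdisjYfull hUYfull
    rw [measure_univ] at this
    have := congrArg ENNReal.toReal this
    rw [ENNReal.toReal_one, ENNReal.toReal_sum (fun y _ => measure_ne_top Q _)] at this
    exact this.symm
  -- positivity of k
  have hkpos : ∀ s, 0 < k s := by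
    intro s
    have hy : Nonempty (Fin C) := by
      rcases isEmpty_or_nonempty (Fin C) with hC | hC
      · exfalso
        have : (Set.univ : Set (X × Fin C)) = ∅ := by
          ext p; exact iff_of_false (fun _ => (hC.false p.2).elim) (hC.false p.2).elim
        have h1 : Q Set.univ = 0 := by rw [this, measure_empty]
        rw [measure_univ] at h1
        exact one_ne_zero h1
      · exact hC
    obtain ⟨y⟩ := hy
    rw [hkval s]
    refine Finset.sum_pos' (fun y' _ => ENNReal.toReal_nonneg) ⟨y, Finset.mem_univ y, ?_⟩
    exact ENNReal.toReal_pos (hQpos s y).ne' (measure_ne_top Q _)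
  -- part (i)
  have hfairR : ∀ (y : Fin C) (i j : Fin S),
      (k i)⁻¹ * (Q (subpop xs i y)).toReal = (k j)⁻¹ * (Q (subpop xs j y)).toReal := by
    intro y i j
    have hf := hfair y i j
    rw [cond_apply (MS i), cond_apply (MS j)] at hf
    have hii : ∀ s : Fin S, {p : X × Fin C | xs p.1 = s} ∩ {p | p.2 = y} = subpop xs s y :=
      fun s => rfl
    rw [hii i, hii j] at hf
    have := congrArg ENNReal.toReal hf
    rwa [ENNReal.toReal_mul, ENNReal.toReal_mul, ENNReal.toReal_inv, ENNReal.toReal_inv] at this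
  have hQeq : ∀ s y, (Q (subpop xs s y)).toReal = k s * r y := by
    intro s y
    have hterm : ∀ i : Fin S, (Q (subpop xs i y)).toReal
        = k i * ((k s)⁻¹ * (Q (subpop xs s y)).toReal) := by
      intro i
      rw [← hfairR y i s, ← mul_assoc, mul_inv_cancel₀ (hkpos i).ne', one_mul]
    have hr : r y = (k s)⁻¹ * (Q (subpop xs s y)).toReal := by
      rw [hrval y]
      calc ∑ i, (Q (subpop xs i y)).toReal
          = ∑ i, k i * ((k s)⁻¹ * (Q (subpop xs s y)).toReal) :=
            Finset.sum_congr rfl fun i _ => hterm i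
        _ = (∑ i, k i) * ((k s)⁻¹ * (Q (subpop xs s y)).toReal) := by
            rw [Finset.sum_mul]
        _ = (k s)⁻¹ * (Q (subpop xs s y)).toReal := by rw [hksum, one_mul]
    rw [hr, ← mul_assoc, mul_inv_cancel₀ (hkpos s).ne', one_mul]
  refine ⟨hQeq, fun s => ENNReal.toReal_nonneg, fun y => ENNReal.toReal_nonneg, hksum, hrsum,
    ?_, ?_⟩
  · -- part (iii): Hellinger bound
    set μ : Measure (X × Fin C) := P + Q with hμdef
    have hPac : P ≪ μ := Measure.absolutelyContinuous_of_le (Measure.le_add_right le_rfl)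
    have hQac : Q ≪ μ := Measure.absolutelyContinuous_of_le (Measure.le_add_left le_rfl)
    set f : X × Fin C → ℝ := fun z => ((P.rnDeriv μ) z).toReal with hfdef
    set g : X × Fin C → ℝ := fun z => ((Q.rnDeriv μ) z).toReal with hgdef
    have hf_nn : ∀ z, 0 ≤ f z := fun z => ENNReal.toReal_nonneg
    have hg_nn : ∀ z, 0 ≤ g z := fun z => ENNReal.toReal_nonneg
    have hf_meas : Measurable f := (Measure.measurable_rnDeriv P μ).ennreal_toReal
    have hg_meas : Measurable g := (Measure.measurable_rnDeriv Q μ).ennreal_toReal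
    have hf_int : Integrable f μ :=
      integrableOn_univ.mp (Measure.integrableOn_toReal_rnDeriv (measure_ne_top P Set.univ))
    have hg_int : Integrable g μ :=
      integrableOn_univ.mp (Measure.integrableOn_toReal_rnDeriv (measure_ne_top Q Set.univ))
    have hf_tot : ∫ z, f z ∂μ = 1 := by
      rw [Measure.integral_toReal_rnDeriv hPac, probReal_univ]
    have hg_tot : ∫ z, g z ∂μ = 1 := by
      rw [Measure.integral_toReal_rnDeriv hQac, probReal_univ]
    have hfg_int : Integrable (fun z => Real.sqrt (f z) * Real.sqrt (g z)) μ := by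
      refine ((hf_int.add hg_int).div_const 2).mono'
        ((hf_meas.sqrt.mul hg_meas.sqrt).aestronglyMeasurable) (ae_of_all _ fun z => ?_)
      rw [Real.norm_of_nonneg (mul_nonneg (Real.sqrt_nonneg _) (Real.sqrt_nonneg _))]
      exact sqrt_mul_sqrt_le_add_div_two (hf_nn z) (hg_nn z)
    have hexp : ∀ z, (Real.sqrt (f z) - Real.sqrt (g z)) ^ 2
        = f z + g z - 2 * (Real.sqrt (f z) * Real.sqrt (g z)) := by
      intro z
      have := Real.sq_sqrt (hf_nn z)
      have := Real.sq_sqrt (hg_nn z)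
      ring_nf
      nlinarith [Real.sq_sqrt (hf_nn z), Real.sq_sqrt (hg_nn z)]
    set I : ℝ := ∫ z, Real.sqrt (f z) * Real.sqrt (g z) ∂μ with hIdef
    have hint_eq : ∫ z, (Real.sqrt (f z) - Real.sqrt (g z)) ^ 2 ∂μ = 2 - 2 * I := by
      calc ∫ z, (Real.sqrt (f z) - Real.sqrt (g z)) ^ 2 ∂μ
          = ∫ z, (f z + g z - 2 * (Real.sqrt (f z) * Real.sqrt (g z))) ∂μ := by
            exact integral_congr_ae (ae_of_all _ hexp)
        _ = ∫ z, (f z + g z) ∂μ - ∫ z, 2 * (Real.sqrt (f z) * Real.sqrt (g z)) ∂μ :=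
            integral_sub (hf_int.add hg_int) (hfg_int.const_mul 2)
        _ = (∫ z, f z ∂μ + ∫ z, g z ∂μ) - 2 * I := by
            rw [integral_add hf_int hg_int, integral_const_mul]
        _ = 2 - 2 * I := by rw [hf_tot, hg_tot]; norm_num
    have hI_le_one : I ≤ 1 := by
      have h0 : 0 ≤ ∫ z, (Real.sqrt (f z) - Real.sqrt (g z)) ^ 2 ∂μ :=
        integral_nonneg fun z => sq_nonneg _
      rw [hint_eq] at h0; linarith
    have hρ0 : 0 ≤ ρ := le_trans (Real.sqrt_nonneg _) hdist
    have hHval : hellinger P Q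
        = Real.sqrt ((1 / 2) * ∫ z, (Real.sqrt (f z) - Real.sqrt (g z)) ^ 2 ∂μ) := rfl
    have hH2 : (hellinger P Q) ^ 2 = 1 - I := by
      rw [hHval, hint_eq, Real.sq_sqrt (by linarith)]
      ring
    have hI_ge : 1 - ρ ^ 2 ≤ I := by
      have : (hellinger P Q) ^ 2 ≤ ρ ^ 2 := pow_le_pow_left₀ (Real.sqrt_nonneg _) hdist 2
      rw [hH2] at this; linarith
    -- decompose I over the subpopulations and bound each piece by Cauchy–Schwarz
    have hIdecomp : I = ∑ i : Fin S × Fin C,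
        ∫ z in subpop xs i.1 i.2, Real.sqrt (f z) * Real.sqrt (g z) ∂μ :=
      integral_eq_sum_of_partition (A := fun i : Fin S × Fin C => subpop xs i.1 i.2) μ
        (fun i => MA i.1 i.2) hdisjP hUP hfg_int
    have hCS : ∀ s y, ∫ z in subpop xs s y, Real.sqrt (f z) * Real.sqrt (g z) ∂μ
        ≤ Real.sqrt ((P (subpop xs s y)).toReal * k s * r y) := by
      intro s y
      set A := subpop xs s y
      have hconj : Real.HolderConjugate 2 2 := Real.HolderConjugate.two_two
      have hsqf : ∀ z, Real.sqrt (f z) ^ (2 : ℕ) = f z := fun z => Real.sq_sqrt (hf_nn z)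
      have hsqg : ∀ z, Real.sqrt (g z) ^ (2 : ℕ) = g z := fun z => Real.sq_sqrt (hg_nn z)
      have hPA : IntegrableOn f A μ := Measure.integrableOn_toReal_rnDeriv (measure_ne_top P A)
      have hQA : IntegrableOn g A μ := Measure.integrableOn_toReal_rnDeriv (measure_ne_top Q A)
      have hmemf : MemLp (fun z => Real.sqrt (f z)) (ENNReal.ofReal 2) (μ.restrict A) := by
        rw [show ENNReal.ofReal 2 = 2 by norm_num]
        rw [memLp_two_iff_integrable_sq (hf_meas.sqrt.aestronglyMeasurable)]
        refine hPA.congr (ae_of_all _ fun z => (hsqf z).symm)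
      have hmemg : MemLp (fun z => Real.sqrt (g z)) (ENNReal.ofReal 2) (μ.restrict A) := by
        rw [show ENNReal.ofReal 2 = 2 by norm_num]
        rw [memLp_two_iff_integrable_sq (hg_meas.sqrt.aestronglyMeasurable)]
        refine hQA.congr (ae_of_all _ fun z => (hsqg z).symm)
      have hcs := integral_mul_le_Lp_mul_Lq_of_nonneg (μ := μ.restrict A) hconj
        (ae_of_all _ fun z => Real.sqrt_nonneg (f z))
        (ae_of_all _ fun z => Real.sqrt_nonneg (g z)) hmemf hmemg
      have hf2 : ∫ z in A, Real.sqrt (f z) ^ (2 : ℝ) ∂μ = (P A).toReal := by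
        have he : ∀ z : X × Fin C, Real.sqrt (f z) ^ (2 : ℝ) = f z := fun z => by
          rw [show ((2 : ℝ) = ((2 : ℕ) : ℝ)) by norm_num, Real.rpow_natCast]; exact hsqf z
        rw [integral_congr_ae (ae_of_all _ fun z => he z)]
        exact Measure.setIntegral_toReal_rnDeriv hPac A
      have hg2 : ∫ z in A, Real.sqrt (g z) ^ (2 : ℝ) ∂μ = (Q A).toReal := by
        have he : ∀ z : X × Fin C, Real.sqrt (g z) ^ (2 : ℝ) = g z := fun z => by
          rw [show ((2 : ℝ) = ((2 : ℕ) : ℝ)) by norm_num, Real.rpow_natCast]; exact hsqg z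
        rw [integral_congr_ae (ae_of_all _ fun z => he z)]
        exact Measure.setIntegral_toReal_rnDeriv hQac A
      rw [hf2, hg2] at hcs
      calc ∫ z in A, Real.sqrt (f z) * Real.sqrt (g z) ∂μ
          ≤ (P A).toReal ^ ((1 : ℝ) / 2) * (Q A).toReal ^ ((1 : ℝ) / 2) := hcs
        _ = Real.sqrt ((P A).toReal * (Q A).toReal) := by
            rw [← Real.sqrt_eq_rpow, ← Real.sqrt_eq_rpow,
              ← Real.sqrt_mul ENNReal.toReal_nonneg]
        _ = Real.sqrt ((P A).toReal * k s * r y) := by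
            rw [hQeq s y, mul_assoc]
    calc 1 - ρ ^ 2 ≤ I := hI_ge
      _ = ∑ i : Fin S × Fin C,
          ∫ z in subpop xs i.1 i.2, Real.sqrt (f z) * Real.sqrt (g z) ∂μ := hIdecomp
      _ ≤ ∑ i : Fin S × Fin C,
          Real.sqrt ((P (subpop xs i.1 i.2)).toReal * k i.1 * r i.2) :=
            Finset.sum_le_sum fun i _ => hCS i.1 i.2
      _ = ∑ s, ∑ y, Real.sqrt ((P (subpop xs s y)).toReal * k s * r y) := by
            rw [Fintype.sum_prod_type]
  · -- part (iv)
    intro h hmeas ℓ hℓ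
    have hFmeas : Measurable (fun p : X × Fin C => ℓ (h p.1) p.2) :=
      (measurable_of_countable (fun c : Fin C × Fin C => ℓ c.1 c.2)).comp
        ((hmeas.comp measurable_fst).prodMk measurable_snd)
    have hFint : Integrable (fun p : X × Fin C => ℓ (h p.1) p.2) Q := by
      refine (integrable_const (∑ a, ∑ b, ℓ a b)).mono' hFmeas.aestronglyMeasurable
        (ae_of_all _ fun p => ?_)
      rw [Real.norm_of_nonneg (hℓ _ _)]
      calc ℓ (h p.1) p.2 ≤ ∑ b, ℓ (h p.1) b :=
            Finset.single_le_sum (f := fun b => ℓ (h p.1) b) (fun b _ => hℓ _ _)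
              (Finset.mem_univ p.2)
        _ ≤ ∑ a, ∑ b, ℓ a b :=
            Finset.single_le_sum (f := fun a => ∑ b, ℓ a b)
              (fun a _ => Finset.sum_nonneg fun b _ => hℓ _ _) (Finset.mem_univ (h p.1))
    have hterm : ∀ s y, k s * r y * (∫ p, ℓ (h p.1) p.2 ∂(P[|subpop xs s y]))
        = ∫ p in subpop xs s y, ℓ (h p.1) p.2 ∂Q := by
      intro s y
      rw [← hcond s y]
      have : (Q[|subpop xs s y]) = (Q (subpop xs s y))⁻¹ • Q.restrict (subpop xs s y) := rfl
      rw [this, integral_smul_measure, ENNReal.toReal_inv, hQeq s y, smul_eq_mul, ← mul_assoc,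
        mul_inv_cancel₀, one_mul]
      exact (mul_pos (hkpos s) (by
        rcases (hQeq s y) ▸ ENNReal.toReal_pos (hQpos s y).ne' (measure_ne_top Q _) with hp
        nlinarith [hkpos s])).ne'
    calc ∫ p, ℓ (h p.1) p.2 ∂Q
        = ∑ i : Fin S × Fin C, ∫ p in subpop xs i.1 i.2, ℓ (h p.1) p.2 ∂Q :=
          integral_eq_sum_of_partition (A := fun i : Fin S × Fin C => subpop xs i.1 i.2) Q
            (fun i => MA i.1 i.2) hdisjP hUP hFint
      _ = ∑ s, ∑ y, ∫ p in subpop xs s y, ℓ (h p.1) p.2 ∂Q := by rw [Fintype.sum_prod_type]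
      _ = ∑ s, ∑ y, k s * r y * ∫ p, ℓ (h p.1) p.2 ∂(P[|subpop xs s y]) :=
          Finset.sum_congr rfl fun s _ => Finset.sum_congr rfl fun y _ => (hterm s y).symm
end

section
/- (Tight fairness certificate under general shifting.) Let P be a distribution on X × [C] with p_{s,y} := Pr_P[X_s = s, Y = y] > 0 for all s, y, h a classifier, and ℓ a nonnegative loss. For any ρ > 0, the supremum of E_{(X,Y)∼Q}[ℓ(h(X),Y)] over all fair base rate distributions Q with H(P,Q) ≤ ρ equals the supremum of Σ_{s=1}^S Σ_{y=1}^C k_s r_y E_{(X,Y)∼Q_{s,y}}[ℓ(h(X),Y)] over all choices of: k ∈ ℝ^S_{≥0} with Σ_s k_s = 1, r ∈ ℝ^C_{≥0} with Σ_y r_y = 1, probability distributions Q_{s,y} each supported on {(x,y') : x_s = s, y' = y}, and reals ρ_{s,y} ∈ [0,1] satisfying H(P_{s,y}, Q_{s,y}) ≤ ρ_{s,y} and Σ_{s,y} √(p_{s,y} k_s r_y)(1 − ρ_{s,y}²) ≥ 1 − ρ². -/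
open MeasureTheory ProbabilityTheory
open scoped ENNReal

section Aux

variable {Z : Type*} [MeasurableSpace Z]

/-- The pointwise geometric mean of the densities of `P` and `Q` with respect to `ν`. -/
noncomputable def sg (P Q ν : Measure Z) (z : Z) : ℝ :=
  Real.sqrt ((P.rnDeriv ν z).toReal * (Q.rnDeriv ν z).toReal)

lemma sg_nonneg (P Q ν : Measure Z) (z : Z) : 0 ≤ sg P Q ν z := Real.sqrt_nonneg _

lemma measurable_sg (P Q ν : Measure Z) : Measurable (sg P Q ν) :=
  (((Measure.measurable_rnDeriv P ν).ennreal_toReal.mul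
    (Measure.measurable_rnDeriv Q ν).ennreal_toReal)).sqrt

lemma sg_le_one (P Q : Measure Z) [IsFiniteMeasure P] [IsFiniteMeasure Q] : ∀ᵐ z ∂(P + Q), sg P Q (P + Q) z ≤ 1 := by
  have h1 : P.rnDeriv (P + Q) ≤ᵐ[P + Q] 1 :=
    Measure.rnDeriv_le_one_of_le (Measure.le_add_right le_rfl)
  have h2 : Q.rnDeriv (P + Q) ≤ᵐ[P + Q] 1 :=
    Measure.rnDeriv_le_one_of_le (Measure.le_add_left le_rfl)
  filter_upwards [h1, h2] with z hz1 hz2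
  have e1 : ((P.rnDeriv (P + Q)) z).toReal ≤ 1 := by
    simpa using ENNReal.toReal_mono (by simp) hz1
  have e2 : ((Q.rnDeriv (P + Q)) z).toReal ≤ 1 := by
    simpa using ENNReal.toReal_mono (by simp) hz2
  have := mul_le_one₀ e1 ENNReal.toReal_nonneg e2
  calc sg P Q (P + Q) z ≤ Real.sqrt 1 := Real.sqrt_le_sqrt this
  _ = 1 := Real.sqrt_one

lemma integrable_sg (P Q : Measure Z) [IsFiniteMeasure P] [IsFiniteMeasure Q] :
    Integrable (sg P Q (P + Q)) (P + Q) := by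
  refine ⟨(measurable_sg P Q _).aestronglyMeasurable, ?_⟩
  refine HasFiniteIntegral.of_bounded (C := 1) ?_
  filter_upwards [sg_le_one P Q] with z hz
  rw [Real.norm_eq_abs, abs_of_nonneg (sg_nonneg _ _ _ _)]
  exact hz

/-- The Bhattacharyya coefficient. -/
noncomputable def BC (P Q : Measure Z) : ℝ := ∫ z, sg P Q (P + Q) z ∂(P + Q)

lemma BC_nonneg (P Q : Measure Z) : 0 ≤ BC P Q :=
  integral_nonneg fun z => sg_nonneg P Q _ z

lemma hellinger_nonneg (P Q : Measure Z) : 0 ≤ hellinger P Q := Real.sqrt_nonneg _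

lemma hellinger_sq (P Q : Measure Z) [IsProbabilityMeasure P] [IsProbabilityMeasure Q] :
    hellinger P Q ^ 2 = 1 - BC P Q := by
  have hPac : P ≪ P + Q := (Measure.le_add_right le_rfl).absolutelyContinuous
  have hQac : Q ≪ P + Q := (Measure.le_add_left le_rfl).absolutelyContinuous
  have hiP : Integrable (fun z => (P.rnDeriv (P + Q) z).toReal) (P + Q) :=
    Measure.integrable_toReal_rnDeriv
  have hiQ : Integrable (fun z => (Q.rnDeriv (P + Q) z).toReal) (P + Q) :=
    Measure.integrable_toReal_rnDeriv
  have hkey : ∀ z, (Real.sqrt ((P.rnDeriv (P + Q) z).toReal)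
        - Real.sqrt ((Q.rnDeriv (P + Q) z).toReal)) ^ 2
      = (P.rnDeriv (P + Q) z).toReal + (Q.rnDeriv (P + Q) z).toReal - 2 * sg P Q (P + Q) z := by
    intro z
    have e1 := Real.sq_sqrt (ENNReal.toReal_nonneg :
      (0:ℝ) ≤ (P.rnDeriv (P + Q) z).toReal)
    have e2 := Real.sq_sqrt (ENNReal.toReal_nonneg :
      (0:ℝ) ≤ (Q.rnDeriv (P + Q) z).toReal)
    have e3 : sg P Q (P + Q) z
        = Real.sqrt ((P.rnDeriv (P + Q) z).toReal) * Real.sqrt ((Q.rnDeriv (P + Q) z).toReal) :=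
      Real.sqrt_mul ENNReal.toReal_nonneg _
    rw [sub_sq, e1, e2, e3]; ring
  have hint : ∫ z, (Real.sqrt ((P.rnDeriv (P + Q) z).toReal)
        - Real.sqrt ((Q.rnDeriv (P + Q) z).toReal)) ^ 2 ∂(P + Q) = 2 - 2 * BC P Q := by
    calc ∫ z, (Real.sqrt ((P.rnDeriv (P + Q) z).toReal)
          - Real.sqrt ((Q.rnDeriv (P + Q) z).toReal)) ^ 2 ∂(P + Q)
        = ∫ z, ((P.rnDeriv (P + Q) z).toReal + (Q.rnDeriv (P + Q) z).toReal
            - 2 * sg P Q (P + Q) z) ∂(P + Q) := by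
          exact integral_congr_ae (Filter.Eventually.of_forall hkey)
      _ = (∫ z, (P.rnDeriv (P + Q) z).toReal ∂(P + Q))
            + (∫ z, (Q.rnDeriv (P + Q) z).toReal ∂(P + Q))
            - 2 * ∫ z, sg P Q (P + Q) z ∂(P + Q) := by
          have hiPQ : Integrable (fun z => (P.rnDeriv (P + Q) z).toReal
              + (Q.rnDeriv (P + Q) z).toReal) (P + Q) := hiP.add hiQ
          rw [integral_sub hiPQ ((integrable_sg P Q).const_mul 2),
            integral_add hiP hiQ, integral_const_mul]
      _ = 2 - 2 * BC P Q := by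
          rw [Measure.integral_toReal_rnDeriv hPac, Measure.integral_toReal_rnDeriv hQac]
          simp [BC]; ring
  unfold hellinger
  rw [Real.sq_sqrt, hint]
  · ring
  · rw [hint]
    have : 0 ≤ ∫ z, (Real.sqrt ((P.rnDeriv (P + Q) z).toReal)
        - Real.sqrt ((Q.rnDeriv (P + Q) z).toReal)) ^ 2 ∂(P + Q) :=
      integral_nonneg fun z => sq_nonneg _
    rw [hint] at this
    linarith

lemma BC_le_one (P Q : Measure Z) [IsProbabilityMeasure P] [IsProbabilityMeasure Q] :
    BC P Q ≤ 1 := by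
  have := hellinger_sq P Q
  nlinarith [sq_nonneg (hellinger P Q)]

lemma hellinger_le_one (P Q : Measure Z) [IsProbabilityMeasure P] [IsProbabilityMeasure Q] :
    hellinger P Q ≤ 1 := by
  have h1 : hellinger P Q ^ 2 ≤ 1 := by
    rw [hellinger_sq]; linarith [BC_nonneg P Q]
  nlinarith [hellinger_nonneg P Q]

lemma hellinger_self (P : Measure Z) : hellinger P P = 0 := by
  unfold hellinger
  simp

/-- `BC` computed with an arbitrary finite reference measure. -/
lemma BC_eq_integral (P Q ν : Measure Z) [IsFiniteMeasure P] [IsFiniteMeasure Q]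
    [IsFiniteMeasure ν] (hP : P ≪ ν) (hQ : Q ≪ ν) :
    BC P Q = ∫ z, sg P Q ν z ∂ν := by
  have hPac : P ≪ P + Q := (Measure.le_add_right le_rfl).absolutelyContinuous
  have hQac : Q ≪ P + Q := (Measure.le_add_left le_rfl).absolutelyContinuous
  have hμν : P + Q ≪ ν := hP.add_left hQ
  have h1 := Measure.rnDeriv_mul_rnDeriv (κ := ν) hPac
  have h2 := Measure.rnDeriv_mul_rnDeriv (κ := ν) hQac
  have hstep : ∫ z, sg P Q ν z ∂ν
      = ∫ z, ((P + Q).rnDeriv ν z).toReal • sg P Q (P + Q) z ∂ν := by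
    refine integral_congr_ae ?_
    filter_upwards [h1, h2] with z hz1 hz2
    have hz1' : (P.rnDeriv ν z).toReal
        = (P.rnDeriv (P + Q) z).toReal * (((P + Q).rnDeriv ν) z).toReal := by
      rw [← hz1]; simp [ENNReal.toReal_mul]
    have hz2' : (Q.rnDeriv ν z).toReal
        = (Q.rnDeriv (P + Q) z).toReal * (((P + Q).rnDeriv ν) z).toReal := by
      rw [← hz2]; simp [ENNReal.toReal_mul]
    unfold sg
    rw [hz1', hz2']
    rw [show (P.rnDeriv (P + Q) z).toReal * (((P + Q).rnDeriv ν) z).toReal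
        * ((Q.rnDeriv (P + Q) z).toReal * (((P + Q).rnDeriv ν) z).toReal)
        = ((P.rnDeriv (P + Q) z).toReal * (Q.rnDeriv (P + Q) z).toReal)
          * ((((P + Q).rnDeriv ν) z).toReal * (((P + Q).rnDeriv ν) z).toReal) by ring,
      Real.sqrt_mul (by positivity), Real.sqrt_mul_self ENNReal.toReal_nonneg]
    simp [mul_comm]
  rw [hstep, integral_rnDeriv_smul hμν]
  rfl


/-- If a set has zero `P`-measure, the density of `P` vanishes a.e. on it. -/
lemma sg_zero_on_null_left (P Q : Measure Z) [IsFiniteMeasure P] [IsFiniteMeasure Q]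
    {A : Set Z} (hA : MeasurableSet A) (h0 : P A = 0) :
    ∫ z in A, sg P Q (P + Q) z ∂(P + Q) = 0 := by
  have hPac : P ≪ P + Q := (Measure.le_add_right le_rfl).absolutelyContinuous
  have hzero : ∫ z in A, (P.rnDeriv (P + Q) z).toReal ∂(P + Q) = 0 := by
    rw [Measure.setIntegral_toReal_rnDeriv hPac A, measureReal_def, h0]; simp
  have hint : IntegrableOn (fun z => (P.rnDeriv (P + Q) z).toReal) A (P + Q) :=
    Measure.integrable_toReal_rnDeriv.integrableOn
  have hae : (fun z => (P.rnDeriv (P + Q) z).toReal) =ᵐ[(P + Q).restrict A] 0 := by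
    rw [← integral_eq_zero_iff_of_nonneg (fun z => ENNReal.toReal_nonneg) hint] at *
    exact hzero
  have : ∫ z in A, sg P Q (P + Q) z ∂(P + Q) = ∫ z in A, (0:ℝ) ∂(P + Q) := by
    refine integral_congr_ae ?_
    filter_upwards [hae] with z hz
    unfold sg
    simp only [Pi.zero_apply] at hz ⊢
    rw [hz, zero_mul, Real.sqrt_zero]
  simpa using this

lemma sg_zero_on_null_right (P Q : Measure Z) [IsFiniteMeasure P] [IsFiniteMeasure Q]
    {A : Set Z} (hA : MeasurableSet A) (h0 : Q A = 0) :
    ∫ z in A, sg P Q (P + Q) z ∂(P + Q) = 0 := by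
  have hQac : Q ≪ P + Q := (Measure.le_add_left le_rfl).absolutelyContinuous
  have hzero : ∫ z in A, (Q.rnDeriv (P + Q) z).toReal ∂(P + Q) = 0 := by
    rw [Measure.setIntegral_toReal_rnDeriv hQac A, measureReal_def, h0]; simp
  have hint : IntegrableOn (fun z => (Q.rnDeriv (P + Q) z).toReal) A (P + Q) :=
    Measure.integrable_toReal_rnDeriv.integrableOn
  have hae : (fun z => (Q.rnDeriv (P + Q) z).toReal) =ᵐ[(P + Q).restrict A] 0 := by
    rw [← integral_eq_zero_iff_of_nonneg (fun z => ENNReal.toReal_nonneg) hint] at *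
    exact hzero
  have : ∫ z in A, sg P Q (P + Q) z ∂(P + Q) = ∫ z in A, (0:ℝ) ∂(P + Q) := by
    refine integral_congr_ae ?_
    filter_upwards [hae] with z hz
    unfold sg
    simp only [Pi.zero_apply] at hz ⊢
    rw [hz, mul_zero, Real.sqrt_zero]
  simpa using this

/-- Key piece lemma: the part of the Bhattacharyya integral over a set `A` equals
`√(P A · Q A)` times the Bhattacharyya coefficient of the normalized restrictions. -/
lemma BC_restrict (P Q : Measure Z) [IsProbabilityMeasure P] [IsProbabilityMeasure Q]
    {A : Set Z} (hA : MeasurableSet A)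
    (P' Q' : Measure Z) [IsProbabilityMeasure P'] [IsProbabilityMeasure Q']
    (hP' : P.restrict A = (P A) • P') (hQ' : Q.restrict A = (Q A) • Q') :
    ∫ z in A, sg P Q (P + Q) z ∂(P + Q)
      = Real.sqrt ((P A).toReal * (Q A).toReal) * BC P' Q' := by
  by_cases ha0 : P A = 0
  · rw [sg_zero_on_null_left P Q hA ha0, ha0]
    simp
  by_cases hb0 : Q A = 0
  · rw [sg_zero_on_null_right P Q hA hb0, hb0]
    simp
  have haT : (P A) ≠ ∞ := measure_ne_top _ _
  have hbT : (Q A) ≠ ∞ := measure_ne_top _ _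
  have haTpos : 0 < (P A).toReal := ENNReal.toReal_pos ha0 haT
  have hbTpos : 0 < (Q A).toReal := ENNReal.toReal_pos hb0 hbT
  have hP'eq : P' = (P A)⁻¹ • P.restrict A := by
    rw [hP', smul_smul, ENNReal.inv_mul_cancel ha0 haT, one_smul]
  have hQ'eq : Q' = (Q A)⁻¹ • Q.restrict A := by
    rw [hQ', smul_smul, ENNReal.inv_mul_cancel hb0 hbT, one_smul]
  have hPac : P ≪ P + Q := (Measure.le_add_right le_rfl).absolutelyContinuous
  have hQac : Q ≪ P + Q := (Measure.le_add_left le_rfl).absolutelyContinuous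
  have hP'ac : P' ≪ P + Q := by
    rw [hP'eq]
    exact (Measure.smul_absolutelyContinuous.trans Measure.restrict_le_self.absolutelyContinuous).trans hPac
  have hQ'ac : Q' ≪ P + Q := by
    rw [hQ'eq]
    exact (Measure.smul_absolutelyContinuous.trans Measure.restrict_le_self.absolutelyContinuous).trans hQac
  have hf' : P'.rnDeriv (P + Q) =ᵐ[P + Q] (P A)⁻¹ • A.indicator (P.rnDeriv (P + Q)) := by
    rw [hP'eq]
    calc ((P A)⁻¹ • P.restrict A).rnDeriv (P + Q)
        =ᵐ[P + Q] (P A)⁻¹ • (P.restrict A).rnDeriv (P + Q) :=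
          Measure.rnDeriv_smul_left_of_ne_top _ _ (by simpa using ha0)
      _ =ᵐ[P + Q] (P A)⁻¹ • A.indicator (P.rnDeriv (P + Q)) := by
          filter_upwards [Measure.rnDeriv_restrict P (P + Q) hA] with z hz
          simp only [Pi.smul_apply, hz]
  have hg' : Q'.rnDeriv (P + Q) =ᵐ[P + Q] (Q A)⁻¹ • A.indicator (Q.rnDeriv (P + Q)) := by
    rw [hQ'eq]
    calc ((Q A)⁻¹ • Q.restrict A).rnDeriv (P + Q)
        =ᵐ[P + Q] (Q A)⁻¹ • (Q.restrict A).rnDeriv (P + Q) :=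
          Measure.rnDeriv_smul_left_of_ne_top _ _ (by simpa using hb0)
      _ =ᵐ[P + Q] (Q A)⁻¹ • A.indicator (Q.rnDeriv (P + Q)) := by
          filter_upwards [Measure.rnDeriv_restrict Q (P + Q) hA] with z hz
          simp only [Pi.smul_apply, hz]
  have hBC : BC P' Q' = ∫ z, sg P' Q' (P + Q) z ∂(P + Q) :=
    BC_eq_integral P' Q' (P + Q) hP'ac hQ'ac
  have hptws : (fun z => sg P' Q' (P + Q) z)
      =ᵐ[P + Q] A.indicator (fun z =>
        (Real.sqrt ((P A).toReal * (Q A).toReal))⁻¹ * sg P Q (P + Q) z) := by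
    filter_upwards [hf', hg'] with z hz1 hz2
    unfold sg
    rw [hz1, hz2]
    simp only [Pi.smul_apply, smul_eq_mul]
    by_cases hzA : z ∈ A
    · rw [Set.indicator_of_mem hzA, Set.indicator_of_mem hzA, Set.indicator_of_mem hzA]
      rw [ENNReal.toReal_mul, ENNReal.toReal_mul]
      rw [show (P A)⁻¹.toReal * (P.rnDeriv (P + Q) z).toReal
          * ((Q A)⁻¹.toReal * (Q.rnDeriv (P + Q) z).toReal)
          = ((P A)⁻¹.toReal * (Q A)⁻¹.toReal)
            * ((P.rnDeriv (P + Q) z).toReal * (Q.rnDeriv (P + Q) z).toReal) by ring]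
      rw [Real.sqrt_mul (by positivity)]
      congr 1
      rw [ENNReal.toReal_inv, ENNReal.toReal_inv, ← mul_inv, Real.sqrt_inv]
    · rw [Set.indicator_of_notMem hzA, Set.indicator_of_notMem hzA,
        Set.indicator_of_notMem hzA]
      simp
  have : BC P' Q' = (Real.sqrt ((P A).toReal * (Q A).toReal))⁻¹
      * ∫ z in A, sg P Q (P + Q) z ∂(P + Q) := by
    rw [hBC, integral_congr_ae hptws, integral_indicator hA, integral_const_mul]
  rw [this]
  have hs : Real.sqrt ((P A).toReal * (Q A).toReal) ≠ 0 := by positivity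
  field_simp

end Aux

section Partition

variable {X : Type*} [MeasurableSpace X] {S C : ℕ} {xs : X → Fin S}

lemma measurableSet_subpop (hxs : Measurable xs) (s : Fin S) (y : Fin C) :
    MeasurableSet (subpop xs s y) := by
  have : subpop xs s y = ((fun p : X × Fin C => xs p.1) ⁻¹' {s})
      ∩ ((fun p : X × Fin C => p.2) ⁻¹' {y}) := by
    ext p; simp [subpop]
  rw [this]
  exact ((hxs.comp measurable_fst) (measurableSet_singleton s)).inter
    (measurable_snd (measurableSet_singleton y))

lemma subpop_disjoint :
    Pairwise (Function.onFun Disjoint fun sy : Fin S × Fin C => subpop xs sy.1 sy.2) := by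
  intro a b hab
  rw [Function.onFun, Set.disjoint_left]
  rintro p ⟨h1, h2⟩ ⟨h3, h4⟩
  exact hab (Prod.ext (h1.symm.trans h3) (h2.symm.trans h4))

omit [MeasurableSpace X] in
lemma iUnion_subpop : (⋃ sy : Fin S × Fin C, subpop xs sy.1 sy.2) = Set.univ := by
  ext p
  simp only [Set.mem_iUnion, Set.mem_univ, iff_true]
  exact ⟨(xs p.1, p.2), rfl, rfl⟩

lemma sum_measure_subpop (hxs : Measurable xs) (Q : Measure (X × Fin C)) :
    ∑ s, ∑ y, Q (subpop xs s y) = Q Set.univ := by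
  rw [← iUnion_subpop (xs := xs), measure_iUnion subpop_disjoint
    (fun sy => measurableSet_subpop hxs sy.1 sy.2), tsum_fintype, Fintype.sum_prod_type]

lemma integral_partition (hxs : Measurable xs) (Q : Measure (X × Fin C))
    {F : X × Fin C → ℝ} (hF : Integrable F Q) :
    ∫ p, F p ∂Q = ∑ s, ∑ y, ∫ p in subpop xs s y, F p ∂Q := by
  rw [← setIntegral_univ, ← iUnion_subpop (xs := xs),
    integral_iUnion (s := fun sy : Fin S × Fin C => subpop xs sy.1 sy.2) (fun sy => measurableSet_subpop hxs sy.1 sy.2) subpop_disjoint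
      (by rw [iUnion_subpop]; exact hF.integrableOn),
    tsum_fintype, Fintype.sum_prod_type]

/-- restriction of a measure to a set equals measure-of-set • conditional measure. -/
lemma restrict_eq_smul_cond (Q : Measure (X × Fin C)) (A : Set (X × Fin C))
    (hQA : Q A ≠ ∞) : Q.restrict A = (Q A) • (Q[|A]) := by
  by_cases h0 : Q A = 0
  · rw [Measure.restrict_eq_zero.mpr h0, ProbabilityTheory.cond, h0]
    simp [Measure.restrict_eq_zero.mpr h0]
  · rw [ProbabilityTheory.cond, smul_smul, ENNReal.mul_inv_cancel h0 hQA, one_smul]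

lemma sum_measure_labels (Q : Measure (X × Fin C)) [IsProbabilityMeasure Q] :
    ∑ y, Q {p : X × Fin C | p.2 = y} = 1 := by
  have hu : (⋃ y : Fin C, {p : X × Fin C | p.2 = y}) = Set.univ := by
    ext p; simp
  have hd : Pairwise (Function.onFun Disjoint fun y : Fin C => {p : X × Fin C | p.2 = y}) := by
    intro a b hab
    rw [Function.onFun, Set.disjoint_left]
    rintro p h1 h2
    exact hab (h1.symm.trans h2)
  have := measure_iUnion (μ := Q) hd
    (fun y => measurable_snd (measurableSet_singleton y))
  rw [hu, measure_univ, tsum_fintype] at this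
  exact this.symm

lemma sum_measure_groups (hxs : Measurable xs) (Q : Measure (X × Fin C))
    [IsProbabilityMeasure Q] :
    ∑ s, Q {p : X × Fin C | xs p.1 = s} = 1 := by
  have hu : (⋃ s : Fin S, {p : X × Fin C | xs p.1 = s}) = Set.univ := by
    ext p; simp
  have hd : Pairwise (Function.onFun Disjoint fun s : Fin S =>
      {p : X × Fin C | xs p.1 = s}) := by
    intro a b hab
    rw [Function.onFun, Set.disjoint_left]
    rintro p h1 h2
    exact hab (h1.symm.trans h2)
  have := measure_iUnion (μ := Q) hd
    (fun s => (hxs.comp measurable_fst) (measurableSet_singleton s))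
  rw [hu, measure_univ, tsum_fintype] at this
  exact this.symm

lemma cond_compl_zero (Q : Measure (X × Fin C)) (A : Set (X × Fin C))
    (hA : MeasurableSet A) : (Q[|A]) Aᶜ = 0 := by
  rw [ProbabilityTheory.cond_apply hA, Set.inter_compl_self]
  simp

lemma meas_supset_one {μ : Measure (X × Fin C)} [IsProbabilityMeasure μ]
    {A T : Set (X × Fin C)} (h0 : μ Aᶜ = 0) (hAT : A ⊆ T) : μ T = 1 := by
  refine le_antisymm prob_le_one ?_
  calc (1 : ℝ≥0∞) = μ Set.univ := (measure_univ).symm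
    _ ≤ μ A + μ Aᶜ := by rw [← Set.union_compl_self A]; exact measure_union_le A Aᶜ
    _ = μ A := by rw [h0, add_zero]
    _ ≤ μ T := measure_mono hAT

lemma meas_disj_zero {μ : Measure (X × Fin C)}
    {A T : Set (X × Fin C)} (h0 : μ Aᶜ = 0) (hAT : T ⊆ Aᶜ) : μ T = 0 :=
  measure_mono_null hAT h0

/-- The Hellinger affinity decomposes along a partition into subpopulations. -/
lemma hellinger_partition (hxs : Measurable xs) (P Q : Measure (X × Fin C))
    [IsProbabilityMeasure P] [IsProbabilityMeasure Q]
    (Pc Qc : Fin S → Fin C → Measure (X × Fin C))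
    (hPp : ∀ s y, IsProbabilityMeasure (Pc s y)) (hQp : ∀ s y, IsProbabilityMeasure (Qc s y))
    (hPr : ∀ s y, P.restrict (subpop xs s y) = (P (subpop xs s y)) • Pc s y)
    (hQr : ∀ s y, Q.restrict (subpop xs s y) = (Q (subpop xs s y)) • Qc s y) :
    1 - hellinger P Q ^ 2 = ∑ s, ∑ y,
      Real.sqrt ((P (subpop xs s y)).toReal * (Q (subpop xs s y)).toReal)
        * (1 - hellinger (Pc s y) (Qc s y) ^ 2) := by
  rw [hellinger_sq]
  have hpart : BC P Q = ∑ s, ∑ y, ∫ p in subpop xs s y, sg P Q (P + Q) p ∂(P + Q) :=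
    integral_partition hxs _ (integrable_sg P Q)
  rw [show (1 : ℝ) - (1 - BC P Q) = BC P Q by ring, hpart]
  refine Finset.sum_congr rfl fun s _ => Finset.sum_congr rfl fun y _ => ?_
  haveI := hPp s y; haveI := hQp s y
  rw [BC_restrict P Q (measurableSet_subpop hxs s y) _ _ (hPr s y) (hQr s y), hellinger_sq]
  ring

end Partition

section Mixture

variable {X : Type*} [MeasurableSpace X] {S C : ℕ}

/-- The mixture measure `∑ kk s · rr y · Qs' s y` and its basic properties. -/
lemma mixture_facts (xs : X → Fin S) (hxs : Measurable xs)
    (P : Measure (X × Fin C)) [IsProbabilityMeasure P]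
    (hpos : ∀ s y, 0 < P (subpop xs s y))
    (F : X × Fin C → ℝ) (hFm : Measurable F) {M : ℝ} (hF0 : ∀ p, 0 ≤ F p) (hFM : ∀ p, F p ≤ M)
    (kk : Fin S → ℝ) (rr : Fin C → ℝ) (hkk : ∀ s, 0 ≤ kk s) (hrr : ∀ y, 0 ≤ rr y)
    (hkk1 : ∑ s, kk s = 1) (hrr1 : ∑ y, rr y = 1)
    (Qs' : Fin S → Fin C → Measure (X × Fin C))
    (hQp : ∀ s y, IsProbabilityMeasure (Qs' s y))
    (hsupp : ∀ s y, Qs' s y (subpop xs s y)ᶜ = 0) :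
    ∃ Qm : Measure (X × Fin C), IsProbabilityMeasure Qm ∧
      ((∀ s, 0 < kk s) → IsFairBaseRate xs Qm) ∧
      (∫ p, F p ∂Qm = ∑ s, ∑ y, kk s * rr y * ∫ p, F p ∂(Qs' s y)) ∧
      (1 - hellinger P Qm ^ 2 = ∑ s, ∑ y,
        Real.sqrt ((P (subpop xs s y)).toReal * (kk s * rr y))
          * (1 - hellinger (P[|subpop xs s y]) (Qs' s y) ^ 2)) := by
  classical
  haveI : ∀ s y, IsProbabilityMeasure (Qs' s y) := hQp
  set Qm : Measure (X × Fin C) :=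
    ∑ sy : Fin S × Fin C, (ENNReal.ofReal (kk sy.1 * rr sy.2)) • Qs' sy.1 sy.2 with hQm
  have happly : ∀ T : Set (X × Fin C),
      Qm T = ∑ sy : Fin S × Fin C, ENNReal.ofReal (kk sy.1 * rr sy.2) * Qs' sy.1 sy.2 T := by
    intro T
    rw [hQm, Measure.finset_sum_apply]
    simp [Measure.smul_apply, smul_eq_mul]
  have hone : ∀ s y, Qs' s y (subpop xs s y) = 1 := fun s y =>
    meas_supset_one (hsupp s y) subset_rfl
  have hzero : ∀ s y s' y', (s', y') ≠ (s, y) → Qs' s' y' (subpop xs s y) = 0 := by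
    intro s y s' y' hne
    refine meas_disj_zero (hsupp s' y') ?_
    intro p hp hp'
    exact hne (Prod.ext (hp'.1.symm.trans hp.1) (hp'.2.symm.trans hp.2))
  have hQmA : ∀ s y, Qm (subpop xs s y) = ENNReal.ofReal (kk s * rr y) := by
    intro s y
    rw [happly]
    rw [Finset.sum_eq_single (s, y)]
    · rw [hone s y, mul_one]
    · intro sy _ hne
      rw [hzero s y sy.1 sy.2 (by simpa using hne), mul_zero]
    · intro habs; exact absurd (Finset.mem_univ _) habs
  have hsum_kr : ∑ sy : Fin S × Fin C, kk sy.1 * rr sy.2 = 1 := by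
    rw [Fintype.sum_prod_type]
    simp_rw [← Finset.mul_sum, hrr1, mul_one]
    exact hkk1
  haveI hQmP : IsProbabilityMeasure Qm := by
    constructor
    rw [happly]
    have : ∀ sy : Fin S × Fin C, Qs' sy.1 sy.2 Set.univ = 1 := fun sy => measure_univ
    simp_rw [this, mul_one]
    rw [← ENNReal.ofReal_sum_of_nonneg (fun sy _ => mul_nonneg (hkk _) (hrr _)), hsum_kr]
    simp
  have hrestr : ∀ s y, Qm.restrict (subpop xs s y) = (Qm (subpop xs s y)) • Qs' s y := by
    intro s y
    have hsub : MeasurableSet (subpop xs s y) := measurableSet_subpop hxs s y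
    ext t ht
    rw [Measure.restrict_apply ht, happly, Measure.smul_apply, smul_eq_mul, hQmA]
    rw [Finset.sum_eq_single (s, y)]
    · congr 1
      have hself : (Qs' s y).restrict (subpop xs s y) = Qs' s y :=
        Measure.restrict_eq_self_of_ae_mem (mem_ae_iff.mpr (hsupp s y))
      calc Qs' s y (t ∩ subpop xs s y) = (Qs' s y).restrict (subpop xs s y) t :=
            (Measure.restrict_apply ht).symm
        _ = Qs' s y t := by rw [hself]
    · intro sy _ hne
      rw [meas_disj_zero (hsupp sy.1 sy.2) ?_, mul_zero]
      intro p hp hp'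
      have hps : p ∈ subpop xs s y := hp.2
      exact hne (Prod.ext (hp'.1.symm.trans hps.1) (hp'.2.symm.trans hps.2))
    · intro habs; exact absurd (Finset.mem_univ _) habs
  have hgroup : ∀ i : Fin S, Qm {p : X × Fin C | xs p.1 = i} = ENNReal.ofReal (kk i) := by
    intro i
    rw [happly]
    have hterm : ∀ sy : Fin S × Fin C, Qs' sy.1 sy.2 {p : X × Fin C | xs p.1 = i}
        = if sy.1 = i then 1 else 0 := by
      intro sy
      by_cases hsi : sy.1 = i
      · rw [if_pos hsi]
        exact meas_supset_one (hsupp sy.1 sy.2) (fun p hp => by rw [← hsi]; exact hp.1)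
      · rw [if_neg hsi]
        exact meas_disj_zero (hsupp sy.1 sy.2) (fun p hp hp' => hsi (hp'.1.symm.trans hp))
    simp_rw [hterm]
    rw [Fintype.sum_prod_type]
    have : ∀ s' : Fin S, ∑ y', ENNReal.ofReal (kk s' * rr y') * (if s' = i then 1 else 0)
        = if s' = i then ENNReal.ofReal (kk s') else 0 := by
      intro s'
      by_cases hsi : s' = i
      · simp only [if_pos hsi, mul_one]
        rw [← ENNReal.ofReal_sum_of_nonneg (fun y' _ => mul_nonneg (hkk _) (hrr _))]
        rw [← Finset.mul_sum, hrr1, mul_one]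
      · simp [hsi]
    simp_rw [this]
    simp
  have hfair : (∀ s, 0 < kk s) → IsFairBaseRate xs Qm := by
    intro hkpos
    have hcond : ∀ i : Fin S, ∀ y : Fin C,
        (Qm[|{p : X × Fin C | xs p.1 = i}]) {p : X × Fin C | p.2 = y}
          = ENNReal.ofReal (rr y) := by
      intro i y
      have hmeas : MeasurableSet {p : X × Fin C | xs p.1 = i} :=
        (hxs.comp measurable_fst) (measurableSet_singleton i)
      rw [ProbabilityTheory.cond_apply hmeas]
      have hinter : {p : X × Fin C | xs p.1 = i} ∩ {p : X × Fin C | p.2 = y}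
          = subpop xs i y := by
        ext p; simp [subpop, Set.mem_inter_iff]
      rw [hinter, hQmA, hgroup]
      rw [ENNReal.ofReal_mul (le_of_lt (hkpos i)), ← mul_assoc,
        ENNReal.inv_mul_cancel (by simp [ENNReal.ofReal_eq_zero]; exact hkpos i)
          ENNReal.ofReal_ne_top, one_mul]
    intro y i j
    rw [hcond i y, hcond j y]
  have hFi : ∀ (μ : Measure (X × Fin C)) [IsFiniteMeasure μ], Integrable F μ := by
    intro μ hμ
    refine ⟨hFm.aestronglyMeasurable, ?_⟩
    refine HasFiniteIntegral.of_bounded (C := M) (Filter.Eventually.of_forall fun p => ?_)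
    rw [Real.norm_eq_abs, abs_of_nonneg (hF0 p)]
    exact hFM p
  have hvalue : ∫ p, F p ∂Qm = ∑ s, ∑ y, kk s * rr y * ∫ p, F p ∂(Qs' s y) := by
    have hint : ∀ sy ∈ (Finset.univ : Finset (Fin S × Fin C)),
        Integrable F ((ENNReal.ofReal (kk sy.1 * rr sy.2)) • Qs' sy.1 sy.2) := by
      intro sy _
      haveI : IsFiniteMeasure ((ENNReal.ofReal (kk sy.1 * rr sy.2)) • Qs' sy.1 sy.2) := by
        constructor
        rw [Measure.smul_apply, smul_eq_mul]
        exact ENNReal.mul_lt_top ENNReal.ofReal_lt_top (measure_lt_top _ _)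
      exact hFi _
    rw [hQm, integral_finset_sum_measure hint, Fintype.sum_prod_type]
    refine Finset.sum_congr rfl fun s _ => Finset.sum_congr rfl fun y _ => ?_
    rw [integral_smul_measure, ENNReal.toReal_ofReal (mul_nonneg (hkk _) (hrr _))]
    simp
  have hhell : 1 - hellinger P Qm ^ 2 = ∑ s, ∑ y,
      Real.sqrt ((P (subpop xs s y)).toReal * (kk s * rr y))
        * (1 - hellinger (P[|subpop xs s y]) (Qs' s y) ^ 2) := by
    have hPc : ∀ s y, IsProbabilityMeasure (P[|subpop xs s y]) := fun s y =>
      cond_isProbabilityMeasure (hpos s y).ne'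
    have hPr : ∀ s y, P.restrict (subpop xs s y)
        = (P (subpop xs s y)) • (P[|subpop xs s y]) := fun s y =>
      restrict_eq_smul_cond P _ (measure_ne_top _ _)
    have := hellinger_partition hxs P Qm (fun s y => P[|subpop xs s y]) Qs'
      hPc hQp hPr hrestr
    rw [this]
    refine Finset.sum_congr rfl fun s _ => Finset.sum_congr rfl fun y _ => ?_
    rw [hQmA, ENNReal.toReal_ofReal (mul_nonneg (hkk _) (hrr _))]
  exact ⟨Qm, hQmP, hfair, hvalue, hhell⟩

end Mixture

lemma sqrt_mul_le_half {a b : ℝ} (ha : 0 ≤ a) (hb : 0 ≤ b) :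
    Real.sqrt (a * b) ≤ (a + b) / 2 := by
  nlinarith [sq_nonneg (Real.sqrt a - Real.sqrt b), Real.sq_sqrt ha, Real.sq_sqrt hb,
    Real.sqrt_mul ha b, Real.sqrt_nonneg a, Real.sqrt_nonneg b,
    Real.sqrt_nonneg (a * b)]

set_option maxHeartbeats 2000000 in
/-- tight fairness certificate under general shifting.
`P` is a probability distribution on `X × Fin C` with all subpopulation probabilities
`p_{s,y} = Pr_P[X_s = s, Y = y]` positive, `h` a classifier and `ℓ` a nonnegative loss.
For any `ρ > 0`, the supremum of the expected loss over all fair base rate distributions `Q`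
with `H(P,Q) ≤ ρ` equals the supremum of `Σ_{s,y} k_s r_y E_{Q_{s,y}}[ℓ(h(X),Y)]` over all
nonnegative `k, r` summing to one, probability distributions `Q_{s,y}` supported on the
subpopulation `{(x,y') : x_s = s, y' = y}`, and `ρ_{s,y} ∈ [0,1]` with
`H(P_{s,y}, Q_{s,y}) ≤ ρ_{s,y}` and `Σ_{s,y} √(p_{s,y} k_s r_y)(1 − ρ_{s,y}²) ≥ 1 − ρ²`. -/
theorem statement_8 {X : Type*} [MeasurableSpace X] {S C : ℕ}
    (xs : X → Fin S) (hxs : Measurable xs)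
    (P : Measure (X × Fin C)) [IsProbabilityMeasure P]
    (hpos : ∀ s y, 0 < P (subpop xs s y))
    (h : X → Fin C) (hh : Measurable h)
    (ℓ : Fin C → Fin C → ℝ) (hℓ : ∀ a b, 0 ≤ ℓ a b)
    (ρ : ℝ) (hρ : 0 < ρ) :
    let A : Set ℝ := {L | ∃ Q : Measure (X × Fin C), IsProbabilityMeasure Q ∧
      IsFairBaseRate xs Q ∧ hellinger P Q ≤ ρ ∧ L = ∫ p, ℓ (h p.1) p.2 ∂Q}
    let B : Set ℝ := {L | ∃ (k : Fin S → ℝ) (r : Fin C → ℝ)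
      (Qs : Fin S → Fin C → Measure (X × Fin C)) (ρs : Fin S → Fin C → ℝ),
      (∀ s, 0 ≤ k s) ∧ (∀ y, 0 ≤ r y) ∧ (∑ s, k s = 1) ∧ (∑ y, r y = 1) ∧
      (∀ s y, IsProbabilityMeasure (Qs s y)) ∧
      (∀ s y, Qs s y (subpop xs s y)ᶜ = 0) ∧
      (∀ s y, 0 ≤ ρs s y ∧ ρs s y ≤ 1) ∧
      (∀ s y, hellinger (P[|subpop xs s y]) (Qs s y) ≤ ρs s y) ∧
      1 - ρ ^ 2 ≤ ∑ s, ∑ y,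
        Real.sqrt ((P (subpop xs s y)).toReal * k s * r y) * (1 - ρs s y ^ 2) ∧
      L = ∑ s, ∑ y, k s * r y * ∫ p, ℓ (h p.1) p.2 ∂(Qs s y)}
    sSup A = sSup B := by
  intro A B
  classical
  -- the sample space is nonempty
  have hXne : Nonempty (X × Fin C) := by
    by_contra hne
    have h0 : P Set.univ = 0 := by
      rw [Set.univ_eq_empty_iff.mpr (not_nonempty_iff.mp hne)]
      simp
    rw [measure_univ] at h0
    exact one_ne_zero h0
  obtain ⟨x0, yc0⟩ := hXne
  haveI hSne : Nonempty (Fin S) := ⟨xs x0⟩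
  haveI hCne : Nonempty (Fin C) := ⟨yc0⟩
  have hSpos : 0 < (S : ℝ) := by exact_mod_cast Fin.pos_iff_nonempty.mpr hSne
  have hCpos : 0 < (C : ℝ) := by exact_mod_cast Fin.pos_iff_nonempty.mpr hCne
  -- the loss function
  set F : X × Fin C → ℝ := fun p => ℓ (h p.1) p.2 with hFdef
  set M : ℝ := ∑ a, ∑ b, ℓ a b with hMdef
  have hF0 : ∀ p, 0 ≤ F p := fun p => hℓ _ _
  have hM0 : 0 ≤ M := Finset.sum_nonneg fun a _ => Finset.sum_nonneg fun b _ => hℓ a b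
  have hFM : ∀ p, F p ≤ M := by
    intro p
    calc F p = ℓ (h p.1) p.2 := rfl
      _ ≤ ∑ b, ℓ (h p.1) b :=
          Finset.single_le_sum (fun b _ => hℓ _ b) (Finset.mem_univ _)
      _ ≤ M := Finset.single_le_sum
          (fun a (_ : a ∈ Finset.univ) => Finset.sum_nonneg fun b _ => hℓ a b)
          (Finset.mem_univ _)
  have hFm : Measurable F := by
    have h1 : Measurable (fun p : X × Fin C => (h p.1, p.2)) :=
      (hh.comp measurable_fst).prodMk measurable_snd
    exact (measurable_of_countable (fun q : Fin C × Fin C => ℓ q.1 q.2)).comp h1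
  have hFi : ∀ (μ : Measure (X × Fin C)) [IsFiniteMeasure μ], Integrable F μ := by
    intro μ hμ
    refine ⟨hFm.aestronglyMeasurable, ?_⟩
    refine HasFiniteIntegral.of_bounded (C := M) (Filter.Eventually.of_forall fun p => ?_)
    rw [Real.norm_eq_abs, abs_of_nonneg (hF0 p)]
    exact hFM p
  have hIntLe : ∀ (μ : Measure (X × Fin C)) [IsProbabilityMeasure μ], ∫ p, F p ∂μ ≤ M := by
    intro μ hμ
    have hstep : ∫ p, F p ∂μ ≤ ∫ _, M ∂μ :=
      integral_mono (hFi μ) (integrable_const M) fun p => hFM p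
    simpa using hstep
  have hIntNN : ∀ μ : Measure (X × Fin C), 0 ≤ ∫ p, F p ∂μ :=
    fun μ => integral_nonneg hF0
  -- boundedness
  have hAbdd : BddAbove A := by
    refine ⟨M, fun L hL => ?_⟩
    obtain ⟨Q, hQP, _, _, rfl⟩ := hL
    haveI := hQP
    exact hIntLe Q
  have hBbdd : BddAbove B := by
    refine ⟨M, fun L hL => ?_⟩
    obtain ⟨k, r, Qs, ρs, hk0, hr0, hk1, hr1, hQsP, _, _, _, _, rfl⟩ := hL
    calc ∑ s, ∑ y, k s * r y * ∫ p, F p ∂(Qs s y)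
        ≤ ∑ s, ∑ y, k s * r y * M := by
          refine Finset.sum_le_sum fun s _ => Finset.sum_le_sum fun y _ => ?_
          haveI := hQsP s y
          exact mul_le_mul_of_nonneg_left (hIntLe (Qs s y))
            (mul_nonneg (hk0 s) (hr0 y))
      _ = M := by
          simp_rw [mul_assoc, ← Finset.mul_sum, ← Finset.sum_mul, hr1, hk1]
          simp
  have hAB : A ⊆ B := by
    rintro L ⟨Q, hQP, hfair, hHle, rfl⟩
    haveI := hQP
    set m : Fin S → ℝ≥0∞ := fun s => Q {p : X × Fin C | xs p.1 = s} with hmdef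
    have hmeasG : ∀ s : Fin S, MeasurableSet {p : X × Fin C | xs p.1 = s} :=
      fun s => (hxs.comp measurable_fst) (measurableSet_singleton s)
    have hmsum : ∑ s, m s = 1 := sum_measure_groups hxs Q
    have hmpos : ∀ s, m s ≠ 0 := by
      intro s hs0
      have hzero : ∀ y, (Q[|{p : X × Fin C | xs p.1 = s}]) {p : X × Fin C | p.2 = y} = 0 := by
        intro y
        rw [ProbabilityTheory.cond_apply (hmeasG s)]
        rw [measure_mono_null Set.inter_subset_left hs0, mul_zero]
      obtain ⟨j, hj⟩ : ∃ j, m j ≠ 0 := by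
        by_contra hall
        push_neg at hall
        rw [Finset.sum_eq_zero fun j _ => hall j] at hmsum
        exact one_ne_zero hmsum.symm
      haveI : IsProbabilityMeasure (Q[|{p : X × Fin C | xs p.1 = j}]) :=
        cond_isProbabilityMeasure hj
      have h1 : ∑ y, (Q[|{p : X × Fin C | xs p.1 = j}]) {p : X × Fin C | p.2 = y} = 1 :=
        sum_measure_labels _
      have hzj : ∀ y, (Q[|{p : X × Fin C | xs p.1 = j}]) {p : X × Fin C | p.2 = y} = 0 :=
        fun y => (hfair y j s).trans (hzero y)
      rw [Finset.sum_eq_zero fun y _ => hzj y] at h1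
      exact one_ne_zero h1.symm
    set q : Fin S → Fin C → ℝ≥0∞ := fun s y => Q (subpop xs s y) with hqdef
    set s₀ : Fin S := Classical.arbitrary (Fin S) with hs₀
    set k : Fin S → ℝ := fun s => (m s).toReal with hkdef
    set r : Fin C → ℝ := fun y =>
      ((Q[|{p : X × Fin C | xs p.1 = s₀}]) {p : X × Fin C | p.2 = y}).toReal with hrdef
    have hsubinter : ∀ (s : Fin S) (y : Fin C),
        {p : X × Fin C | xs p.1 = s} ∩ {p : X × Fin C | p.2 = y} = subpop xs s y := by
      intro s y; ext p; simp [subpop, Set.mem_inter_iff]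
    have hq_eq : ∀ s y, q s y
        = m s * ((Q[|{p : X × Fin C | xs p.1 = s₀}]) {p : X × Fin C | p.2 = y}) := by
      intro s y
      rw [← hfair y s s₀, ProbabilityTheory.cond_apply (hmeasG s), ← mul_assoc,
        ENNReal.mul_inv_cancel (hmpos s) (measure_ne_top _ _), one_mul, hsubinter]
    have hq_ne_top : ∀ s y, q s y ≠ ∞ := fun s y => measure_ne_top _ _
    have hkr : ∀ s y, k s * r y = (q s y).toReal := by
      intro s y
      rw [hq_eq, ENNReal.toReal_mul]
    haveI hconds₀ : IsProbabilityMeasure (Q[|{p : X × Fin C | xs p.1 = s₀}]) :=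
      cond_isProbabilityMeasure (hmpos s₀)
    set Pc : Fin S → Fin C → Measure (X × Fin C) := fun s y => P[|subpop xs s y] with hPcdef
    set Qc : Fin S → Fin C → Measure (X × Fin C) :=
      fun s y => if q s y = 0 then Pc s y else Q[|subpop xs s y] with hQcdef
    have hPcP : ∀ s y, IsProbabilityMeasure (Pc s y) :=
      fun s y => cond_isProbabilityMeasure (hpos s y).ne'
    have hQcP : ∀ s y, IsProbabilityMeasure (Qc s y) := by
      intro s y
      simp only [hQcdef]
      by_cases h0 : q s y = 0
      · rw [if_pos h0]; exact hPcP s y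
      · rw [if_neg h0]; exact cond_isProbabilityMeasure h0
    have hQcsupp : ∀ s y, Qc s y (subpop xs s y)ᶜ = 0 := by
      intro s y
      simp only [hQcdef]
      by_cases h0 : q s y = 0
      · rw [if_pos h0]
        exact cond_compl_zero P _ (measurableSet_subpop hxs s y)
      · rw [if_neg h0]
        exact cond_compl_zero Q _ (measurableSet_subpop hxs s y)
    have hPr : ∀ s y, P.restrict (subpop xs s y) = (P (subpop xs s y)) • Pc s y :=
      fun s y => restrict_eq_smul_cond P _ (measure_ne_top _ _)
    have hQr : ∀ s y, Q.restrict (subpop xs s y) = (q s y) • Qc s y := by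
      intro s y
      simp only [hQcdef]
      by_cases h0 : q s y = 0
      · rw [if_pos h0, h0, zero_smul, Measure.restrict_eq_zero]
        exact h0
      · rw [if_neg h0]
        exact restrict_eq_smul_cond Q _ (measure_ne_top _ _)
    have hdec := hellinger_partition hxs P Q Pc Qc hPcP hQcP hPr hQr
    refine ⟨k, r, Qc, fun s y => hellinger (P[|subpop xs s y]) (Qc s y),
      fun s => ENNReal.toReal_nonneg, fun y => ENNReal.toReal_nonneg, ?_, ?_,
      hQcP, hQcsupp, ?_, fun s y => le_rfl, ?_, ?_⟩
    · rw [hkdef, ← ENNReal.toReal_sum fun s _ => measure_ne_top _ _, hmsum]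
      simp
    · rw [hrdef, ← ENNReal.toReal_sum fun y _ => measure_ne_top _ _,
        sum_measure_labels _]
      simp
    · intro s y
      haveI := hQcP s y
      haveI := hPcP s y
      exact ⟨hellinger_nonneg _ _, hellinger_le_one _ _⟩
    · -- Hellinger constraint
      have hsum_eq : ∑ s, ∑ y, Real.sqrt ((P (subpop xs s y)).toReal * k s * r y)
          * (1 - hellinger (P[|subpop xs s y]) (Qc s y) ^ 2)
          = 1 - hellinger P Q ^ 2 := by
        rw [hdec]
        refine Finset.sum_congr rfl fun s _ => Finset.sum_congr rfl fun y _ => ?_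
        rw [mul_assoc, hkr]
      rw [hsum_eq]
      have hsq : hellinger P Q ^ 2 ≤ ρ ^ 2 :=
        pow_le_pow_left₀ (hellinger_nonneg P Q) hHle 2
      linarith
    · -- value decomposition
      rw [integral_partition hxs Q (hFi Q)]
      refine Finset.sum_congr rfl fun s _ => Finset.sum_congr rfl fun y _ => ?_
      have : ∫ p in subpop xs s y, F p ∂Q = ∫ p, F p ∂(Q.restrict (subpop xs s y)) := rfl
      rw [this, hQr s y, integral_smul_measure, hkr]
      simp
      exact Or.inl rfl
  have hBA : ∀ L ∈ B, ∀ δ : ℝ, 0 < δ → ∃ a ∈ A, L - δ ≤ a := by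
    rintro L ⟨k, r, Qs, ρs, hk0, hr0, hk1, hr1, hQsP, hQssupp, hρs01, hρsH, hconstr, rfl⟩ δ hδ
    haveI hPcondP : ∀ s y, IsProbabilityMeasure (P[|subpop xs s y]) :=
      fun s y => cond_isProbabilityMeasure (hpos s y).ne'
    set Qs' : Fin S → Fin C → Measure (X × Fin C) :=
      fun s y => if k s * r y = 0 then P[|subpop xs s y] else Qs s y with hQs'def
    have hQs'P : ∀ s y, IsProbabilityMeasure (Qs' s y) := by
      intro s y
      simp only [hQs'def]
      split
      · exact hPcondP s y
      · exact hQsP s y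
    have hQs'supp : ∀ s y, Qs' s y (subpop xs s y)ᶜ = 0 := by
      intro s y
      simp only [hQs'def]
      split
      · exact cond_compl_zero P _ (measurableSet_subpop hxs s y)
      · exact hQssupp s y
    have hhell01 : ∀ s y, 0 ≤ 1 - hellinger (P[|subpop xs s y]) (Qs' s y) ^ 2 := by
      intro s y
      haveI := hQs'P s y
      have h1 := hellinger_le_one (P[|subpop xs s y]) (Qs' s y)
      have h2 := hellinger_nonneg (P[|subpop xs s y]) (Qs' s y)
      nlinarith
    set T := ∑ s, ∑ y, Real.sqrt ((P (subpop xs s y)).toReal * (k s * r y))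
      * (1 - ρs s y ^ 2) with hTdef
    have hconstr' : 1 - ρ ^ 2 ≤ T := by
      rw [hTdef]
      simp_rw [← mul_assoc]
      exact hconstr
    have hpT : ∀ (s : Fin S) (y : Fin C), (0:ℝ) ≤ (P (subpop xs s y)).toReal :=
      fun s y => ENNReal.toReal_nonneg
    have hρs0 : ∀ s y, 0 ≤ 1 - ρs s y ^ 2 := by
      intro s y
      have := hρs01 s y
      nlinarith [this.1, this.2]
    have hρs1' : ∀ s y, 1 - ρs s y ^ 2 ≤ 1 := by
      intro s y
      nlinarith [(hρs01 s y).1]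
    have hkr1 : ∑ s, ∑ y, k s * r y = 1 := by
      simp_rw [← Finset.mul_sum, hr1, mul_one]
      exact hk1
    have hsum_p : ∑ s, ∑ y, (P (subpop xs s y)).toReal = 1 := by
      have h1 := sum_measure_subpop hxs P
      rw [measure_univ] at h1
      have e1 : ∀ s : Fin S, ∑ y, (P (subpop xs s y)).toReal
          = (∑ y, P (subpop xs s y)).toReal :=
        fun s => (ENNReal.toReal_sum fun y _ => measure_ne_top _ _).symm
      have e2 : ∑ s, (∑ y, P (subpop xs s y)).toReal
          = (∑ s, ∑ y, P (subpop xs s y)).toReal :=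
        (ENNReal.toReal_sum fun s _ =>
          (ENNReal.sum_lt_top.mpr fun y _ => measure_lt_top _ _).ne).symm
      rw [Finset.sum_congr rfl fun s _ => e1 s, e2, h1]
      simp
    have hT1 : T ≤ 1 := by
      rw [hTdef]
      calc ∑ s, ∑ y, Real.sqrt ((P (subpop xs s y)).toReal * (k s * r y))
            * (1 - ρs s y ^ 2)
          ≤ ∑ s, ∑ y, ((P (subpop xs s y)).toReal + k s * r y) / 2 := by
            refine Finset.sum_le_sum fun s _ => Finset.sum_le_sum fun y _ => ?_
            calc Real.sqrt ((P (subpop xs s y)).toReal * (k s * r y)) * (1 - ρs s y ^ 2)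
                ≤ Real.sqrt ((P (subpop xs s y)).toReal * (k s * r y)) * 1 :=
                  mul_le_mul_of_nonneg_left (hρs1' s y) (Real.sqrt_nonneg _)
              _ = Real.sqrt ((P (subpop xs s y)).toReal * (k s * r y)) := mul_one _
              _ ≤ ((P (subpop xs s y)).toReal + k s * r y) / 2 :=
                  sqrt_mul_le_half (hpT s y) (mul_nonneg (hk0 s) (hr0 y))
        _ = 1 := by
            simp_rw [add_div, Finset.sum_add_distrib, ← Finset.sum_div, hsum_p, hkr1]
            norm_num
    by_cases hkpos : ∀ s, 0 < k s
    · -- no perturbation needed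
      obtain ⟨Qm, hQmP, hfairm, hval, hhell⟩ :=
        mixture_facts xs hxs P hpos F hFm hF0 hFM k r hk0 hr0 hk1 hr1 Qs' hQs'P hQs'supp
      have hLeq : ∑ s, ∑ y, k s * r y * ∫ p, F p ∂(Qs s y) = ∫ p, F p ∂Qm := by
        rw [hval]
        refine Finset.sum_congr rfl fun s _ => Finset.sum_congr rfl fun y _ => ?_
        by_cases h0 : k s * r y = 0
        · rw [h0]; ring
        · simp only [hQs'def, if_neg h0]
      have hHQm : hellinger P Qm ≤ ρ := by
        have hge : 1 - ρ ^ 2 ≤ 1 - hellinger P Qm ^ 2 := by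
          rw [hhell]
          refine le_trans hconstr' (le_trans ?_ le_rfl)
          rw [hTdef]
          refine Finset.sum_le_sum fun s _ => Finset.sum_le_sum fun y _ => ?_
          by_cases h0 : k s * r y = 0
          · rw [h0]
            simp
          · simp only [hQs'def, if_neg h0]
            refine mul_le_mul_of_nonneg_left ?_ (Real.sqrt_nonneg _)
            have hH := hρsH s y
            haveI := hQsP s y
            have h2 : hellinger (P[|subpop xs s y]) (Qs s y) ^ 2 ≤ ρs s y ^ 2 :=
              pow_le_pow_left₀ (hellinger_nonneg _ _) hH 2
            linarith
        have hsq : hellinger P Qm ^ 2 ≤ ρ ^ 2 := by linarith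
        calc hellinger P Qm = Real.sqrt (hellinger P Qm ^ 2) :=
              (Real.sqrt_sq (hellinger_nonneg _ _)).symm
          _ ≤ Real.sqrt (ρ ^ 2) := Real.sqrt_le_sqrt hsq
          _ = ρ := Real.sqrt_sq hρ.le
      exact ⟨∫ p, F p ∂Qm, ⟨Qm, hQmP, hfairm hkpos, hHQm, rfl⟩, by rw [← hLeq]; linarith⟩
    · -- perturbation case: some group has zero mass
      push_neg at hkpos
      obtain ⟨s0, hs0le⟩ := hkpos
      have hs0 : k s0 = 0 := le_antisymm hs0le (hk0 s0)
      obtain ⟨y0, hy0⟩ : ∃ y0, 1 / (C:ℝ) ≤ r y0 := by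
        by_contra hall
        push_neg at hall
        have hlt : ∑ y, r y < ∑ _y : Fin C, 1 / (C:ℝ) :=
          Finset.sum_lt_sum_of_nonempty Finset.univ_nonempty fun y _ => hall y
        rw [hr1, Finset.sum_const, Finset.card_univ, Fintype.card_fin, nsmul_eq_mul] at hlt
        have hC1 : (C:ℝ) * (1/(C:ℝ)) = 1 := by field_simp
        rw [hC1] at hlt
        exact lt_irrefl 1 hlt
      set p0 : ℝ := (P (subpop xs s0 y0)).toReal with hp0def
      have hp0 : 0 < p0 := ENNReal.toReal_pos (hpos s0 y0).ne' (measure_ne_top _ _)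
      set c : ℝ := p0 / ((S:ℝ) * (C:ℝ)) with hcdef
      have hc : 0 < c := by positivity
      set ε : ℝ := min (min c 1) (δ / (M + 1)) with hεdef
      have hε0 : 0 < ε := lt_min (lt_min hc one_pos) (by positivity)
      have hε1 : ε ≤ 1 := le_trans (min_le_left _ _) (min_le_right _ _)
      have hεc : ε ≤ c := le_trans (min_le_left _ _) (min_le_left _ _)
      have hεδ : ε ≤ δ / (M + 1) := min_le_right _ _
      set kk : Fin S → ℝ := fun s => (1 - ε) * k s + ε / S with hkkdef
      have hkkpos : ∀ s, 0 < kk s := fun s =>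
        add_pos_of_nonneg_of_pos (mul_nonneg (by linarith) (hk0 s)) (by positivity)
      have hkk0 : ∀ s, 0 ≤ kk s := fun s => (hkkpos s).le
      have hkkge : ∀ s, (1 - ε) * k s ≤ kk s := fun s =>
        le_add_of_nonneg_right (by positivity)
      have hkk1 : ∑ s, kk s = 1 := by
        rw [hkkdef, Finset.sum_add_distrib, ← Finset.mul_sum, hk1, Finset.sum_const,
          Finset.card_univ, Fintype.card_fin, nsmul_eq_mul]
        field_simp
        ring
      obtain ⟨Qm, hQmP, hfairm, hval, hhell⟩ :=
        mixture_facts xs hxs P hpos F hFm hF0 hFM kk r hkk0 hr0 hkk1 hr1 Qs' hQs'P hQs'supp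
      set L := ∑ s, ∑ y, k s * r y * ∫ p, F p ∂(Qs s y) with hLdef
      have hLM : L ≤ M := by
        rw [hLdef]
        calc ∑ s, ∑ y, k s * r y * ∫ p, F p ∂(Qs s y)
            ≤ ∑ s, ∑ y, k s * r y * M := by
              refine Finset.sum_le_sum fun s _ => Finset.sum_le_sum fun y _ => ?_
              haveI := hQsP s y
              exact mul_le_mul_of_nonneg_left (hIntLe (Qs s y))
                (mul_nonneg (hk0 s) (hr0 y))
          _ = M := by
              simp_rw [mul_assoc, ← Finset.mul_sum, ← Finset.sum_mul, hr1, hk1]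
              simp
      have hL0 : 0 ≤ L := Finset.sum_nonneg fun s _ => Finset.sum_nonneg fun y _ =>
        mul_nonneg (mul_nonneg (hk0 s) (hr0 y)) (hIntNN _)
      have hvalge : (1 - ε) * L ≤ ∫ p, F p ∂Qm := by
        rw [hval, hLdef, Finset.mul_sum]
        refine Finset.sum_le_sum fun s _ => ?_
        rw [Finset.mul_sum]
        refine Finset.sum_le_sum fun y _ => ?_
        by_cases h0 : k s * r y = 0
        · rw [h0]
          have hnn : 0 ≤ kk s * r y * ∫ p, F p ∂(Qs' s y) :=
            mul_nonneg (mul_nonneg (hkk0 s) (hr0 y)) (hIntNN _)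
          nlinarith
        · simp only [hQs'def, if_neg h0]
          have heq : (1 - ε) * (k s * r y * ∫ p, F p ∂(Qs s y))
              = ((1 - ε) * k s) * r y * ∫ p, F p ∂(Qs s y) := by ring
          rw [heq]
          refine mul_le_mul_of_nonneg_right
            (mul_le_mul_of_nonneg_right (hkkge s) (hr0 y)) (hIntNN _)
      have hvalfinal : L - δ ≤ ∫ p, F p ∂Qm := by
        have hεM : ε * M ≤ δ := by
          calc ε * M ≤ (δ / (M + 1)) * M := mul_le_mul_of_nonneg_right hεδ hM0
            _ ≤ δ := by
                rw [div_mul_eq_mul_div, div_le_iff₀ (by linarith)]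
                nlinarith
        nlinarith [mul_le_mul_of_nonneg_left hLM hε0.le]
      have hHQm : hellinger P Qm ≤ ρ := by
        have hge : 1 - ρ ^ 2 ≤ 1 - hellinger P Qm ^ 2 := by
          rw [hhell]
          -- per-pair lower bound
          have hle : ∀ s y, (1 - ε) * (Real.sqrt ((P (subpop xs s y)).toReal * (k s * r y))
                * (1 - ρs s y ^ 2))
              + (if s = s0 then (if y = y0 then Real.sqrt (c * ε) else 0) else 0)
              ≤ Real.sqrt ((P (subpop xs s y)).toReal * (kk s * r y))
                * (1 - hellinger (P[|subpop xs s y]) (Qs' s y) ^ 2) := by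
            intro s y
            by_cases hsy : s = s0 ∧ y = y0
            · obtain ⟨rfl, rfl⟩ := hsy
              rw [if_pos rfl, if_pos rfl, hs0, zero_mul]
              have h00 : k s * r y = 0 := by rw [hs0, zero_mul]
              have hQeq : Qs' s y = P[|subpop xs s y] := by
                simp only [hQs'def, if_pos h00]
              rw [hQeq, hellinger_self]
              have hkk_s0 : kk s = ε / S := by simp only [hkkdef]; rw [hs0]; ring
              have hcε : c * ε ≤ p0 * (kk s * r y) := by
                rw [hkk_s0, hcdef]
                have step : p0 / ((S:ℝ) * (C:ℝ)) * ε = p0 * (ε / S * (1 / C)) := by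
                  field_simp
                rw [step]
                refine mul_le_mul_of_nonneg_left ?_ hp0.le
                refine mul_le_mul_of_nonneg_left hy0 (by positivity)
              have hsq : Real.sqrt (c * ε) ≤ Real.sqrt (p0 * (kk s * r y)) :=
                Real.sqrt_le_sqrt hcε
              simp only [Real.sqrt_zero, mul_zero, zero_mul, mul_one, zero_add]
              calc Real.sqrt (c * ε) ≤ Real.sqrt (p0 * (kk s * r y)) := hsq
                _ = Real.sqrt ((P (subpop xs s y)).toReal * (kk s * r y)) * (1 - 0 ^ 2) := by
                    rw [hp0def]; ring_nf
            · have hif : (if s = s0 then (if y = y0 then Real.sqrt (c * ε) else 0) else 0)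
                  = 0 := by
                by_cases h1 : s = s0
                · rw [if_pos h1, if_neg fun h2 => hsy ⟨h1, h2⟩]
                · rw [if_neg h1]
              rw [hif, add_zero]
              by_cases h0 : k s * r y = 0
              · rw [h0]
                have h1 : 0 ≤ Real.sqrt ((P (subpop xs s y)).toReal * (kk s * r y))
                    * (1 - hellinger (P[|subpop xs s y]) (Qs' s y) ^ 2) :=
                  mul_nonneg (Real.sqrt_nonneg _) (hhell01 s y)
                simp only [mul_zero, Real.sqrt_zero, zero_mul]
                linarith
              · simp only [hQs'def, if_neg h0]
                have hstep1 : (1 - ε) * Real.sqrt ((P (subpop xs s y)).toReal * (k s * r y))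
                    ≤ Real.sqrt ((P (subpop xs s y)).toReal * (kk s * r y)) := by
                  have ha : (1 - ε) * ((P (subpop xs s y)).toReal * (k s * r y))
                      ≤ (P (subpop xs s y)).toReal * (kk s * r y) := by
                    have : (1 - ε) * ((P (subpop xs s y)).toReal * (k s * r y))
                        = (P (subpop xs s y)).toReal * (((1 - ε) * k s) * r y) := by ring
                    rw [this]
                    refine mul_le_mul_of_nonneg_left
                      (mul_le_mul_of_nonneg_right (hkkge s) (hr0 y)) (hpT s y)
                  calc (1 - ε) * Real.sqrt ((P (subpop xs s y)).toReal * (k s * r y))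
                      ≤ Real.sqrt (1 - ε)
                          * Real.sqrt ((P (subpop xs s y)).toReal * (k s * r y)) := by
                        refine mul_le_mul_of_nonneg_right ?_ (Real.sqrt_nonneg _)
                        have ht1 : Real.sqrt (1 - ε) ≤ 1 := by
                          calc Real.sqrt (1 - ε) ≤ Real.sqrt 1 :=
                                Real.sqrt_le_sqrt (by linarith)
                            _ = 1 := Real.sqrt_one
                        have ht2 : Real.sqrt (1 - ε) ^ 2 = 1 - ε :=
                          Real.sq_sqrt (by linarith)
                        nlinarith [Real.sqrt_nonneg (1 - ε)]
                    _ = Real.sqrt ((1 - ε) * ((P (subpop xs s y)).toReal * (k s * r y))) :=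
                        (Real.sqrt_mul (by linarith) _).symm
                    _ ≤ Real.sqrt ((P (subpop xs s y)).toReal * (kk s * r y)) :=
                        Real.sqrt_le_sqrt ha
                have hstep2 : 1 - ρs s y ^ 2
                    ≤ 1 - hellinger (P[|subpop xs s y]) (Qs s y) ^ 2 := by
                  haveI := hQsP s y
                  have h2 : hellinger (P[|subpop xs s y]) (Qs s y) ^ 2 ≤ ρs s y ^ 2 :=
                    pow_le_pow_left₀ (hellinger_nonneg _ _) (hρsH s y) 2
                  linarith
                calc (1 - ε) * (Real.sqrt ((P (subpop xs s y)).toReal * (k s * r y))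
                      * (1 - ρs s y ^ 2))
                    = ((1 - ε) * Real.sqrt ((P (subpop xs s y)).toReal * (k s * r y)))
                      * (1 - ρs s y ^ 2) := by ring
                  _ ≤ Real.sqrt ((P (subpop xs s y)).toReal * (kk s * r y))
                      * (1 - ρs s y ^ 2) :=
                      mul_le_mul_of_nonneg_right hstep1 (hρs0 s y)
                  _ ≤ Real.sqrt ((P (subpop xs s y)).toReal * (kk s * r y))
                      * (1 - hellinger (P[|subpop xs s y]) (Qs s y) ^ 2) :=
                      mul_le_mul_of_nonneg_left hstep2 (Real.sqrt_nonneg _)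
          have hsumle : ∑ s, ∑ y, ((1 - ε) * (Real.sqrt ((P (subpop xs s y)).toReal
                  * (k s * r y)) * (1 - ρs s y ^ 2))
                + (if s = s0 then (if y = y0 then Real.sqrt (c * ε) else 0) else 0))
              ≤ ∑ s, ∑ y, Real.sqrt ((P (subpop xs s y)).toReal * (kk s * r y))
                * (1 - hellinger (P[|subpop xs s y]) (Qs' s y) ^ 2) :=
            Finset.sum_le_sum fun s _ => Finset.sum_le_sum fun y _ => hle s y
          have hsplit : ∑ s, ∑ y, ((1 - ε) * (Real.sqrt ((P (subpop xs s y)).toReal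
                  * (k s * r y)) * (1 - ρs s y ^ 2))
                + (if s = s0 then (if y = y0 then Real.sqrt (c * ε) else 0) else 0))
              = (1 - ε) * T + Real.sqrt (c * ε) := by
            rw [hTdef]
            simp_rw [Finset.sum_add_distrib, ← Finset.mul_sum]
            congr 1
            have hinner : ∀ s : Fin S,
                (∑ y, if s = s0 then (if y = y0 then Real.sqrt (c * ε) else 0) else 0)
                = if s = s0 then Real.sqrt (c * ε) else 0 := by
              intro s
              by_cases hs : s = s0
              · simp [hs, Finset.sum_ite_eq' Finset.univ y0 (fun _ => Real.sqrt (c * ε))]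
              · simp [hs]
            rw [Finset.sum_congr rfl fun s _ => hinner s]
            simp [Finset.sum_ite_eq' Finset.univ s0 (fun _ => Real.sqrt (c * ε))]
          have hsqe : ε ≤ Real.sqrt (c * ε) := by
            have h1 : ε * ε ≤ c * ε := mul_le_mul_of_nonneg_right hεc hε0.le
            calc ε = Real.sqrt (ε * ε) := (Real.sqrt_mul_self hε0.le).symm
              _ ≤ Real.sqrt (c * ε) := Real.sqrt_le_sqrt h1
          have hchain : 1 - ρ ^ 2 ≤ (1 - ε) * T + Real.sqrt (c * ε) := by
            nlinarith
          calc 1 - ρ ^ 2 ≤ (1 - ε) * T + Real.sqrt (c * ε) := hchain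
            _ ≤ _ := by rw [← hsplit]; exact hsumle
        have hsq : hellinger P Qm ^ 2 ≤ ρ ^ 2 := by linarith
        calc hellinger P Qm = Real.sqrt (hellinger P Qm ^ 2) :=
              (Real.sqrt_sq (hellinger_nonneg _ _)).symm
          _ ≤ Real.sqrt (ρ ^ 2) := Real.sqrt_le_sqrt hsq
          _ = ρ := Real.sqrt_sq hρ.le
      exact ⟨∫ p, F p ∂Qm, ⟨Qm, hQmP, hfairm hkkpos, hHQm, rfl⟩, hvalfinal⟩
  by_cases hBne : B.Nonempty
  · obtain ⟨b0, hb0⟩ := hBne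
    have hAne : A.Nonempty := by
      obtain ⟨a, ha, _⟩ := hBA b0 hb0 1 one_pos
      exact ⟨a, ha⟩
    apply le_antisymm
    · exact csSup_le hAne fun a ha => le_csSup hBbdd (hAB ha)
    · refine csSup_le ⟨b0, hb0⟩ fun b hb => ?_
      refine le_of_forall_pos_le_add fun δ hδ => ?_
      obtain ⟨a, haA, hba⟩ := hBA b hb δ hδ
      have := le_csSup hAbdd haA
      linarith
  · rw [Set.not_nonempty_iff_eq_empty] at hBne
    have hAemp : A = ∅ := by
      rw [← Set.subset_empty_iff, ← hBne]
      exact hAB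
    rw [hAemp, hBne]
end

section
/- Let {P_i}_{i=1}^N be probability measures with pairwise disjoint supports, let p be a probability vector, and set P = Σ_{i=1}^N p_i P_i. Let {Q′_i}_{i=1}^N be probability measures each of which is singular with respect to P (its support is disjoint from the support of every P_j). Let α_i ∈ [0,1] and β_i ≥ 0 satisfy Σ_{i=1}^N (α_i p_i + β_i) = 1, and set Q = Σ_{i=1}^N (α_i p_i P_i + β_i Q′_i). Then the squared Hellinger distance satisfies H(P,Q)² = 1 − Σ_{i=1}^N √(α_i) p_i, i.e. H(P,Q) = sqrt(1 − Σ_i √(α_i) p_i). -/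
open MeasureTheory ProbabilityTheory
open scoped ENNReal

/-- Hellinger distance for mixtures with singular new components.
Let `Ps i` be probability measures carried by pairwise disjoint measurable sets `A i`, `p` a
probability vector, and `P = Σᵢ pᵢ Psᵢ`.  Let `Q'ᵢ` be probability measures each singular with
respect to `P` (mutually singular with every `Ps j`).  If `αᵢ ∈ [0,1]`, `βᵢ ≥ 0` and
`Σᵢ (αᵢ pᵢ + βᵢ) = 1`, then for `Q = Σᵢ (αᵢ pᵢ Psᵢ + βᵢ Q'ᵢ)` the squared Hellinger distance
satisfies `H(P,Q)² = 1 − Σᵢ √(αᵢ) pᵢ`, i.e. `H(P,Q) = sqrt(1 − Σᵢ √(αᵢ) pᵢ)`. -/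
theorem statement_16 {Z : Type*} [MeasurableSpace Z] {N : ℕ}
    (Ps : Fin N → Measure Z) (hPs : ∀ i, IsProbabilityMeasure (Ps i))
    (A : Fin N → Set Z) (hA : ∀ i, MeasurableSet (A i))
    (hdisj : Pairwise fun i j => Disjoint (A i) (A j))
    (hsupp : ∀ i, Ps i (A i)ᶜ = 0)
    (p : Fin N → ℝ) (hp : ∀ i, 0 ≤ p i) (hps : ∑ i, p i = 1)
    (Q' : Fin N → Measure Z) (hQ' : ∀ i, IsProbabilityMeasure (Q' i))
    (hsing : ∀ i j, (Q' i).MutuallySingular (Ps j))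
    (α β : Fin N → ℝ) (hα : ∀ i, 0 ≤ α i ∧ α i ≤ 1) (hβ : ∀ i, 0 ≤ β i)
    (hsum : ∑ i, (α i * p i + β i) = 1) :
    let P : Measure Z := ∑ i, ENNReal.ofReal (p i) • Ps i
    let Q : Measure Z :=
      ∑ i, (ENNReal.ofReal (α i * p i) • Ps i + ENNReal.ofReal (β i) • Q' i)
    hellinger P Q ^ 2 = 1 - ∑ i, Real.sqrt (α i) * p i ∧
    hellinger P Q = Real.sqrt (1 - ∑ i, Real.sqrt (α i) * p i) := by
  classical
  intro P Q
  have hα0 : ∀ i, (0:ℝ) < 1 + α i := fun i => by nlinarith [(hα i).1]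
  -- apply lemmas
  have hPapply : ∀ s : Set Z, P s = ∑ i, ENNReal.ofReal (p i) * Ps i s := by
    intro s
    show (∑ i, ENNReal.ofReal (p i) • Ps i) s = _
    rw [Measure.finset_sum_apply]
    simp [Measure.smul_apply, smul_eq_mul]
  have hQapply : ∀ s : Set Z,
      Q s = ∑ i, (ENNReal.ofReal (α i * p i) * Ps i s + ENNReal.ofReal (β i) * Q' i s) := by
    intro s
    show (∑ i, (ENNReal.ofReal (α i * p i) • Ps i + ENNReal.ofReal (β i) • Q' i)) s = _
    rw [Measure.finset_sum_apply]
    simp [Measure.add_apply, Measure.smul_apply, smul_eq_mul]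
  -- singular carrier set T
  have hsing' : ∀ i, (Q' i).MutuallySingular (Measure.sum Ps) :=
    fun i => Measure.MutuallySingular.sum_right.mpr (hsing i)
  set T : Set Z := ⋂ i, (hsing' i).nullSet with hTdef
  have hTmeas : MeasurableSet T :=
    MeasurableSet.iInter fun i => (hsing' i).measurableSet_nullSet
  have hQ'T : ∀ i, Q' i T = 0 := fun i =>
    measure_mono_null (Set.iInter_subset _ i) (hsing' i).measure_nullSet
  have hPsT : ∀ j, Ps j Tᶜ = 0 := by
    intro j
    have hTc : Tᶜ = ⋃ i, ((hsing' i).nullSet)ᶜ := by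
      rw [hTdef, Set.compl_iInter]
    rw [hTc]
    refine measure_iUnion_null fun i => ?_
    have h1 : Ps j ((hsing' i).nullSet)ᶜ ≤ Measure.sum Ps ((hsing' i).nullSet)ᶜ :=
      Measure.le_iff'.mp (Measure.le_sum Ps j) _
    rw [(hsing' i).measure_compl_nullSet] at h1
    exact le_antisymm h1 zero_le
  -- the good sets B i
  set B : Fin N → Set Z := fun i => A i ∩ T with hBdef
  have hBmeas : ∀ i, MeasurableSet (B i) := fun i => (hA i).inter hTmeas
  have hBdisj : Pairwise (Function.onFun Disjoint B) := fun i j hij =>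
    (hdisj hij).mono Set.inter_subset_left Set.inter_subset_left
  have hPsBc : ∀ i, Ps i (B i)ᶜ = 0 := by
    intro i
    have h1 : (B i)ᶜ = (A i)ᶜ ∪ Tᶜ := by rw [hBdef]; simp [Set.compl_inter]
    rw [h1]
    exact measure_union_null (hsupp i) (hPsT i)
  have hPsB1 : ∀ i, Ps i (B i) = 1 := by
    intro i
    have h := measure_add_measure_compl (μ := Ps i) (hBmeas i)
    rw [hPsBc i, add_zero] at h
    simpa using h
  have hPsBj : ∀ i j, j ≠ i → Ps j (B i) = 0 := by
    intro i j hji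
    refine measure_mono_null ?_ (hsupp j)
    intro z hz hzA
    exact Set.disjoint_left.mp (hdisj hji) hzA hz.1
  have hQ'B : ∀ i j, Q' j (B i) = 0 := fun i j =>
    measure_mono_null Set.inter_subset_right (hQ'T j)
  -- measures of subsets of B i
  have hPt : ∀ i, ∀ t : Set Z, t ⊆ B i → P t = ENNReal.ofReal (p i) * Ps i t := by
    intro i t ht
    rw [hPapply]
    rw [Finset.sum_eq_single i]
    · intro j _ hj
      rw [measure_mono_null ht (hPsBj i j hj), mul_zero]
    · intro h; exact absurd (Finset.mem_univ i) h
  have hQt : ∀ i, ∀ t : Set Z, t ⊆ B i → Q t = ENNReal.ofReal (α i * p i) * Ps i t := by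
    intro i t ht
    rw [hQapply]
    rw [Finset.sum_eq_single i]
    · rw [measure_mono_null ht (hQ'B i i), mul_zero, add_zero]
    · intro j _ hj
      rw [measure_mono_null ht (hPsBj i j hj), mul_zero,
        measure_mono_null ht (hQ'B i j), mul_zero, add_zero]
    · intro h; exact absurd (Finset.mem_univ i) h
  have hμt : ∀ i, ∀ t : Set Z, t ⊆ B i →
      (P + Q) t = ENNReal.ofReal (p i * (1 + α i)) * Ps i t := by
    intro i t ht
    rw [Measure.add_apply, hPt i t ht, hQt i t ht, ← add_mul]
    congr 1
    rw [← ENNReal.ofReal_add (hp i) (mul_nonneg (hα i).1 (hp i))]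
    congr 1
    ring
  -- Ps i doesn't see the complement of B i
  have hPsInter : ∀ i, ∀ s : Set Z, MeasurableSet s → Ps i (B i ∩ s) = Ps i s := by
    intro i s hs
    rw [Set.inter_comm]
    have h1 := measure_inter_add_diff (μ := Ps i) s (hBmeas i)
    have h2 : Ps i (s \ B i) = 0 :=
      measure_mono_null (fun z hz => hz.2) (hPsBc i)
    rw [h2, add_zero] at h1
    exact h1
  -- U
  set U : Set Z := ⋃ i, B i with hUdef
  have hUmeas : MeasurableSet U := MeasurableSet.iUnion hBmeas
  have hBU : ∀ i, Uᶜ ⊆ (B i)ᶜ := fun i =>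
    Set.compl_subset_compl.mpr (Set.subset_iUnion B i)
  have hPsU : ∀ i, Ps i Uᶜ = 0 := fun i => measure_mono_null (hBU i) (hPsBc i)
  have hQ'U : ∀ i, Q' i U = 0 := fun i => measure_iUnion_null fun j => hQ'B j i
  have hQ'Uc : ∀ i, Q' i Uᶜ = 1 := by
    intro i
    have h := measure_add_measure_compl (μ := Q' i) hUmeas
    rw [hQ'U i, zero_add] at h
    simpa using h
  have hPUc : P Uᶜ = 0 := by
    rw [hPapply]
    refine Finset.sum_eq_zero fun i _ => by rw [hPsU i, mul_zero]
  have hQUc : Q Uᶜ = ∑ i, ENNReal.ofReal (β i) := by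
    rw [hQapply]
    refine Finset.sum_congr rfl fun i _ => ?_
    rw [hPsU i, mul_zero, zero_add, hQ'Uc i, mul_one]
  have hμUc : (P + Q) Uᶜ = ENNReal.ofReal (∑ i, β i) := by
    rw [Measure.add_apply, hPUc, zero_add, hQUc,
      ENNReal.ofReal_sum_of_nonneg fun i _ => hβ i]
  -- finiteness
  haveI hPfin : IsFiniteMeasure P := by
    constructor
    rw [hPapply]
    exact ENNReal.sum_lt_top.mpr fun i _ =>
      ENNReal.mul_lt_top ENNReal.ofReal_lt_top (measure_lt_top _ _)
  haveI hQfin : IsFiniteMeasure Q := by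
    constructor
    rw [hQapply]
    exact ENNReal.sum_lt_top.mpr fun i _ =>
      (ENNReal.add_lt_top).mpr
        ⟨ENNReal.mul_lt_top ENNReal.ofReal_lt_top (measure_lt_top _ _),
         ENNReal.mul_lt_top ENNReal.ofReal_lt_top (measure_lt_top _ _)⟩
  -- densities
  set c : Fin N → ℝ≥0∞ := fun i => ENNReal.ofReal (1 / (1 + α i)) with hcdef
  set d : Fin N → ℝ≥0∞ := fun i => ENNReal.ofReal (α i / (1 + α i)) with hddef
  set f : Z → ℝ≥0∞ := fun z => ∑ i, (B i).indicator (fun _ => c i) z with hfdef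
  set g : Z → ℝ≥0∞ :=
    fun z => (∑ i, (B i).indicator (fun _ => d i) z) + Uᶜ.indicator (fun _ => 1) z with hgdef
  have hfmeas : Measurable f := by
    apply Finset.measurable_sum
    exact fun i _ => measurable_const.indicator (hBmeas i)
  have hgmeas : Measurable g := by
    apply Measurable.add
    · apply Finset.measurable_sum
      exact fun i _ => measurable_const.indicator (hBmeas i)
    · exact measurable_const.indicator hUmeas.compl
  -- set-lintegral of an indicator
  have hlint : ∀ (s : Set Z), MeasurableSet s → ∀ (t : Set Z), MeasurableSet t →
      ∀ (k : ℝ≥0∞), ∫⁻ z in s, t.indicator (fun _ => k) z ∂(P + Q) = k * (P + Q) (t ∩ s) := by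
    intro s hs t htm k
    rw [lintegral_indicator htm, setLIntegral_const, Measure.restrict_apply htm]
  -- coefficient identities
  have hcoef1 : ∀ i, c i * ENNReal.ofReal (p i * (1 + α i)) = ENNReal.ofReal (p i) := by
    intro i
    have h1 : (1 + α i) ≠ 0 := (hα0 i).ne'
    simp only [hcdef]
    rw [← ENNReal.ofReal_mul (one_div_nonneg.mpr (hα0 i).le)]
    congr 1
    field_simp
  have hcoef2 : ∀ i, d i * ENNReal.ofReal (p i * (1 + α i)) = ENNReal.ofReal (α i * p i) := by
    intro i
    have h1 : (1 + α i) ≠ 0 := (hα0 i).ne'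
    simp only [hddef]
    rw [← ENNReal.ofReal_mul (div_nonneg (hα i).1 (hα0 i).le)]
    congr 1
    field_simp
  -- P = (P+Q).withDensity f
  have hPd : P = (P + Q).withDensity f := by
    ext s hs
    rw [withDensity_apply _ hs, hfdef]
    rw [lintegral_finset_sum _ fun i _ => measurable_const.indicator (hBmeas i)]
    have hterm : ∀ i, ∫⁻ z in s, (B i).indicator (fun _ => c i) z ∂(P + Q)
        = ENNReal.ofReal (p i) * Ps i s := by
      intro i
      rw [hlint s hs (B i) (hBmeas i) (c i),
        hμt i (B i ∩ s) Set.inter_subset_left, ← mul_assoc, hcoef1 i, hPsInter i s hs]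
    rw [Finset.sum_congr rfl fun i _ => hterm i]
    exact (hPapply s)
  -- Q = (P+Q).withDensity g
  have hQd : Q = (P + Q).withDensity g := by
    ext s hs
    rw [withDensity_apply _ hs, hgdef]
    rw [lintegral_add_right _ (measurable_const.indicator hUmeas.compl)]
    rw [lintegral_finset_sum _ fun i _ => measurable_const.indicator (hBmeas i)]
    have hterm : ∀ i, ∫⁻ z in s, (B i).indicator (fun _ => d i) z ∂(P + Q)
        = Q (B i ∩ s) := by
      intro i
      rw [hlint s hs (B i) (hBmeas i) (d i),
        hμt i (B i ∩ s) Set.inter_subset_left, ← mul_assoc, hcoef2 i,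
        hQt i (B i ∩ s) Set.inter_subset_left]
    have hUterm : ∫⁻ z in s, Uᶜ.indicator (fun _ => (1:ℝ≥0∞)) z ∂(P + Q) = Q (Uᶜ ∩ s) := by
      rw [hlint s hs Uᶜ hUmeas.compl 1, one_mul, Measure.add_apply,
        measure_mono_null Set.inter_subset_left hPUc, zero_add]
    rw [Finset.sum_congr rfl fun i _ => hterm i, hUterm]
    -- now show Q s = ∑ i, Q (B i ∩ s) + Q (Uᶜ ∩ s)
    have h1 : Q (s ∩ U) + Q (s \ U) = Q s := measure_inter_add_diff s hUmeas
    have h2 : s ∩ U = ⋃ i, (B i ∩ s) := by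
      rw [hUdef, Set.inter_iUnion]
      exact Set.iUnion_congr fun i => Set.inter_comm _ _
    have h3 : Q (⋃ i, (B i ∩ s)) = ∑ i, Q (B i ∩ s) := by
      rw [measure_iUnion
        (fun i j hij => ((hBdisj hij).mono Set.inter_subset_left Set.inter_subset_left))
        (fun i => (hBmeas i).inter hs), tsum_fintype]
    have h4 : s \ U = Uᶜ ∩ s := by rw [Set.diff_eq, Set.inter_comm]
    rw [← h1, h2, h3, h4]
  -- rnDerivs
  have hPrn : P.rnDeriv (P + Q) =ᵐ[P + Q] f := by
    have h := Measure.rnDeriv_withDensity (P + Q) hfmeas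
    rw [← hPd] at h
    exact h
  have hQrn : Q.rnDeriv (P + Q) =ᵐ[P + Q] g := by
    have h := Measure.rnDeriv_withDensity (P + Q) hgmeas
    rw [← hQd] at h
    exact h
  -- the integrand a.e.
  set r : Fin N → ℝ :=
    fun i => (Real.sqrt (1 / (1 + α i)) - Real.sqrt (α i / (1 + α i))) ^ 2 with hrdef
  set I : Z → ℝ :=
    fun z => (∑ i, (B i).indicator (fun _ => r i) z) + Uᶜ.indicator (fun _ => (1:ℝ)) z with hIdef
  have hae : (fun z => (Real.sqrt ((P.rnDeriv (P + Q) z).toReal)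
      - Real.sqrt ((Q.rnDeriv (P + Q) z).toReal)) ^ 2) =ᵐ[P + Q] I := by
    filter_upwards [hPrn, hQrn] with z hfz hgz
    rw [hfz, hgz]
    by_cases hz : z ∈ U
    · obtain ⟨i, hi⟩ := Set.mem_iUnion.mp hz
      have hfv : f z = c i := by
        simp only [hfdef]
        rw [Finset.sum_eq_single i]
        · rw [Set.indicator_of_mem hi]
        · intro j _ hj
          exact Set.indicator_of_notMem
            (fun hzj => Set.disjoint_left.mp (hBdisj hj) hzj hi) _
        · intro h; exact absurd (Finset.mem_univ i) h
      have hgv : g z = d i := by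
        simp only [hgdef]
        have h1 : (∑ j, (B j).indicator (fun _ => d j) z) = d i := by
          rw [Finset.sum_eq_single i]
          · rw [Set.indicator_of_mem hi]
          · intro j _ hj
            exact Set.indicator_of_notMem
              (fun hzj => Set.disjoint_left.mp (hBdisj hj) hzj hi) _
          · intro h; exact absurd (Finset.mem_univ i) h
        rw [h1, Set.indicator_of_notMem (by simpa using hz), add_zero]
      have hIv : I z = r i := by
        simp only [hIdef]
        have h1 : (∑ j, (B j).indicator (fun _ => r j) z) = r i := by
          rw [Finset.sum_eq_single i]
          · rw [Set.indicator_of_mem hi]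
          · intro j _ hj
            exact Set.indicator_of_notMem
              (fun hzj => Set.disjoint_left.mp (hBdisj hj) hzj hi) _
          · intro h; exact absurd (Finset.mem_univ i) h
        rw [h1, Set.indicator_of_notMem (by simpa using hz), add_zero]
      simp only [hfv, hgv, hIv, hcdef, hddef, hrdef]
      rw [
        ENNReal.toReal_ofReal (one_div_nonneg.mpr (hα0 i).le),
        ENNReal.toReal_ofReal (div_nonneg (hα i).1 (hα0 i).le)]
    · have hznB : ∀ i, z ∉ B i := fun i hzB => hz (Set.mem_iUnion.mpr ⟨i, hzB⟩)
      have hfv : f z = 0 := by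
        simp only [hfdef]
        exact Finset.sum_eq_zero fun i _ => Set.indicator_of_notMem (hznB i) _
      have hgv : g z = 1 := by
        simp only [hgdef]
        rw [Finset.sum_eq_zero fun i _ => Set.indicator_of_notMem (hznB i) _, zero_add,
          Set.indicator_of_mem (show z ∈ Uᶜ from hz)]
      have hIv : I z = 1 := by
        simp only [hIdef]
        rw [Finset.sum_eq_zero fun i _ => Set.indicator_of_notMem (hznB i) _, zero_add,
          Set.indicator_of_mem (show z ∈ Uᶜ from hz)]
      rw [hfv, hgv, hIv]
      simp
  -- compute the integral of I
  have hμB : ∀ i, ((P + Q) (B i)).toReal = p i * (1 + α i) := by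
    intro i
    rw [hμt i (B i) subset_rfl, hPsB1 i, mul_one,
      ENNReal.toReal_ofReal (by nlinarith [hp i, (hα i).1])]
  have hμUcR : ((P + Q) Uᶜ).toReal = ∑ i, β i := by
    rw [hμUc, ENNReal.toReal_ofReal (Finset.sum_nonneg fun i _ => hβ i)]
  have hIint : ∫ z, I z ∂(P + Q)
      = (∑ i, r i * (p i * (1 + α i))) + ∑ i, β i := by
    have hInt1 : ∀ i : Fin N, Integrable ((B i).indicator (fun _ => r i)) (P + Q) :=
      fun i => (integrable_const (r i)).indicator (hBmeas i)
    have hInt2 : Integrable (Uᶜ.indicator (fun _ => (1:ℝ))) (P + Q) :=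
      (integrable_const 1).indicator hUmeas.compl
    simp only [hIdef]
    rw [integral_add (integrable_finset_sum _ fun i _ => hInt1 i) hInt2,
      integral_finset_sum _ fun i _ => hInt1 i]
    rw [integral_indicator_const (1:ℝ) hUmeas.compl, Measure.real, hμUcR]
    congr 1
    · refine Finset.sum_congr rfl fun i _ => ?_
      rw [integral_indicator_const (r i) (hBmeas i), Measure.real, hμB i, smul_eq_mul, mul_comm]
    · simp
  -- arithmetic
  have hri : ∀ i, r i * (p i * (1 + α i)) = p i * (1 - Real.sqrt (α i)) ^ 2 := by
    intro i
    have h1 : (0:ℝ) < 1 + α i := hα0 i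
    have hs1 : Real.sqrt (1 / (1 + α i)) = 1 / Real.sqrt (1 + α i) := by
      rw [Real.sqrt_div (by norm_num), Real.sqrt_one]
    have hs2 : Real.sqrt (α i / (1 + α i)) = Real.sqrt (α i) / Real.sqrt (1 + α i) := by
      rw [Real.sqrt_div (hα i).1]
    have hsq : Real.sqrt (1 + α i) ^ 2 = 1 + α i := Real.sq_sqrt h1.le
    have hsne : Real.sqrt (1 + α i) ≠ 0 := by positivity
    simp only [hrdef]
    rw [hs1, hs2, div_sub_div_same, div_pow, hsq]
    field_simp
  have hsum2 : (∑ i, r i * (p i * (1 + α i))) + ∑ i, β i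
      = 2 - 2 * ∑ i, Real.sqrt (α i) * p i := by
    have h1 : ∀ i, r i * (p i * (1 + α i))
        = p i - 2 * (Real.sqrt (α i) * p i) + (α i * p i) := by
      intro i
      rw [hri i]
      have h2 : Real.sqrt (α i) ^ 2 = α i := Real.sq_sqrt (hα i).1
      linear_combination p i * h2
    rw [Finset.sum_congr rfl fun i _ => h1 i]
    rw [Finset.sum_add_distrib, Finset.sum_sub_distrib, ← Finset.mul_sum]
    have h2 : (∑ i, α i * p i) + ∑ i, β i = 1 := by
      rw [← Finset.sum_add_distrib]; exact hsum
    linarith [hps, h2]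
  have hSle : ∑ i, Real.sqrt (α i) * p i ≤ 1 := by
    calc ∑ i, Real.sqrt (α i) * p i ≤ ∑ i, p i := by
          refine Finset.sum_le_sum fun i _ => ?_
          have h1 : Real.sqrt (α i) ≤ 1 := Real.sqrt_le_one.mpr (hα i).2
          nlinarith [hp i]
      _ = 1 := hps
  have hSnn : 0 ≤ 1 - ∑ i, Real.sqrt (α i) * p i := by linarith
  -- conclude
  have hH : hellinger P Q = Real.sqrt (1 - ∑ i, Real.sqrt (α i) * p i) := by
    simp only [hellinger]
    rw [ integral_congr_ae hae, hIint, hsum2]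
    congr 1
    ring
  exact ⟨by rw [hH, Real.sq_sqrt hSnn], hH⟩
end
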